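/- arXiv:2603.06269 — 6 statements merged into one kernel-verified Lean document; each statement's English description precedes it below -/
import Mathlib

section
/- Let π ∈ S_n be a cyclic permutation with standard cycle form C(π). Then all cycle forms of π (i.e., all cyclic rotations of C(π)) avoid the pattern 1432 if and only if the word C(π) itself avoids both the pattern 321 and the pattern 2143. -/
/-- A word `w` (of distinct letters) contains the pattern `σ` if it has a
subsequence order-isomorphic to `σ`. -/
def PContains {n k : ℕ} (w : Fin n → Fin n) (σ : Fin k → Fin k) : Prop :=
  ∃ f : Fin k → Fin n, StrictMono f ∧ ∀ a b : Fin k, σ a < σ b ↔ w (f a) < w (f b)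

/-- A word avoids a pattern if it does not contain it. -/
def PAvoids {n k : ℕ} (w : Fin n → Fin n) (σ : Fin k → Fin k) : Prop :=
  ¬ PContains w σ

/-- The decreasing pattern `δ_k = k(k-1)⋯21` (written 0-indexed). -/
def delta (k : ℕ) : Fin k → Fin k := fun i => i.rev

/-- The pattern 1432 (0-indexed as 0321). -/
def patt1432 : Fin 4 → Fin 4 := ![0, 3, 2, 1]

/-- The pattern 321 (0-indexed as 210). -/
def patt321 : Fin 3 → Fin 3 := ![2, 1, 0]

/-- The pattern 2143 (0-indexed as 1032). -/
def patt2143 : Fin 4 → Fin 4 := ![1, 0, 3, 2]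

/-- The pattern 123 (0-indexed as 012). -/
def patt123 : Fin 3 → Fin 3 := ![0, 1, 2]

/-- `π` is a cyclic permutation: it consists of a single `n`-cycle. -/
def IsNCycle {n : ℕ} (π : Equiv.Perm (Fin n)) : Prop :=
  π.IsCycle ∧ π.support = Finset.univ

/-- The standard cycle form `C(π) = (1, c₂, …, c_n)` of `π`, as a word:
the `i`-th letter is `π^i` applied to the least element (the element "1"). -/
def cycleForm {n : ℕ} (π : Equiv.Perm (Fin n)) : Fin n → Fin n :=
  fun i => (π ^ (i : ℕ)) ⟨0, i.pos⟩

/-- All cycle forms (cyclic rotations of the standard cycle form) of the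
cyclic permutation `π` avoid the pattern `σ`: for every starting letter `x`,
the word `x, π(x), π²(x), …` avoids `σ`. -/
def AllCycleFormsAvoid {n k : ℕ} (π : Equiv.Perm (Fin n)) (σ : Fin k → Fin k) : Prop :=
  ∀ x : Fin n, PAvoids (fun i : Fin n => (π ^ (i : ℕ)) x) σ

/-- `A_n^∘(δ_k; 1432)`: cyclic permutations of `[n]` whose one-line notation
avoids `δ_k` and all of whose cycle forms avoid `1432`. -/
def Acirc (n k : ℕ) : Set (Equiv.Perm (Fin n)) :=
  { π | IsNCycle π ∧ PAvoids (fun i => π i) (delta k) ∧ AllCycleFormsAvoid π patt1432 }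

/-- `A_{n,j}^∘(δ_k; 1432)`: members of `A_n^∘(δ_k;1432)` whose standard cycle
form begins `(1, j, …)`, i.e. `π` sends the element "1" to the element "j"
(0-indexed: `π 0 = j - 1`). -/
def AcircJ (n k j : ℕ) : Set (Equiv.Perm (Fin n)) :=
  { π | π ∈ Acirc n k ∧ ∀ h : 0 < n, ((π ⟨0, h⟩ : Fin n) : ℕ) + 1 = j }

/-- `a_n^∘(δ_k; 1432)`. -/
noncomputable def acirc (n k : ℕ) : ℕ := (Acirc n k).ncard

/-- `a_{n,j}^∘(δ_k; 1432)`. -/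
noncomputable def acircJ (n k j : ℕ) : ℕ := (AcircJ n k j).ncard

lemma pc321 {n : ℕ} {w : Fin n → Fin n} {a b c : Fin n} (hab : a < b) (hbc : b < c)
    (h1 : w c < w b) (h2 : w b < w a) : PContains w patt321 := by
  refine ⟨![a,b,c], ?_, ?_⟩
  · intro i j hij
    fin_cases i <;> fin_cases j <;>
      first
        | exact absurd hij (by decide)
        | exact hab
        | exact hbc
        | exact hab.trans hbc
  · intro i j
    fin_cases i <;> fin_cases j <;>
      first
        | exact iff_of_false (by decide) (lt_irrefl _)
        | exact iff_of_true (by decide) h1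
        | exact iff_of_true (by decide) h2
        | exact iff_of_true (by decide) (h1.trans h2)
        | exact iff_of_false (by decide) (asymm h1)
        | exact iff_of_false (by decide) (asymm h2)
        | exact iff_of_false (by decide) (asymm (h1.trans h2))


lemma pc1432 {n : ℕ} {w : Fin n → Fin n} {a b c d : Fin n} (hab : a < b) (hbc : b < c)
    (hcd : c < d) (h1 : w a < w d) (h2 : w d < w c) (h3 : w c < w b) :
    PContains w patt1432 := by
  refine ⟨![a,b,c,d], ?_, ?_⟩
  · intro i j hij
    fin_cases i <;> fin_cases j <;>
      first
        | exact absurd hij (by decide)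
        | exact hab
        | exact hbc
        | exact hcd
        | exact hab.trans hbc
        | exact hbc.trans hcd
        | exact (hab.trans hbc).trans hcd
  · intro i j
    fin_cases i <;> fin_cases j <;>
      first
        | exact iff_of_false (by decide) (lt_irrefl _)
        | exact iff_of_true (by decide) h1
        | exact iff_of_true (by decide) h2
        | exact iff_of_true (by decide) h3
        | exact iff_of_true (by decide) (h1.trans h2)
        | exact iff_of_true (by decide) (h2.trans h3)
        | exact iff_of_true (by decide) ((h1.trans h2).trans h3)
        | exact iff_of_false (by decide) (asymm h1)
        | exact iff_of_false (by decide) (asymm h2)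
        | exact iff_of_false (by decide) (asymm h3)
        | exact iff_of_false (by decide) (asymm (h1.trans h2))
        | exact iff_of_false (by decide) (asymm (h2.trans h3))
        | exact iff_of_false (by decide) (asymm ((h1.trans h2).trans h3))

lemma pc2143 {n : ℕ} {w : Fin n → Fin n} {a b c d : Fin n} (hab : a < b) (hbc : b < c)
    (hcd : c < d) (h1 : w b < w a) (h2 : w a < w d) (h3 : w d < w c) :
    PContains w patt2143 := by
  refine ⟨![a,b,c,d], ?_, ?_⟩
  · intro i j hij
    fin_cases i <;> fin_cases j <;>
      first
        | exact absurd hij (by decide)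
        | exact hab
        | exact hbc
        | exact hcd
        | exact hab.trans hbc
        | exact hbc.trans hcd
        | exact (hab.trans hbc).trans hcd
  · intro i j
    fin_cases i <;> fin_cases j <;>
      first
        | exact iff_of_false (by decide) (lt_irrefl _)
        | exact iff_of_true (by decide) h1
        | exact iff_of_true (by decide) h2
        | exact iff_of_true (by decide) h3
        | exact iff_of_true (by decide) (h1.trans h2)
        | exact iff_of_true (by decide) (h2.trans h3)
        | exact iff_of_true (by decide) ((h1.trans h2).trans h3)
        | exact iff_of_false (by decide) (asymm h1)
        | exact iff_of_false (by decide) (asymm h2)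
        | exact iff_of_false (by decide) (asymm h3)
        | exact iff_of_false (by decide) (asymm (h1.trans h2))
        | exact iff_of_false (by decide) (asymm (h2.trans h3))
        | exact iff_of_false (by decide) (asymm ((h1.trans h2).trans h3))

lemma of_pc321 {n : ℕ} {w : Fin n → Fin n} (h : PContains w patt321) :
    ∃ a b c : Fin n, a < b ∧ b < c ∧ w c < w b ∧ w b < w a := by
  obtain ⟨f, hm, hp⟩ := h
  exact ⟨f 0, f 1, f 2, hm (by decide), hm (by decide),
    (hp 2 1).mp (by decide), (hp 1 0).mp (by decide)⟩

lemma of_pc1432 {n : ℕ} {w : Fin n → Fin n} (h : PContains w patt1432) :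
    ∃ a b c d : Fin n, a < b ∧ b < c ∧ c < d ∧ w a < w d ∧ w d < w c ∧ w c < w b := by
  obtain ⟨f, hm, hp⟩ := h
  exact ⟨f 0, f 1, f 2, f 3, hm (by decide), hm (by decide), hm (by decide),
    (hp 0 3).mp (by decide), (hp 3 2).mp (by decide), (hp 2 1).mp (by decide)⟩

lemma of_pc2143 {n : ℕ} {w : Fin n → Fin n} (h : PContains w patt2143) :
    ∃ a b c d : Fin n, a < b ∧ b < c ∧ c < d ∧ w b < w a ∧ w a < w d ∧ w d < w c := by
  obtain ⟨f, hm, hp⟩ := h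
  exact ⟨f 0, f 1, f 2, f 3, hm (by decide), hm (by decide), hm (by decide),
    (hp 1 0).mp (by decide), (hp 0 3).mp (by decide), (hp 3 2).mp (by decide)⟩

/-- Proposition 2.1: all cycle forms of a cyclic permutation `π` avoid `1432`
iff the standard cycle form `C(π)` avoids `321` and `2143`. -/
theorem stmt3 (n : ℕ) (π : Equiv.Perm (Fin n)) (hπ : IsNCycle π) :
    AllCycleFormsAvoid π patt1432 ↔
      (PAvoids (cycleForm π) patt321 ∧ PAvoids (cycleForm π) patt2143) := by
  rcases Nat.eq_zero_or_pos n with hn0 | hn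
  · subst hn0
    constructor
    · intro _
      constructor <;> · rintro ⟨f, -, -⟩; exact (f 0).elim0
    · intro _ x; exact x.elim0
  have hzsupp : π (⟨0, hn⟩ : Fin n) ≠ ⟨0, hn⟩ := by
    have : (⟨0, hn⟩ : Fin n) ∈ π.support := by rw [hπ.2]; exact Finset.mem_univ _
    exact Equiv.Perm.mem_support.mp this
  have hord : orderOf π = n := by
    rw [hπ.1.orderOf, hπ.2, Finset.card_univ, Fintype.card_fin]
  have hpow : π ^ n = 1 := by
    have h := pow_orderOf_eq_one π
    rwa [hord] at h
  set c : ℕ → Fin n := fun i => (π ^ i) ⟨0, hn⟩ with hcdef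
  have hper : ∀ i, c (i + n) = c i := by
    intro i
    show (π ^ (i + n)) _ = (π ^ i) _
    rw [pow_add, hpow, mul_one]
  have hper' : ∀ m, n ≤ m → c (m - n) = c m := by
    intro m hm
    conv_rhs => rw [show m = (m - n) + n by omega]
    rw [hper]
  have hinj : ∀ i j, i < n → j < n → c i = c j → i = j := by
    intro i j hi hj hij
    by_contra hne
    wlog hlt : i < j generalizing i j
    · exact this j i hj hi hij.symm (Ne.symm hne) (by omega)
    have h1 : (π ^ (j - i)) ⟨0, hn⟩ = ⟨0, hn⟩ := by
      have h2 : (π ^ i) ((π ^ (j - i)) ⟨0, hn⟩) = (π ^ i) ⟨0, hn⟩ := by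
        rw [← Equiv.Perm.mul_apply, ← pow_add, show i + (j - i) = j by omega]
        exact hij.symm
      exact (π ^ i).injective h2
    have h3 : π ^ (j - i) = 1 := (hπ.1.pow_eq_one_iff' hzsupp).mpr h1
    have h4 := Nat.le_of_dvd (by omega) (hord ▸ orderOf_dvd_of_pow_eq_one h3)
    omega
  have hcf : ∀ (m : ℕ) (h : m < n), cycleForm π ⟨m, h⟩ = c m := fun m h => rfl
  constructor
  · -- all rotations avoid 1432 → C(π) avoids 321 and 2143
    intro H
    constructor
    · intro hcont
      obtain ⟨a, b, c', hab, hbc, h1, h2⟩ := of_pc321 hcont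
      apply H ⟨0, hn⟩
      show PContains (fun i : Fin n => (π ^ (i : ℕ)) ⟨0, hn⟩) patt1432
      have hwz : (fun i : Fin n => (π ^ (i : ℕ)) (⟨0, hn⟩ : Fin n)) = cycleForm π := rfl
      rw [hwz]
      have hz0 : (cycleForm π ⟨0, hn⟩ : Fin n).val = 0 := by
        rw [hcf 0 hn]
        show ((π ^ (0:ℕ)) (⟨0, hn⟩ : Fin n)).val = 0
        rw [pow_zero]; rfl
      have h0a : (⟨0, hn⟩ : Fin n) < a := by
        rw [Fin.lt_def]
        rcases Nat.eq_zero_or_pos a.val with h | h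
        · exfalso
          have : a = ⟨0, hn⟩ := Fin.ext h
          rw [this] at h2
          rw [Fin.lt_def, hz0] at h2
          omega
        · simpa using h
      have h0c : cycleForm π ⟨0, hn⟩ < cycleForm π c' := by
        rw [Fin.lt_def, hz0]
        rcases Nat.eq_zero_or_pos (cycleForm π c').val with h | h
        · exfalso
          have he : cycleForm π c' = cycleForm π ⟨0, hn⟩ := by
            apply Fin.ext; rw [hz0, h]
          have := hinj c'.val 0 c'.isLt hn (by
            rw [← hcf c'.val c'.isLt, ← hcf 0 hn]
            exact he)
          have hc0 : (⟨0, hn⟩ : Fin n) < c' := h0a.trans (hab.trans hbc)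
          rw [Fin.lt_def] at hc0
          omega
        · exact h
      exact pc1432 h0a hab hbc h0c h1 h2
    · intro hcont
      obtain ⟨p1, p2, p3, p4, h12, h23, h34, v1, v2, v3⟩ := of_pc2143 hcont
      apply H (cycleForm π p2)
      have hu : ∀ (m : ℕ) (h : m < n),
          (π ^ m) (cycleForm π p2) = c (m + p2.val) := by
        intro m h
        show (π ^ m) ((π ^ (p2.val)) _) = _
        rw [← Equiv.Perm.mul_apply, ← pow_add]
      rw [Fin.lt_def] at h12 h23 h34
      have hq1 : p3.val - p2.val < n := by have := p3.isLt; omega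
      have hq2 : p4.val - p2.val < n := by have := p4.isLt; omega
      have hq3 : n - p2.val + p1.val < n := by have := p2.isLt; omega
      refine pc1432 (a := ⟨0, hn⟩) (b := ⟨p3.val - p2.val, hq1⟩)
        (c := ⟨p4.val - p2.val, hq2⟩) (d := ⟨n - p2.val + p1.val, hq3⟩)
        ?_ ?_ ?_ ?_ ?_ ?_
      · rw [Fin.mk_lt_mk]; omega
      · rw [Fin.mk_lt_mk]; omega
      · rw [Fin.mk_lt_mk]; have := p4.isLt; omega
      · show (π ^ (0:ℕ)) (cycleForm π p2) < (π ^ (n - p2.val + p1.val)) (cycleForm π p2)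
        rw [pow_zero, hu _ hq3, show n - p2.val + p1.val + p2.val = p1.val + n by
          have := p2.isLt; omega, hper]
        show cycleForm π p2 < cycleForm π p1
        exact v1
      · show (π ^ (n - p2.val + p1.val)) (cycleForm π p2) < (π ^ (p4.val - p2.val)) (cycleForm π p2)
        rw [hu _ hq3, hu _ hq2, show n - p2.val + p1.val + p2.val = p1.val + n by
          have := p2.isLt; omega, hper, show p4.val - p2.val + p2.val = p4.val by omega]
        exact v2
      · show (π ^ (p4.val - p2.val)) (cycleForm π p2) < (π ^ (p3.val - p2.val)) (cycleForm π p2)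
        rw [hu _ hq2, hu _ hq1, show p4.val - p2.val + p2.val = p4.val by omega,
          show p3.val - p2.val + p2.val = p3.val by omega]
        exact v3
  · -- C(π) avoids 321 and 2143 → all rotations avoid 1432
    rintro ⟨H321, H2143⟩ x hcont
    have hxsupp : π x ≠ x := by
      have : x ∈ π.support := by rw [hπ.2]; exact Finset.mem_univ _
      exact Equiv.Perm.mem_support.mp this
    obtain ⟨i0, hi0⟩ := hπ.1.exists_pow_eq hzsupp hxsupp
    obtain ⟨j, hj, hjx⟩ : ∃ j, j < n ∧ c j = x := by
      refine ⟨i0 % n, Nat.mod_lt _ hn, ?_⟩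
      show (π ^ (i0 % n)) _ = x
      have he : π ^ i0 = π ^ (i0 % n) := by
        conv_lhs => rw [show i0 = n * (i0 / n) + i0 % n from (Nat.div_add_mod i0 n).symm]
        rw [pow_add, pow_mul, hpow, one_pow, one_mul]
      rw [← he]
      exact hi0
    obtain ⟨q1, q2, q3, q4, h12, h23, h34, v1, v2, v3⟩ := of_pc1432 hcont
    have hu : ∀ q : Fin n, (π ^ (q : ℕ)) x = c (q.val + j) := by
      intro q
      rw [← hjx]
      show (π ^ (q.val)) ((π ^ j) _) = _
      rw [← Equiv.Perm.mul_apply, ← pow_add]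
    simp only [hu] at v1 v2 v3
    rw [Fin.lt_def] at h12 h23 h34
    set a1 := q1.val + j with ha1
    set a2 := q2.val + j with ha2
    set a3 := q3.val + j with ha3
    set a4 := q4.val + j with ha4
    have hb1 : a1 < n + j := by have := q1.isLt; omega
    have hb4 : a4 < n + j := by have := q4.isLt; omega
    have hja1 : j ≤ a1 := by omega
    rcases lt_or_ge a4 n with hc4 | hc4
    · -- all unwrapped: 321 at a2 < a3 < a4
      exact H321 (pc321 (a := ⟨a2, by omega⟩) (b := ⟨a3, by omega⟩) (c := ⟨a4, hc4⟩)
        (by rw [Fin.mk_lt_mk]; omega) (by rw [Fin.mk_lt_mk]; omega)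
        (by rw [hcf, hcf]; exact v2) (by rw [hcf, hcf]; exact v3))
    rcases lt_or_ge a3 n with hc3 | hc3
    · -- 2143 at (a4-n) < a1 < a2 < a3
      refine H2143 (pc2143 (a := ⟨a4 - n, by omega⟩) (b := ⟨a1, by omega⟩)
        (c := ⟨a2, by omega⟩) (d := ⟨a3, hc3⟩)
        (by rw [Fin.mk_lt_mk]; omega) (by rw [Fin.mk_lt_mk]; omega)
        (by rw [Fin.mk_lt_mk]; omega) ?_ ?_ ?_)
      · rw [hcf, hcf, hper' _ hc4]; exact v1
      · rw [hcf, hcf, hper' _ hc4]; exact v2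
      · rw [hcf, hcf]; exact v3
    rcases lt_or_ge a2 n with hc2 | hc2
    · -- 321 at (a3-n) < (a4-n) < a1
      refine H321 (pc321 (a := ⟨a3 - n, by omega⟩) (b := ⟨a4 - n, by omega⟩)
        (c := ⟨a1, by omega⟩)
        (by rw [Fin.mk_lt_mk]; omega) (by rw [Fin.mk_lt_mk]; omega) ?_ ?_)
      · rw [hcf, hcf, hper' _ hc4]; exact v1
      · rw [hcf, hcf, hper' _ hc4, hper' _ hc3]; exact v2
    · -- 321 at (a2-n) < (a3-n) < (a4-n)
      refine H321 (pc321 (a := ⟨a2 - n, by omega⟩) (b := ⟨a3 - n, by omega⟩)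
        (c := ⟨a4 - n, by omega⟩)
        (by rw [Fin.mk_lt_mk]; omega) (by rw [Fin.mk_lt_mk]; omega) ?_ ?_)
      · rw [hcf, hcf, hper' _ hc4, hper' _ hc3]; exact v2
      · rw [hcf, hcf, hper' _ hc3, hper' _ hc2]; exact v3
end

section
/- Let π ∈ S_n be a cyclic permutation with n ≥ 5 and standard cycle form C(π) = (1, c_2, …, c_n) with j = c_2 ≥ 3. Then C(π) avoids both 321 and 2143 if and only if the following three conditions hold: (1) the letters 2, 3, …, j−1 occur in this (increasing) order in C(π); (2) the letters greater than j that occur between j and j−1 in C(π) are in increasing order; (3) the letters greater than j that occur after 2 in C(π) are in increasing order. -/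
/-! With `1` and `j` in the first two positions of `C(π)`, a decreasing pair among the small letters
`2, …, j - 1` completes `j` to a `321`, a decreasing pair of large letters (those `> j`) before
`j - 1` is completed by `j - 1` to a `321`, and one after `2` completes `j, 2` to a `2143`.
Conversely, the three conditions force the small letters into the stretch from `2` to `j - 1` and
every descent among the large letters to straddle that stretch, which leaves no room for a `321`
or a `2143`. -/

open Function

section Patterns

variable {n : ℕ} (w : Fin n → Fin n)

theorem pContains_patt321_iff :
    PContains w patt321 ↔ ∃ a b c : Fin n, a < b ∧ b < c ∧ w c < w b ∧ w b < w a := by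
  constructor
  · rintro ⟨f, hf, hiso⟩
    exact ⟨f 0, f 1, f 2, hf (by decide), hf (by decide),
      (hiso 2 1).1 (by decide), (hiso 1 0).1 (by decide)⟩
  · rintro ⟨a, b, c, hab, hbc, hcb, hba⟩
    refine ⟨![a, b, c], Fin.strictMono_iff_lt_succ.2 fun i => ?_, fun x y => ?_⟩
    · fin_cases i <;> assumption
    · fin_cases x <;> fin_cases y <;> simp [patt321] <;> omega

theorem pContains_patt2143_iff :
    PContains w patt2143 ↔ ∃ a b c d : Fin n, a < b ∧ b < c ∧ c < d ∧
      w b < w a ∧ w a < w d ∧ w d < w c := by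
  constructor
  · rintro ⟨f, hf, hiso⟩
    exact ⟨f 0, f 1, f 2, f 3, hf (by decide), hf (by decide), hf (by decide),
      (hiso 1 0).1 (by decide), (hiso 0 3).1 (by decide), (hiso 3 2).1 (by decide)⟩
  · rintro ⟨a, b, c, d, hab, hbc, hcd, hba, had, hdc⟩
    refine ⟨![a, b, c, d], Fin.strictMono_iff_lt_succ.2 fun i => ?_, fun x y => ?_⟩
    · fin_cases i <;> assumption
    · fin_cases x <;> fin_cases y <;> simp [patt2143] <;> omega

end Patterns

section CycleForm

variable {n : ℕ} {π : Equiv.Perm (Fin n)}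

theorem cycleForm_zero (h : 0 < n) : cycleForm π ⟨0, h⟩ = ⟨0, h⟩ := rfl

theorem IsNCycle.cycleForm_bijective (hπ : IsNCycle π) : Bijective (cycleForm π) := by
  refine Finite.injective_iff_bijective.1 fun a b hab => ?_
  have hmoved : π ⟨0, a.pos⟩ ≠ ⟨0, a.pos⟩ :=
    Equiv.Perm.mem_support.1 (hπ.2 ▸ Finset.mem_univ _)
  have hpow : π ^ (a : ℕ) = π ^ (b : ℕ) := hπ.1.pow_eq_pow_iff.2 ⟨_, hmoved, hab⟩
  rw [pow_inj_mod, hπ.1.orderOf, hπ.2, Finset.card_univ, Fintype.card_fin,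
    Nat.mod_eq_of_lt a.isLt, Nat.mod_eq_of_lt b.isLt] at hpow
  exact Fin.ext hpow

end CycleForm

/- Letters are 0-indexed: in the paper's 1-indexed terms, `0` and `j - 1` are the letters `1`
and `j`, the "small" letters `1 ≤ w p ≤ j - 2` are `2, …, j - 1` and the "large" letters
`j ≤ w p` are those greater than `j`. -/

def StartsWithOneJ {n : ℕ} (w : Fin n → Fin n) (j : ℕ) : Prop :=
  ∀ p : Fin n, ((w p : ℕ) = 0 ↔ (p : ℕ) = 0) ∧ ((w p : ℕ) + 1 = j ↔ (p : ℕ) = 1)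

def SmallLettersIncreasing {n : ℕ} (w : Fin n → Fin n) (j : ℕ) : Prop :=
  ∀ p q : Fin n, p < q →
    1 ≤ (w p : ℕ) → (w p : ℕ) + 2 ≤ j →
    1 ≤ (w q : ℕ) → (w q : ℕ) + 2 ≤ j →
    (w p : ℕ) < (w q : ℕ)

def LargeLettersIncreasingBeforePred {n : ℕ} (w : Fin n → Fin n) (j : ℕ) : Prop :=
  ∀ pj1 p q : Fin n, (w pj1 : ℕ) + 2 = j →
    1 < (p : ℕ) → p < q → q < pj1 →
    j ≤ (w p : ℕ) → j ≤ (w q : ℕ) →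
    (w p : ℕ) < (w q : ℕ)

def LargeLettersIncreasingAfterTwo {n : ℕ} (w : Fin n → Fin n) (j : ℕ) : Prop :=
  ∀ p2 p q : Fin n, (w p2 : ℕ) = 1 →
    p2 < p → p < q →
    j ≤ (w p : ℕ) → j ≤ (w q : ℕ) →
    (w p : ℕ) < (w q : ℕ)

section StartsWithOneJ

variable {n j : ℕ} {w : Fin n → Fin n}

theorem smallLettersIncreasing_of_avoids_321 (hinj : Injective w) (hst : StartsWithOneJ w j)
    (h : PAvoids w patt321) : SmallLettersIncreasing w j := by
  intro p q hpq hp1 hp2 hq1 hq2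
  have hp : 1 < (p : ℕ) := by have := hst p; omega
  have hj : (w ⟨1, by omega⟩ : ℕ) + 1 = j := (hst _).2.2 rfl
  have hne := hinj.ne hpq.ne'
  by_contra hqp
  exact h ((pContains_patt321_iff w).2 ⟨⟨1, by omega⟩, p, q, hp, hpq, by omega, by omega⟩)

theorem largeLettersIncreasingBeforePred_of_avoids_321 (hinj : Injective w)
    (h : PAvoids w patt321) : LargeLettersIncreasingBeforePred w j := by
  intro r p q hr _ hpq hqr hp hq
  have hne := hinj.ne hpq.ne'
  by_contra hqp
  exact h ((pContains_patt321_iff w).2 ⟨p, q, r, hpq, hqr, by omega, by omega⟩)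

theorem largeLettersIncreasingAfterTwo_of_avoids_2143 (hinj : Injective w)
    (hst : StartsWithOneJ w j) (hj3 : 3 ≤ j) (h : PAvoids w patt2143) :
    LargeLettersIncreasingAfterTwo w j := by
  intro r p q hr hrp hpq hp hq
  have hr2 : 1 < (r : ℕ) := by have := hst r; omega
  have hj : (w ⟨1, by omega⟩ : ℕ) + 1 = j := (hst _).2.2 rfl
  have hne := hinj.ne hpq.ne'
  by_contra hqp
  exact h ((pContains_patt2143_iff w).2
    ⟨⟨1, by omega⟩, r, p, q, hr2, hrp, hpq, by omega, by omega, by omega⟩)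

theorem SmallLettersIncreasing.le_and_le (h1 : SmallLettersIncreasing w j) (hj : 3 ≤ j)
    {a b p : Fin n} (ha : (w a : ℕ) = 1) (hb : (w b : ℕ) + 2 = j)
    (hp1 : 1 ≤ (w p : ℕ)) (hp2 : (w p : ℕ) + 2 ≤ j) : a ≤ p ∧ p ≤ b := by
  constructor <;> by_contra hlt <;> push Not at hlt
  · have := h1 p a hlt hp1 hp2 (by omega) (by omega); omega
  · have := h1 b p hlt (by omega) (by omega) hp1 hp2; omega

theorem lt_and_lt_of_large_descent (h2 : LargeLettersIncreasingBeforePred w j)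
    (h3 : LargeLettersIncreasingAfterTwo w j) (hst : StartsWithOneJ w j)
    {a b p q : Fin n} (ha : (w a : ℕ) = 1) (hb : (w b : ℕ) + 2 = j)
    (hpq : p < q) (hp : j ≤ (w p : ℕ)) (hq : j ≤ (w q : ℕ)) (hqp : (w q : ℕ) < w p) :
    p < a ∧ b < q := by
  constructor <;> by_contra hle <;> push Not at hle
  · have hap : a ≠ p := by rintro rfl; omega
    have := h3 a p q ha (lt_of_le_of_ne hle hap) hpq hp hq; omega
  · have hqb : q ≠ b := by rintro rfl; omega
    have hp1 : 1 < (p : ℕ) := by have := hst p; omega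
    have := h2 b p q hb hp1 hpq (lt_of_le_of_ne hle hqb) hp hq; omega

theorem avoids_321_of_conditions (h1 : SmallLettersIncreasing w j)
    (h2 : LargeLettersIncreasingBeforePred w j) (h3 : LargeLettersIncreasingAfterTwo w j)
    (hst : StartsWithOneJ w j) (hj : 3 ≤ j)
    {a b : Fin n} (ha : (w a : ℕ) = 1) (hb : (w b : ℕ) + 2 = j) : PAvoids w patt321 := by
  intro hc
  obtain ⟨p, q, r, hpq, hqr, hrq, hqp⟩ := (pContains_patt321_iff w).1 hc
  have hab := (h1.le_and_le hj ha hb (p := a) (by omega) (by omega)).2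
  have := hst p; have := hst q; have := hst r
  by_cases hr : j ≤ (w r : ℕ)
  · have := lt_and_lt_of_large_descent h2 h3 hst ha hb hqr (by omega) hr hrq
    have := lt_and_lt_of_large_descent h2 h3 hst ha hb hpq (by omega) (by omega) hqp
    omega
  by_cases hq : j ≤ (w q : ℕ)
  · have hrb := (h1.le_and_le hj ha hb (p := r) (by omega) (by omega)).2
    have := h2 b p q hb (by omega) hpq (by omega) (by omega) hq
    omega
  · have := h1 q r hqr (by omega) (by omega) (by omega) (by omega)
    omega

theorem avoids_2143_of_conditions (h1 : SmallLettersIncreasing w j)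
    (h2 : LargeLettersIncreasingBeforePred w j) (h3 : LargeLettersIncreasingAfterTwo w j)
    (hst : StartsWithOneJ w j) (hj : 3 ≤ j)
    {a b : Fin n} (ha : (w a : ℕ) = 1) (hb : (w b : ℕ) + 2 = j) : PAvoids w patt2143 := by
  intro hc
  obtain ⟨p, q, r, s, hpq, hqr, hrs, hqp, hps, hsr⟩ := (pContains_patt2143_iff w).1 hc
  have hab := (h1.le_and_le hj ha hb (p := a) (by omega) (by omega)).2
  have := hst p; have := hst q; have := hst s
  by_cases hs : j ≤ (w s : ℕ)
  · have hra := (lt_and_lt_of_large_descent h2 h3 hst ha hb hrs (by omega) hs hsr).1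
    by_cases hq : j ≤ (w q : ℕ)
    · have := lt_and_lt_of_large_descent h2 h3 hst ha hb hpq (by omega) hq hqp
      omega
    · have := h1.le_and_le hj ha hb (p := q) (by omega) (by omega)
      omega
  · have := h1 p q hpq (by omega) (by omega) (by omega) (by omega)
    omega

theorem avoids_321_and_2143_iff (hbij : Bijective w) (hst : StartsWithOneJ w j)
    (hj : 3 ≤ j) (hjn : j ≤ n) :
    PAvoids w patt321 ∧ PAvoids w patt2143 ↔
      SmallLettersIncreasing w j ∧ LargeLettersIncreasingBeforePred w j ∧
        LargeLettersIncreasingAfterTwo w j := by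
  constructor
  · rintro ⟨h321, h2143⟩
    exact ⟨smallLettersIncreasing_of_avoids_321 hbij.1 hst h321,
      largeLettersIncreasingBeforePred_of_avoids_321 hbij.1 h321,
      largeLettersIncreasingAfterTwo_of_avoids_2143 hbij.1 hst hj h2143⟩
  · rintro ⟨h1, h2, h3⟩
    obtain ⟨a, ha⟩ := hbij.2 ⟨1, by omega⟩
    obtain ⟨b, hb⟩ := hbij.2 ⟨j - 2, by omega⟩
    have ha' : (w a : ℕ) = 1 := congrArg Fin.val ha
    have hb' : (w b : ℕ) + 2 = j := by rw [hb, Fin.val_mk]; omega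
    exact ⟨avoids_321_of_conditions h1 h2 h3 hst hj ha' hb',
      avoids_2143_of_conditions h1 h2 h3 hst hj ha' hb'⟩

end StartsWithOneJ

/-- Lemma 2.2: for a cyclic `π ∈ S_n`, `n ≥ 5`, with `C(π) = (1, j, …)` and
`j ≥ 3`, the cycle form `C(π)` avoids both `321` and `2143` iff
(1) the letters `2, …, j-1` occur in increasing order in `C(π)`;
(2) the letters `> j` occurring between `j` (which sits at index 1) and `j-1`
are in increasing order;
(3) the letters `> j` occurring after `2` are in increasing order.
(Letters are recorded 0-indexed: the letter with 1-indexed value `v` is the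
element `v - 1` of `Fin n`.) -/
theorem stmt4 (n j : ℕ) (hn : 5 ≤ n) (hj3 : 3 ≤ j)
    (π : Equiv.Perm (Fin n)) (hπ : IsNCycle π)
    (hj : (cycleForm π ⟨1, by omega⟩ : ℕ) + 1 = j) :
    (PAvoids (cycleForm π) patt321 ∧ PAvoids (cycleForm π) patt2143) ↔
      ((∀ p q : Fin n, p < q →
          1 ≤ (cycleForm π p : ℕ) → (cycleForm π p : ℕ) + 2 ≤ j →
          1 ≤ (cycleForm π q : ℕ) → (cycleForm π q : ℕ) + 2 ≤ j →
          (cycleForm π p : ℕ) < (cycleForm π q : ℕ)) ∧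
       (∀ pj1 p q : Fin n, (cycleForm π pj1 : ℕ) + 2 = j →
          1 < (p : ℕ) → p < q → q < pj1 →
          j ≤ (cycleForm π p : ℕ) → j ≤ (cycleForm π q : ℕ) →
          (cycleForm π p : ℕ) < (cycleForm π q : ℕ)) ∧
       (∀ p2 p q : Fin n, (cycleForm π p2 : ℕ) = 1 →
          p2 < p → p < q →
          j ≤ (cycleForm π p : ℕ) → j ≤ (cycleForm π q : ℕ) →
          (cycleForm π p : ℕ) < (cycleForm π q : ℕ))) := by
  have hbij := hπ.cycleForm_bijective
  have hst : StartsWithOneJ (cycleForm π) j := fun p => by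
    constructor
    · simpa [Fin.ext_iff, cycleForm_zero] using hbij.1.eq_iff (a := p) (b := ⟨0, p.pos⟩)
    · rw [← hj, Nat.add_right_cancel_iff, Fin.val_inj, hbij.1.eq_iff, Fin.ext_iff]
  have hjn : j ≤ n := by have := (cycleForm π ⟨1, by omega⟩).isLt; omega
  exact avoids_321_and_2143_iff hbij hst hj3 hjn
end

section
/- For all integers n ≥ 5 and k ≥ 3, a_{n,2}^∘(δ_k;1432) = a_{n−1}^∘(δ_k;1432); that is, the number of cyclic permutations π ∈ S_n whose one-line notation avoids δ_k, all of whose cycle forms avoid 1432, and whose standard cycle form begins (1, 2, …), equals the number of cyclic permutations in S_{n−1} whose one-line notation avoids δ_k and all of whose cycle forms avoid 1432. -/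
namespace Stmt5Aux
open Equiv Equiv.Perm

/-! ### Basic facts about `IsNCycle` -/

lemma isNCycle_orderOf {N : ℕ} {σ : Equiv.Perm (Fin N)} (h : IsNCycle σ) :
    orderOf σ = N := by
  rw [h.1.orderOf, h.2, Finset.card_univ, Fintype.card_fin]

lemma moves {N : ℕ} {σ : Equiv.Perm (Fin N)} (h : IsNCycle σ) (x : Fin N) : σ x ≠ x :=
  Equiv.Perm.mem_support.mp (by rw [h.2]; exact Finset.mem_univ _)

lemma pow_inj {N : ℕ} {σ : Equiv.Perm (Fin N)} (h : IsNCycle σ) (x : Fin N)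
    {i j : ℕ} (hi : i < N) (hj : j < N) (hij : (σ ^ i) x = (σ ^ j) x) : i = j := by
  wlog hle : i ≤ j generalizing i j
  · exact (this hj hi hij.symm (le_of_not_ge hle)).symm
  have hx : σ ((σ ^ i) x) ≠ (σ ^ i) x := moves h _
  have h1 : (σ ^ (j - i)) ((σ ^ i) x) = (σ ^ i) x := by
    rw [← Equiv.Perm.mul_apply, ← pow_add, Nat.sub_add_cancel hle, hij]
  have h2 := (h.1.pow_eq_one_iff' hx).mpr h1
  have hdvd := orderOf_dvd_of_pow_eq_one h2
  rw [isNCycle_orderOf h] at hdvd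
  have := Nat.eq_zero_of_dvd_of_lt hdvd (by omega)
  omega
  -- careful: if j - i = 0 it's fine; Nat.eq_zero_of_dvd_of_lt needs j - i < N and dvd;
  -- but if j = i, j - i = 0 and N ∣ 0 always; handled by omega anyway? no: eq_zero_of_dvd_of_lt fine

lemma exists_pow_eq0 {N : ℕ} {σ : Equiv.Perm (Fin N)} (h : IsNCycle σ) (x y : Fin N) :
    ∃ i < N, (σ ^ i) x = y := by
  have := ((h.1.sameCycle (moves h x) (moves h y)).exists_pow_eq')
  rwa [isNCycle_orderOf h] at this

lemma isNCycle_iff_orb {r : ℕ} (hr : 1 ≤ r) {σ : Equiv.Perm (Fin (r + 1))} :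
    IsNCycle σ ↔ ∀ x, ∃ i : ℕ, (σ ^ i) (0 : Fin (r + 1)) = x := by
  constructor
  · intro h x
    obtain ⟨i, _, hi⟩ := exists_pow_eq0 h 0 x
    exact ⟨i, hi⟩
  · intro ho
    have h0 : σ 0 ≠ 0 := by
      intro hfix
      obtain ⟨i, hi⟩ := ho ⟨1, by omega⟩
      rw [Equiv.Perm.pow_apply_eq_self_of_apply_eq_self hfix i] at hi
      exact absurd (congrArg Fin.val hi) (by simp)
    constructor
    · refine ⟨0, h0, fun y hy => ?_⟩
      obtain ⟨i, hi⟩ := ho y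
      exact ⟨(i : ℤ), by rwa [zpow_natCast]⟩
    · apply Finset.eq_univ_iff_forall.mpr
      intro y
      apply Equiv.Perm.mem_support.mpr
      intro hfix
      obtain ⟨i, hi⟩ := ho y
      have h2 : (σ ^ i) y = y := Equiv.Perm.pow_apply_eq_self_of_apply_eq_self hfix i
      have h3 : (0 : Fin (r + 1)) = y := (σ ^ i).injective (by rw [hi, h2])
      exact h0 (by rw [h3]; exact hfix)

end Stmt5Aux

namespace Stmt5Aux

/-! ### patt1432 helper -/

lemma patt1432_iff {M : ℕ} (w : Fin M → Fin M) (f : Fin 4 → Fin M) :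
    (∀ a b, patt1432 a < patt1432 b ↔ w (f a) < w (f b)) ↔
      (w (f 0) < w (f 3) ∧ w (f 3) < w (f 2) ∧ w (f 2) < w (f 1)) := by
  constructor
  · intro h
    exact ⟨(h 0 3).mp (by decide), (h 3 2).mp (by decide), (h 2 1).mp (by decide)⟩
  · rintro ⟨h1, h2, h3⟩ a b
    have w03 : w (f 0) < w (f 3) := h1
    have w32 : w (f 3) < w (f 2) := h2
    have w21 : w (f 2) < w (f 1) := h3
    have w02 : w (f 0) < w (f 2) := w03.trans w32
    have w01 : w (f 0) < w (f 1) := w02.trans w21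
    have w31 : w (f 3) < w (f 1) := w32.trans w21
    fin_cases a <;> fin_cases b
    exacts [iff_of_false (by decide) (lt_irrefl _),
      iff_of_true (by decide) w01,
      iff_of_true (by decide) w02,
      iff_of_true (by decide) w03,
      iff_of_false (by decide) (lt_asymm w01),
      iff_of_false (by decide) (lt_irrefl _),
      iff_of_false (by decide) (lt_asymm w21),
      iff_of_false (by decide) (lt_asymm w31),
      iff_of_false (by decide) (lt_asymm w02),
      iff_of_true (by decide) w21,
      iff_of_false (by decide) (lt_irrefl _),
      iff_of_false (by decide) (lt_asymm w32),
      iff_of_false (by decide) (lt_asymm w03),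
      iff_of_true (by decide) w31,
      iff_of_true (by decide) w32,
      iff_of_false (by decide) (lt_irrefl _)]

/-! ### The insertion lemma for 1432 -/

lemma contains_iff_insert {M : ℕ} {w' : Fin M → Fin M} {w : Fin (M + 1) → Fin (M + 1)}
    {T : Fin (M + 1)}
    (hinj' : Function.Injective w') (h0 : w T = 0)
    (hrel : ∀ i : Fin M, w (T.succAbove i) = (w' i).succ)
    (hnext : ∀ h : (T : ℕ) < M, ((w' ⟨(T : ℕ), h⟩ : Fin M) : ℕ) = 0) :
    PContains w patt1432 ↔ PContains w' patt1432 := by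
  have hinj : Function.Injective w := by
    intro a b hab
    by_cases ha : a = T
    · by_cases hb : b = T
      · rw [ha, hb]
      · obtain ⟨c, hc⟩ := Fin.exists_succAbove_eq hb
        rw [ha, h0, ← hc, hrel] at hab
        exact absurd hab.symm (Fin.succ_ne_zero _)
    · obtain ⟨c, hc⟩ := Fin.exists_succAbove_eq ha
      by_cases hb : b = T
      · rw [hb, h0, ← hc, hrel] at hab
        exact absurd hab (Fin.succ_ne_zero _)
      · obtain ⟨d, hd⟩ := Fin.exists_succAbove_eq hb
        rw [← hc, ← hd, hrel, hrel] at hab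
        rw [← hc, ← hd, hinj' (Fin.succ_injective _ hab)]
  constructor
  · rintro ⟨f, hf, hpatt⟩
    rw [patt1432_iff] at hpatt
    obtain ⟨c1, c2, c3⟩ := hpatt
    -- first reduce to an occurrence avoiding position T
    suffices hs : ∃ g : Fin 4 → Fin (M + 1), StrictMono g ∧ (∀ a, g a ≠ T) ∧
        w (g 0) < w (g 3) ∧ w (g 3) < w (g 2) ∧ w (g 2) < w (g 1) by
      obtain ⟨g, hg, hgT, d1, d2, d3⟩ := hs
      choose f' hf' using fun a => Fin.exists_succAbove_eq (hgT a)
      refine ⟨f', fun a b hab => ?_, ?_⟩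
      · have := hg hab
        rw [← hf' a, ← hf' b] at this
        exact Fin.succAbove_lt_succAbove_iff.mp this
      · rw [patt1432_iff]
        have key : ∀ a b : Fin 4, w' (f' a) < w' (f' b) ↔ w (g a) < w (g b) := by
          intro a b
          rw [← hf' a, ← hf' b, hrel, hrel, Fin.succ_lt_succ_iff]
        exact ⟨(key 0 3).mpr d1, (key 3 2).mpr d2, (key 2 1).mpr d3⟩
    by_cases hT : ∀ a, f a ≠ T
    · exact ⟨f, hf, hT, c1, c2, c3⟩
    · push_neg at hT
      obtain ⟨a, haT⟩ := hT
      -- the letter 0 must be at the first position of the occurrence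
      have ha0 : a = 0 := by
        by_contra hne
        have hlt : w (f 0) < w (f a) := by
          fin_cases a
          · exact absurd rfl hne
          · exact c1.trans (c2.trans c3)
          · exact c1.trans c2
          · exact c1
        rw [haT, h0] at hlt
        exact absurd hlt (Fin.not_lt_zero _)
      subst ha0
      -- numeric facts
      have hmono01 : f 0 < f 1 := hf (by decide)
      have hmono12 : f 1 < f 2 := hf (by decide)
      have hmono23 : f 2 < f 3 := hf (by decide)
      have hT3 : (T : ℕ) + 3 ≤ M := by
        have h3 := (f 3).isLt
        rw [Fin.lt_def] at hmono01 hmono12 hmono23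
        rw [haT] at hmono01
        omega
      have hTM : (T : ℕ) < M := by omega
      -- new first position: T+1, carrying the letter 1
      set P1 : Fin (M + 1) := T.succAbove ⟨(T : ℕ), hTM⟩ with hP1def
      have hP1v : (P1 : ℕ) = (T : ℕ) + 1 := by
        rw [hP1def, Fin.succAbove_of_le_castSucc _ _ (by rw [Fin.le_def]; simp), Fin.val_succ]
      have hP1val : w P1 = 1 := by
        rw [hP1def, hrel]
        have hv : (((w' ⟨(T : ℕ), hTM⟩).succ : Fin (M + 1)) : ℕ) = 1 := by
          rw [Fin.val_succ, hnext hTM]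
        apply Fin.ext
        rw [hv, Fin.val_one', Nat.mod_eq_of_lt (by omega)]
      have hw0 : w (f 0) = 0 := by rw [haT, h0]
      -- w (f 3) ≥ 2
      have hf3ge : (T : ℕ) + 2 ≤ (f 3 : ℕ) := by
        rw [Fin.lt_def] at hmono01 hmono12 hmono23
        rw [haT] at hmono01
        omega
      have hwf3 : 1 < (w (f 3) : ℕ) := by
        have hpos : (0 : ℕ) < (w (f 3) : ℕ) := by
          have hh := c1; rw [hw0, Fin.lt_def] at hh; simpa using hh
        have hne1 : w (f 3) ≠ 1 := by
          intro hc
          have heq : f 3 = P1 := hinj (by rw [hc, hP1val])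
          rw [Fin.ext_iff, hP1v] at heq
          omega
        rcases Nat.lt_or_ge 1 (w (f 3) : ℕ) with h | h
        · exact h
        · exfalso; apply hne1; apply Fin.ext
          rw [Fin.val_one', Nat.mod_eq_of_lt (by omega)]
          omega
      have hwf1 : f 1 ≠ P1 := by
        intro hc
        have h1 : w (f 1) = 1 := by rw [hc, hP1val]
        have h21 : w (f 3) < w (f 1) := c2.trans c3
        rw [h1, Fin.lt_def, Fin.val_one', Nat.mod_eq_of_lt (by omega)] at h21
        omega
      have hf1ge : (T : ℕ) + 2 ≤ (f 1 : ℕ) := by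
        rw [Fin.lt_def] at hmono01
        rw [haT] at hmono01
        rcases Nat.lt_or_ge ((T : ℕ) + 1) (f 1 : ℕ) with h | h
        · omega
        · exfalso; exact hwf1 (Fin.ext (by rw [hP1v]; omega))
      have hfge : ∀ a : Fin 4, a ≠ 0 → (T : ℕ) + 2 ≤ (f a : ℕ) := by
        intro a ha
        have h1a : f 1 ≤ f a := by
          have hb1 : (1 : Fin 4) ≤ a := by
            have hpos : 0 < a := Fin.pos_of_ne_zero ha
            rw [Fin.lt_def] at hpos
            rw [Fin.le_def, Fin.val_one]
            simp only [Fin.val_zero] at hpos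
            omega
          rcases eq_or_lt_of_le hb1 with h | h
          · rw [← h]
          · exact le_of_lt (hf h)
        rw [Fin.le_def] at h1a
        omega
      refine ⟨fun a => if a = 0 then P1 else f a,
        ?_, ?_, ?_, ?_, ?_⟩
      · intro a b hab
        rcases eq_or_ne a 0 with rfl | ha
        · have hb : b ≠ 0 := by intro hb; rw [hb] at hab; exact absurd hab (lt_irrefl _)
          simp only [if_pos rfl, if_true, if_neg hb]
          have := hfge b hb
          rw [Fin.lt_def, hP1v]
          omega
        · have hb : b ≠ 0 := by
            intro hb; rw [hb] at hab
            exact absurd (hab.trans_le (Fin.zero_le a)) (lt_irrefl _)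
          simp only [if_neg ha, if_neg hb]
          exact hf hab
      · intro a
        rcases eq_or_ne a 0 with rfl | ha
        · simp only [if_pos rfl, if_true]
          intro hc; rw [Fin.ext_iff, hP1v] at hc; omega
        · simp only [if_neg ha]
          intro hc
          have := hfge a ha
          rw [Fin.ext_iff] at hc
          omega
      · simp only [if_pos rfl, if_true, if_neg (by decide : (3 : Fin 4) ≠ 0)]
        rw [hP1val, Fin.lt_def, Fin.val_one', Nat.mod_eq_of_lt (by omega)]
        omega
      · simp only [if_neg (by decide : (3 : Fin 4) ≠ 0), if_neg (by decide : (2 : Fin 4) ≠ 0)]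
        exact c2
      · simp only [if_neg (by decide : (2 : Fin 4) ≠ 0), if_neg (by decide : (1 : Fin 4) ≠ 0)]
        exact c3
  · rintro ⟨f, hf, hpatt⟩
    refine ⟨fun a => T.succAbove (f a), (Fin.strictMono_succAbove T).comp hf, fun a b => ?_⟩
    rw [hpatt a b, hrel, hrel, Fin.succ_lt_succ_iff]

end Stmt5Aux

namespace Stmt5Aux
open Equiv Equiv.Perm

variable {q : ℕ}

/-- The insertion map on permutations. -/
def Phi (σ' : Equiv.Perm (Fin (q + 1))) : Equiv.Perm (Fin (q + 2)) :=
  Equiv.Perm.decomposeFin.symm (1, σ')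

lemma phi_zero (σ' : Equiv.Perm (Fin (q + 1))) : Phi σ' 0 = 1 :=
  Equiv.Perm.decomposeFin_symm_apply_zero 1 σ'

lemma phi_succ (σ' : Equiv.Perm (Fin (q + 1))) (y : Fin (q + 1)) :
    Phi σ' y.succ = if σ' y = 0 then 0 else (σ' y).succ := by
  rw [Phi, Equiv.Perm.decomposeFin_symm_apply_succ]
  by_cases h : σ' y = 0
  · rw [if_pos h, h, Fin.succ_zero_eq_one, Equiv.swap_apply_right]
  · rw [if_neg h]
    apply Equiv.swap_apply_of_ne_of_ne
    · exact Fin.succ_ne_zero _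
    · intro hc
      apply h
      apply Fin.succ_injective
      rw [hc, Fin.succ_zero_eq_one]

/-- Formula A: before hitting 0 the powers of `Phi σ'` track those of `σ'`. -/
lemma powA (σ' : Equiv.Perm (Fin (q + 1))) (y : Fin (q + 1)) :
    ∀ i : ℕ, (∀ j, 1 ≤ j → j ≤ i → (σ' ^ j) y ≠ 0) →
      ((Phi σ') ^ i) y.succ = ((σ' ^ i) y).succ
  | 0, _ => by simp
  | (i + 1), h => by
    rw [pow_succ', Equiv.Perm.mul_apply,
      powA σ' y i (fun j h1 h2 => h j h1 (h2.trans (Nat.le_succ i))), phi_succ]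
    rw [if_neg]
    · congr 1
      rw [← Equiv.Perm.mul_apply, ← pow_succ']
    · rw [← Equiv.Perm.mul_apply, ← pow_succ']
      exact h (i + 1) (by omega) le_rfl

/-- Formula B: the word from `y.succ` hits `0` right after `σ'`'s word hits it. -/
lemma powB (σ' : Equiv.Perm (Fin (q + 1))) (y : Fin (q + 1)) (i : ℕ)
    (h : ∀ j, 1 ≤ j → j ≤ i → (σ' ^ j) y ≠ 0) (hz : (σ' ^ (i + 1)) y = 0) :
    ((Phi σ') ^ (i + 1)) y.succ = 0 := by
  rw [pow_succ', Equiv.Perm.mul_apply, powA σ' y i h, phi_succ, if_pos]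
  rw [← Equiv.Perm.mul_apply, ← pow_succ']
  exact hz

/-- Orbit transfer, forwards. -/
lemma orbA {σ' : Equiv.Perm (Fin (q + 1))}
    (h : ∀ x, ∃ i : ℕ, (σ' ^ i) (0 : Fin (q + 1)) = x) :
    ∀ x, ∃ i : ℕ, ((Phi σ') ^ i) (0 : Fin (q + 2)) = x := by
  have key : ∀ i : ℕ, ∃ j : ℕ, ((Phi σ') ^ j) (0 : Fin (q + 2)) = ((σ' ^ i) 0).succ := by
    intro i
    induction i with
    | zero => exact ⟨1, by rw [pow_one, pow_zero, Equiv.Perm.one_apply, phi_zero,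
        Fin.succ_zero_eq_one]⟩
    | succ i ih =>
      obtain ⟨j, hj⟩ := ih
      by_cases hz : (σ' ^ (i + 1)) 0 = 0
      · refine ⟨j + 2, ?_⟩
        rw [pow_succ', Equiv.Perm.mul_apply, pow_succ', Equiv.Perm.mul_apply, hj, phi_succ]
        rw [if_pos (by rw [← Equiv.Perm.mul_apply, ← pow_succ']; exact hz)]
        rw [phi_zero, hz, Fin.succ_zero_eq_one]
      · refine ⟨j + 1, ?_⟩
        rw [pow_succ', Equiv.Perm.mul_apply, hj, phi_succ]
        rw [if_neg (by rw [← Equiv.Perm.mul_apply, ← pow_succ']; exact hz)]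
        congr 1
        rw [← Equiv.Perm.mul_apply, ← pow_succ']
  intro x
  rcases Fin.eq_zero_or_eq_succ x with rfl | ⟨y, rfl⟩
  · exact ⟨0, by rw [pow_zero, Equiv.Perm.one_apply]⟩
  · obtain ⟨i, hi⟩ := h y
    obtain ⟨j, hj⟩ := key i
    exact ⟨j, by rw [hj, hi]⟩

/-- Orbit transfer, backwards. -/
lemma orbB {σ' : Equiv.Perm (Fin (q + 1))}
    (h : ∀ x, ∃ i : ℕ, ((Phi σ') ^ i) (0 : Fin (q + 2)) = x) :
    ∀ x, ∃ i : ℕ, (σ' ^ i) (0 : Fin (q + 1)) = x := by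
  have key : ∀ j : ℕ, ∀ y : Fin (q + 1),
      ((Phi σ') ^ j) (0 : Fin (q + 2)) = y.succ → ∃ i, (σ' ^ i) 0 = y := by
    intro j
    induction j with
    | zero =>
      intro y hy
      rw [pow_zero, Equiv.Perm.one_apply] at hy
      exact absurd hy.symm (Fin.succ_ne_zero y)
    | succ j ih =>
      intro y hy
      rw [pow_succ', Equiv.Perm.mul_apply] at hy
      rcases Fin.eq_zero_or_eq_succ (((Phi σ') ^ j) (0 : Fin (q + 2))) with hz | ⟨w, hw⟩
      · rw [hz, phi_zero] at hy
        refine ⟨0, ?_⟩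
        rw [pow_zero, Equiv.Perm.one_apply]
        apply Fin.succ_injective
        rw [Fin.succ_zero_eq_one]
        exact hy
      · rw [hw, phi_succ] at hy
        by_cases hc : σ' w = 0
        · rw [if_pos hc] at hy
          exact absurd hy.symm (Fin.succ_ne_zero y)
        · rw [if_neg hc] at hy
          obtain ⟨i, hi⟩ := ih w hw
          refine ⟨i + 1, ?_⟩
          rw [pow_succ', Equiv.Perm.mul_apply, hi]
          exact Fin.succ_injective _ hy
  intro y
  obtain ⟨j, hj⟩ := h y.succ
  exact key j y hj

end Stmt5Aux

namespace Stmt5Aux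
open Equiv Equiv.Perm

variable {q : ℕ}

lemma word_iff (σ' : Equiv.Perm (Fin (q + 1))) (hσ' : IsNCycle σ') (y : Fin (q + 1)) :
    PContains (fun i : Fin (q + 2) => ((Phi σ') ^ (i : ℕ)) y.succ) patt1432 ↔
      PContains (fun i : Fin (q + 1) => (σ' ^ (i : ℕ)) y) patt1432 := by
  obtain ⟨t, htq, ht⟩ := exists_pow_eq0 hσ' y 0
  set t' : ℕ := if t = 0 then q + 1 else t with ht'def
  have h1t : 1 ≤ t' := by rw [ht'def]; split <;> omega
  have htq' : t' ≤ q + 1 := by rw [ht'def]; split <;> omega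
  have hz : (σ' ^ t') y = 0 := by
    by_cases h0 : t = 0
    · have hy0 : y = 0 := by rw [h0, pow_zero, Equiv.Perm.one_apply] at ht; exact ht
      rw [ht'def, if_pos h0, hy0]
      have hord : σ' ^ (q + 1) = 1 := by
        have hh := pow_orderOf_eq_one σ'
        rwa [isNCycle_orderOf hσ'] at hh
      rw [hord, Equiv.Perm.one_apply]
    · rw [ht'def, if_neg h0]; exact ht
  have hne : ∀ j, 1 ≤ j → j < t' → (σ' ^ j) y ≠ 0 := by
    intro j hj1 hjt hj0
    by_cases h0 : t = 0
    · have hy0 : y = 0 := by rw [h0, pow_zero, Equiv.Perm.one_apply] at ht; exact ht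
      rw [hy0] at hj0
      have : j = 0 := pow_inj hσ' 0 (by omega) (by omega)
        (by rw [hj0, pow_zero, Equiv.Perm.one_apply])
      omega
    · rw [ht'def, if_neg h0] at hjt
      have : j = t := pow_inj hσ' y (by omega) (by omega) (by rw [hj0, ht])
      omega
  have hw0 : ((Phi σ') ^ t') y.succ = 0 := by
    obtain ⟨s, hs⟩ : ∃ s, t' = s + 1 := ⟨t' - 1, by omega⟩
    rw [hs]
    exact powB σ' y s (fun j hj1 hj2 => hne j hj1 (by omega)) (by rw [← hs]; exact hz)
  refine contains_iff_insert (w' := fun i : Fin (q + 1) => (σ' ^ (i : ℕ)) y)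
    (T := ⟨t', by omega⟩) ?_ ?_ ?_ ?_
  · intro a b hab
    exact Fin.ext (pow_inj hσ' y a.isLt b.isLt hab)
  · exact hw0
  · intro i
    rcases Nat.lt_or_ge (i : ℕ) t' with hlt | hge
    · have hsab : Fin.succAbove ⟨t', by omega⟩ i = Fin.castSucc i :=
        Fin.succAbove_of_castSucc_lt _ _ (by rw [Fin.lt_def, Fin.coe_castSucc]; exact hlt)
      rw [hsab]
      show ((Phi σ') ^ ((Fin.castSucc i : Fin (q + 2)) : ℕ)) y.succ = _
      rw [Fin.coe_castSucc]
      exact powA σ' y (i : ℕ) (fun j hj1 hj2 => hne j hj1 (by omega))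
    · have hsab : Fin.succAbove ⟨t', by omega⟩ i = Fin.succ i :=
        Fin.succAbove_of_le_castSucc _ _ (by rw [Fin.le_def, Fin.coe_castSucc]; exact hge)
      rw [hsab]
      show ((Phi σ') ^ ((Fin.succ i : Fin (q + 2)) : ℕ)) y.succ = _
      rw [Fin.val_succ]
      have hiq : (i : ℕ) ≤ q := by omega
      have ht'q : t' ≤ q := by omega
      set d : ℕ := (i : ℕ) - t' with hddef
      have hsplit : (i : ℕ) + 1 = d + (t' + 1) := by omega
      rw [hsplit, pow_add, Equiv.Perm.mul_apply]
      have hstep : ((Phi σ') ^ (t' + 1)) y.succ = (0 : Fin (q + 1)).succ := by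
        rw [pow_succ', Equiv.Perm.mul_apply, hw0, phi_zero, Fin.succ_zero_eq_one]
      rw [hstep]
      have hform : ((Phi σ') ^ d) (0 : Fin (q + 1)).succ = ((σ' ^ d) 0).succ := by
        apply powA
        intro j hj1 hj2 hj0
        rw [← hz, ← Equiv.Perm.mul_apply, ← pow_add] at hj0
        have : j + t' = t' := pow_inj hσ' y (by omega) (by omega) (by rw [hj0, hz])
        omega
      have hdt : d + t' = (i : ℕ) := by omega
      have hfin : (σ' ^ d) 0 = (σ' ^ (i : ℕ)) y := by
        rw [← hz, ← Equiv.Perm.mul_apply, ← pow_add, hdt]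
      rw [hform, hfin]
  · intro h
    show ((σ' ^ ((⟨t', h⟩ : Fin (q + 1)) : ℕ)) y : ℕ) = 0
    rw [show ((⟨t', h⟩ : Fin (q + 1)) : ℕ) = t' from rfl, hz, Fin.val_zero]

lemma word_iff0 (σ' : Equiv.Perm (Fin (q + 1))) (hσ' : IsNCycle σ') :
    PContains (fun i : Fin (q + 2) => ((Phi σ') ^ (i : ℕ)) 0) patt1432 ↔
      PContains (fun i : Fin (q + 1) => (σ' ^ (i : ℕ)) 0) patt1432 := by
  refine contains_iff_insert (w' := fun i : Fin (q + 1) => (σ' ^ (i : ℕ)) 0)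
    (T := (0 : Fin (q + 2))) ?_ ?_ ?_ ?_
  · intro a b hab
    exact Fin.ext (pow_inj hσ' 0 a.isLt b.isLt hab)
  · show ((Phi σ') ^ ((0 : Fin (q + 2)) : ℕ)) 0 = 0
    rw [Fin.val_zero, pow_zero, Equiv.Perm.one_apply]
  · intro i
    rw [Fin.succAbove_zero]
    show ((Phi σ') ^ ((Fin.succ i : Fin (q + 2)) : ℕ)) 0 = _
    rw [Fin.val_succ, pow_succ, Equiv.Perm.mul_apply, phi_zero, ← Fin.succ_zero_eq_one]
    apply powA
    intro j hj1 hj2 hj0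
    have : j = 0 := pow_inj hσ' 0 (by omega) (by omega)
      (by rw [hj0, pow_zero, Equiv.Perm.one_apply])
    omega
  · intro h
    show ((σ' ^ (((⟨((0 : Fin (q + 2)) : ℕ), h⟩ : Fin (q + 1))) : ℕ)) 0 : ℕ) = 0
    rw [show (((⟨((0 : Fin (q + 2)) : ℕ), h⟩ : Fin (q + 1))) : ℕ) = 0 from rfl, pow_zero,
      Equiv.Perm.one_apply, Fin.val_zero]

lemma allCycle_iff (σ' : Equiv.Perm (Fin (q + 1))) (hσ' : IsNCycle σ') :
    AllCycleFormsAvoid (Phi σ') patt1432 ↔ AllCycleFormsAvoid σ' patt1432 := by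
  constructor
  · intro h y
    intro hc
    exact h y.succ ((word_iff σ' hσ' y).mpr hc)
  · intro h x
    rcases Fin.eq_zero_or_eq_succ x with rfl | ⟨y, rfl⟩
    · intro hc
      exact h 0 ((word_iff0 σ' hσ').mp hc)
    · intro hc
      exact h y ((word_iff σ' hσ' y).mp hc)

end Stmt5Aux

namespace Stmt5Aux
open Equiv Equiv.Perm

variable {q : ℕ}

lemma ite_lt_ite_iff (z v : Fin (q + 1)) :
    ((if z = 0 then (0 : Fin (q + 2)) else z.succ) <
      (if v = 0 then (0 : Fin (q + 2)) else v.succ)) ↔ z < v := by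
  by_cases hz : z = 0 <;> by_cases hv : v = 0
  · simp [hz, hv]
  · rw [if_pos hz, if_neg hv, hz]
    exact iff_of_true (Fin.succ_pos v) (Fin.pos_of_ne_zero hv)
  · rw [if_neg hz, if_pos hv, hv]
    exact iff_of_false (Fin.not_lt_zero _) (Fin.not_lt_zero _)
  · rw [if_neg hz, if_neg hv, Fin.succ_lt_succ_iff]

lemma oneline_iff (σ' : Equiv.Perm (Fin (q + 1))) {k : ℕ} (hk : 3 ≤ k) :
    PContains (fun i : Fin (q + 2) => Phi σ' i) (delta k) ↔
      PContains (fun i : Fin (q + 1) => σ' i) (delta k) := by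
  constructor
  · rintro ⟨f, hf, hp⟩
    have hdec : ∀ a b : Fin k, a < b → Phi σ' (f b) < Phi σ' (f a) := by
      intro a b h
      exact (hp b a).mp (Fin.rev_lt_rev.mpr h)
    have hne0 : ∀ a : Fin k, f a ≠ 0 := by
      have h0 : f ⟨0, by omega⟩ ≠ 0 := by
        intro hc
        have d1 : Phi σ' (f ⟨1, by omega⟩) < Phi σ' (f ⟨0, by omega⟩) :=
          hdec _ _ (by rw [Fin.lt_def]; norm_num)
        have d2 : Phi σ' (f ⟨2, by omega⟩) < Phi σ' (f ⟨1, by omega⟩) :=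
          hdec _ _ (by rw [Fin.lt_def]; norm_num)
        rw [hc, phi_zero, Fin.lt_def, Fin.val_one] at d1
        rw [Fin.lt_def] at d2
        omega
      intro a
      by_cases ha : a = ⟨0, by omega⟩
      · rw [ha]; exact h0
      · have : f ⟨0, by omega⟩ < f a := by
          apply hf
          rw [Fin.lt_def]
          simp only [Fin.ext_iff] at ha
          have := a.isLt
          simp only []
          omega
        intro hc
        rw [hc] at this
        exact absurd this (Fin.not_lt_zero _)
    refine ⟨fun a => (f a).pred (hne0 a), ?_, ?_⟩
    · intro a b hab
      have := hf hab
      rw [Fin.lt_def, Fin.coe_pred, Fin.coe_pred]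
      rw [Fin.lt_def] at this
      have h1 : (f a : ℕ) ≠ 0 := by
        intro hc; exact hne0 a (Fin.ext (by rw [hc, Fin.val_zero]))
      omega
    · intro a b
      rw [hp a b]
      show Phi σ' (f a) < Phi σ' (f b) ↔
        σ' ((f a).pred (hne0 a)) < σ' ((f b).pred (hne0 b))
      have hW : ∀ c : Fin k, Phi σ' (f c) =
          (if σ' ((f c).pred (hne0 c)) = 0 then (0 : Fin (q + 2))
            else (σ' ((f c).pred (hne0 c))).succ) := by
        intro c
        rw [← phi_succ, Fin.succ_pred]
      rw [hW a, hW b, ite_lt_ite_iff]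
  · rintro ⟨f', hf', hp'⟩
    refine ⟨fun a => (f' a).succ, fun a b hab => Fin.succ_lt_succ_iff.mpr (hf' hab), ?_⟩
    intro a b
    rw [hp' a b]
    show _ ↔ (Phi σ' (f' a).succ) < (Phi σ' (f' b).succ)
    rw [phi_succ, phi_succ, ite_lt_ite_iff]

end Stmt5Aux

/-- Lemma 2.3: for `n ≥ 5` and `k ≥ 3`,
`a_{n,2}^∘(δ_k;1432) = a_{n-1}^∘(δ_k;1432)`. -/
theorem stmt5 (n k : ℕ) (hn : 5 ≤ n) (hk : 3 ≤ k) :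
    acircJ n k 2 = acirc (n - 1) k := by
  obtain ⟨q, rfl⟩ : ∃ q, n = q + 1 + 1 := ⟨n - 2, by omega⟩
  have hq : 1 ≤ q := by omega
  have hinj : Function.Injective (fun σ' : Equiv.Perm (Fin (q + 1)) => Stmt5Aux.Phi σ') := by
    intro a b hab
    have h2 := Equiv.Perm.decomposeFin.symm.injective hab
    simpa using h2
  have hset : AcircJ (q + 1 + 1) k 2 =
      (fun σ' : Equiv.Perm (Fin (q + 1)) => Stmt5Aux.Phi σ') '' Acirc (q + 1) k := by
    ext σ
    constructor
    · rintro ⟨⟨hcyc, hdel, hforms⟩, hj⟩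
      have h01 : σ 0 = 1 := by
        have h := hj (by omega)
        apply Fin.ext
        rw [Fin.val_one]
        have hz : (⟨0, by omega⟩ : Fin (q + 1 + 1)) = 0 := by
          apply Fin.ext; rw [Fin.val_zero]
        rw [← hz]
        omega
      have hs := Equiv.Perm.decomposeFin.symm_apply_apply σ
      set pr := Equiv.Perm.decomposeFin σ with hprdef
      have hp1 : pr.1 = 1 := by
        have h2 := Equiv.Perm.decomposeFin_symm_apply_zero pr.1 pr.2
        rw [Prod.mk.eta, hs] at h2
        rw [← h2, h01]
      have hphi : Stmt5Aux.Phi pr.2 = σ := by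
        rw [Stmt5Aux.Phi, ← hp1, Prod.mk.eta, hs]
      have hcyc' : IsNCycle pr.2 := by
        rw [Stmt5Aux.isNCycle_iff_orb hq]
        apply Stmt5Aux.orbB
        rw [hphi]
        exact (Stmt5Aux.isNCycle_iff_orb (show 1 ≤ q + 1 by omega)).mp hcyc
      refine ⟨pr.2, ⟨hcyc', ?_, ?_⟩, hphi⟩
      · intro hc
        apply hdel
        have h3 := (Stmt5Aux.oneline_iff pr.2 hk).mpr hc
        rwa [hphi] at h3
      · have h3 := Stmt5Aux.allCycle_iff pr.2 hcyc'
        rw [hphi] at h3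
        exact h3.mp hforms
    · rintro ⟨σ', ⟨hcyc, hdel, hforms⟩, rfl⟩
      have hcycP : IsNCycle (Stmt5Aux.Phi σ') := by
        rw [Stmt5Aux.isNCycle_iff_orb (show 1 ≤ q + 1 by omega)]
        exact Stmt5Aux.orbA ((Stmt5Aux.isNCycle_iff_orb hq).mp hcyc)
      refine ⟨⟨hcycP, ?_, ?_⟩, ?_⟩
      · intro hc
        exact hdel ((Stmt5Aux.oneline_iff σ' hk).mp hc)
      · exact (Stmt5Aux.allCycle_iff σ' hcyc).mpr hforms
      · intro h
        have hz : (⟨0, h⟩ : Fin (q + 1 + 1)) = 0 := by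
          apply Fin.ext; rw [Fin.val_zero]
        show ((Stmt5Aux.Phi σ' ⟨0, h⟩ : Fin (q + 1 + 1)) : ℕ) + 1 = 2
        rw [hz, Stmt5Aux.phi_zero, Fin.val_one]
  calc acircJ (q + 1 + 1) k 2
      = ((fun σ' : Equiv.Perm (Fin (q + 1)) => Stmt5Aux.Phi σ') '' Acirc (q + 1) k).ncard := by
        rw [acircJ, hset]
    _ = (Acirc (q + 1) k).ncard := Set.ncard_image_of_injective _ hinj
    _ = acirc (q + 1 + 1 - 1) k := rfl
end

section
/- For every integer n ≥ 5, a_{n,3}^∘(δ_3;1432) = ⌊(n−1)/2⌋; that is, the number of cyclic permutations π ∈ S_n whose one-line notation avoids δ_3 = 321, all of whose cycle forms avoid 1432, and whose standard cycle form begins (1, 3, …), equals ⌊(n−1)/2⌋. -/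
section helpers
variable {n : ℕ}

lemma mk321 (w : Fin n → Fin n) (i j k : Fin n) (hij : i < j) (hjk : j < k)
    (h1 : w j < w i) (h2 : w k < w j) : PContains w (delta 3) := by
  have t1 : w k < w i := h2.trans h1
  refine ⟨![i, j, k], ?_, ?_⟩
  · intro a b hab
    fin_cases a <;> fin_cases b <;>
      first
        | exact absurd hab (by decide)
        | exact hij | exact hjk | exact hij.trans hjk
  · intro a b
    fin_cases a <;> fin_cases b <;>
      simp only [Matrix.cons_val_zero, Matrix.cons_val_one, Matrix.head_cons,
        Matrix.cons_val_two, Matrix.tail_cons, Fin.mk_zero, Fin.mk_one] <;>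
      (constructor <;> intro h) <;>
      first
        | assumption
        | exact t1
        | decide
        | exact absurd h (by decide)
        | exact absurd h (lt_asymm h1)
        | exact absurd h (lt_asymm h2)
        | exact absurd h (lt_asymm t1)
        | exact absurd h (lt_irrefl _)

lemma get321 (w : Fin n → Fin n) (h : PContains w (delta 3)) :
    ∃ i j k : Fin n, i < j ∧ j < k ∧ w j < w i ∧ w k < w j := by
  obtain ⟨f, hf, hiff⟩ := h
  exact ⟨f 0, f 1, f 2, hf (by decide), hf (by decide),
    (hiff 1 0).mp (by decide), (hiff 2 1).mp (by decide)⟩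

lemma mk1432 (w : Fin n → Fin n) (i1 i2 i3 i4 : Fin n) (h12 : i1 < i2) (h23 : i2 < i3)
    (h34 : i3 < i4) (v1 : w i1 < w i4) (v2 : w i4 < w i3) (v3 : w i3 < w i2) :
    PContains w patt1432 := by
  have t1 : w i1 < w i3 := v1.trans v2
  have t2 : w i1 < w i2 := t1.trans v3
  have t3 : w i4 < w i2 := v2.trans v3
  refine ⟨![i1, i2, i3, i4], ?_, ?_⟩
  · intro a b hab
    fin_cases a <;> fin_cases b <;>
      first
        | exact absurd hab (by decide)
        | exact h12 | exact h23 | exact h34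
        | exact h12.trans h23 | exact h23.trans h34
        | exact (h12.trans h23).trans h34
  · intro a b
    fin_cases a <;> fin_cases b <;>
      simp only [patt1432, Matrix.cons_val_zero, Matrix.cons_val_one, Matrix.head_cons,
        Matrix.cons_val_two, Matrix.tail_cons, Matrix.cons_val_three, Fin.mk_zero, Fin.mk_one] <;>
      (constructor <;> intro h) <;>
      first
        | assumption
        | decide
        | exact absurd h (by decide)
        | exact absurd h (lt_asymm v1)
        | exact absurd h (lt_asymm v2)
        | exact absurd h (lt_asymm v3)
        | exact absurd h (lt_asymm t1)
        | exact absurd h (lt_asymm t2)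
        | exact absurd h (lt_asymm t3)
        | exact absurd h (lt_irrefl _)

lemma get1432 (w : Fin n → Fin n) (h : PContains w patt1432) :
    ∃ i1 i2 i3 i4 : Fin n, i1 < i2 ∧ i2 < i3 ∧ i3 < i4 ∧
      w i1 < w i4 ∧ w i4 < w i3 ∧ w i3 < w i2 := by
  obtain ⟨f, hf, hiff⟩ := h
  exact ⟨f 0, f 1, f 2, f 3, hf (by decide), hf (by decide), hf (by decide),
    (hiff 0 3).mp (by decide), (hiff 3 2).mp (by decide), (hiff 2 1).mp (by decide)⟩

end helpers

/-! ### The explicit family -/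

def pfun (n m : ℕ) (x : Fin n) : Fin n :=
  ⟨(if x.val + 1 < 2*m then x.val + 2 else if x.val + 1 = 2*m then 0
    else if x.val + 1 < n then x.val + 1 else 1) % n, Nat.mod_lt _ x.pos⟩

lemma pfun_val {n m : ℕ} (hm : 1 ≤ m) (hmn : 2*m+1 ≤ n) (x : Fin n) :
    (pfun n m x).val = if x.val + 1 < 2*m then x.val + 2 else if x.val + 1 = 2*m then 0
      else if x.val + 1 < n then x.val + 1 else 1 := by
  have hx := x.isLt
  simp only [pfun]
  split_ifs <;> exact Nat.mod_eq_of_lt (by omega)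

lemma pfun_inj {n m : ℕ} (hm : 1 ≤ m) (hmn : 2*m+1 ≤ n) : Function.Injective (pfun n m) := by
  intro a b hab
  have ha := a.isLt; have hb := b.isLt
  have h1 := congrArg Fin.val hab
  rw [pfun_val hm hmn a, pfun_val hm hmn b] at h1
  split_ifs at h1 <;> exact Fin.ext (by omega)

noncomputable def Pm (n m : ℕ) : Equiv.Perm (Fin n) :=
  if h : 1 ≤ m ∧ 2*m+1 ≤ n then
    Equiv.ofBijective (pfun n m)
      ((Fintype.bijective_iff_injective_and_card _).mpr ⟨pfun_inj h.1 h.2, rfl⟩)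
  else 1

lemma Pm_apply {n m : ℕ} (hm : 1 ≤ m) (hmn : 2*m+1 ≤ n) (x : Fin n) :
    Pm n m x = pfun n m x := by
  rw [Pm, dif_pos (show 1 ≤ m ∧ 2*m+1 ≤ n from ⟨hm, hmn⟩)]
  rfl

def fm (n m k : ℕ) : ℕ :=
  if k ≤ m then 2*k else if k < n - m then k + m else 2*(k - (n-m)) + 1

lemma fm_lt {n m k : ℕ} (hm : 1 ≤ m) (hmn : 2*m+1 ≤ n) (hk : k < n) : fm n m k < n := by
  simp only [fm]; split_ifs <;> omega

lemma fm_monoA {n m a b : ℕ} (hm : 1 ≤ m) (hmn : 2*m+1 ≤ n) (hab : a < b) (hb : b + m < n) :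
    fm n m a < fm n m b := by
  simp only [fm]; split_ifs <;> omega

lemma fm_monoB {n m a b : ℕ} (hm : 1 ≤ m) (hmn : 2*m+1 ≤ n) (ha : n ≤ a + m) (hab : a < b)
    (hb : b < n) : fm n m a < fm n m b := by
  simp only [fm]; split_ifs <;> omega

lemma fm_AB {n m a b : ℕ} (hm : 1 ≤ m) (hmn : 2*m+1 ≤ n) (hab : a < b) (hb : b < n)
    (hv : fm n m b < fm n m a) : a + m < n ∧ n ≤ b + m := by
  constructor <;> by_contra hc
  · exact absurd (fm_monoB hm hmn (by omega) hab hb) (by omega)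
  · have : b + m < n := by omega
    exact absurd (fm_monoA hm hmn hab this) (by omega)

lemma pfun_step {n m : ℕ} (hm : 1 ≤ m) (hmn : 2*m+1 ≤ n) (j : ℕ) (hj : j < n) :
    (pfun n m ⟨fm n m j, fm_lt hm hmn hj⟩).val = fm n m ((j+1) % n) := by
  rw [pfun_val hm hmn]
  rcases eq_or_ne (j+1) n with h | h
  · rw [h, Nat.mod_self]
    simp only [fm]
    split_ifs <;> omega
  · rw [Nat.mod_eq_of_lt (by omega)]
    simp only [fm]
    split_ifs <;> omega

lemma Pm_pow_val {n m : ℕ} (hn : 5 ≤ n) (hm : 1 ≤ m) (hmn : 2*m+1 ≤ n) :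
    ∀ k : ℕ, ((Pm n m ^ k) ⟨0, by omega⟩).val = fm n m (k % n) := by
  intro k
  induction k with
  | zero => simp [fm]
  | succ k ih =>
    rw [pow_succ', Equiv.Perm.mul_apply]
    have hkn : k % n < n := Nat.mod_lt _ (by omega)
    have hx : (Pm n m ^ k) ⟨0, by omega⟩ = ⟨fm n m (k % n), fm_lt hm hmn hkn⟩ := Fin.ext ih
    rw [hx, Pm_apply hm hmn, ← Nat.mod_add_mod]
    exact pfun_step hm hmn _ hkn

def tm (n m x : ℕ) : ℕ := if 2*m < x then x - m else if x % 2 = 0 then x/2 else n - m + x/2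

lemma tm_spec {n m x : ℕ} (hm : 1 ≤ m) (hmn : 2*m+1 ≤ n) (hx : x < n) :
    tm n m x < n ∧ fm n m (tm n m x) = x := by
  simp only [tm, fm]; split_ifs <;> omega

lemma Pm_isNCycle {n m : ℕ} (hn : 5 ≤ n) (hm : 1 ≤ m) (hmn : 2*m+1 ≤ n) :
    (Pm n m).IsCycle ∧ (Pm n m).support = Finset.univ := by
  have hfix : ∀ x : Fin n, Pm n m x ≠ x := by
    intro x hx
    have := congrArg Fin.val hx
    rw [Pm_apply hm hmn, pfun_val hm hmn] at this
    have := x.isLt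
    split_ifs at * <;> omega
  constructor
  · refine ⟨⟨0, by omega⟩, hfix _, ?_⟩
    intro y _
    obtain ⟨ht, hft⟩ := tm_spec hm hmn (x := y.val) y.isLt
    refine ⟨(tm n m y.val : ℤ), ?_⟩
    rw [zpow_natCast]
    apply Fin.ext
    rw [Pm_pow_val hn hm hmn, Nat.mod_eq_of_lt ht, hft]
  · ext x
    simp [Equiv.Perm.mem_support, hfix x]

lemma Pm_oneline_avoids {n m : ℕ} (hn : 5 ≤ n) (hm : 1 ≤ m) (hmn : 2*m+1 ≤ n) :
    PAvoids (fun i => Pm n m i) (delta 3) := by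
  intro h
  obtain ⟨i, j, k, hij, hjk, h1, h2⟩ := get321 _ h
  rw [Fin.lt_def] at hij hjk h1 h2
  simp only [Pm_apply hm hmn, pfun_val hm hmn] at h1 h2
  have := i.isLt; have := j.isLt; have := k.isLt
  split_ifs at h1 h2 <;> omega

lemma shape_lin {n m k2 k3 k4 : ℕ} (hm : 1 ≤ m) (hmn : 2*m+1 ≤ n) (h23 : k2 < k3)
    (h34 : k3 < k4) (h4 : k4 < n) (v2 : fm n m k4 < fm n m k3) (v3 : fm n m k3 < fm n m k2) :
    False := by
  have a := fm_AB hm hmn h34 h4 v2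
  have b := fm_AB hm hmn h23 (by omega) v3
  omega

lemma shape_w34 {n m k1 k2 k3 k4 : ℕ} (hm : 1 ≤ m) (hmn : 2*m+1 ≤ n) (h41 : k4 < k1)
    (h12 : k1 < k2) (h23 : k2 < k3) (h3 : k3 < n) (v1 : fm n m k1 < fm n m k4)
    (v3 : fm n m k3 < fm n m k2) : False := by
  have a := fm_AB hm hmn h23 h3 v3
  exact absurd (fm_monoA hm hmn h41 (by omega)) (by omega)

lemma shape_w23 {n m k1 k3 k4 : ℕ} (hm : 1 ≤ m) (hmn : 2*m+1 ≤ n) (h34 : k3 < k4)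
    (h41 : k4 < k1) (h1 : k1 < n) (v1 : fm n m k1 < fm n m k4)
    (v2 : fm n m k4 < fm n m k3) : False := by
  have a := fm_AB hm hmn h34 (by omega) v2
  exact absurd (fm_monoB hm hmn (by omega) h41 h1) (by omega)

lemma Pm_cycleforms_avoid {n m : ℕ} (hn : 5 ≤ n) (hm : 1 ≤ m) (hmn : 2*m+1 ≤ n) :
    ∀ x : Fin n, PAvoids (fun i : Fin n => ((Pm n m) ^ (i : ℕ)) x) patt1432 := by
  intro x h
  obtain ⟨i1, i2, i3, i4, h12, h23, h34, v1, v2, v3⟩ := get1432 _ h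
  rw [Fin.lt_def] at h12 h23 h34
  obtain ⟨ht, hft⟩ := tm_spec hm hmn (x := x.val) x.isLt
  set t := tm n m x.val with htdef
  have hx : (Pm n m ^ t) ⟨0, by omega⟩ = x := by
    apply Fin.ext
    rw [Pm_pow_val hn hm hmn, Nat.mod_eq_of_lt ht, hft]
  have hw : ∀ i : Fin n, (((Pm n m) ^ (i : ℕ)) x).val = fm n m ((i.val + t) % n) := by
    intro i
    rw [← hx, ← Equiv.Perm.mul_apply, ← pow_add, Pm_pow_val hn hm hmn]
  rw [Fin.lt_def, hw, hw] at v1 v2 v3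
  have l1 : i1.val + t < 2*n := by have := i1.isLt; omega
  have l2 : i2.val + t < 2*n := by have := i2.isLt; omega
  have l3 : i3.val + t < 2*n := by have := i3.isLt; omega
  have l4 : i4.val + t < 2*n := by have := i4.isLt; omega
  have hi4 := i4.isLt
  have hmod : ∀ a : ℕ, a < 2*n → a % n = if a < n then a else a - n := by
    intro a ha
    split_ifs with h'
    · exact Nat.mod_eq_of_lt h'
    · rw [Nat.mod_eq_sub_mod (by omega)]
      exact Nat.mod_eq_of_lt (by omega)
  rw [hmod _ l1] at v1
  rw [hmod _ l2] at v3
  rw [hmod _ l3] at v2 v3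
  rw [hmod _ l4] at v1 v2
  rcases lt_or_ge (i1.val + t) n with c1 | c1 <;>
    rcases lt_or_ge (i2.val + t) n with c2 | c2 <;>
      rcases lt_or_ge (i3.val + t) n with c3 | c3 <;>
        rcases lt_or_ge (i4.val + t) n with c4 | c4 <;>
          first
          | omega
          | -- TTTT : all linear
            (rw [if_pos c1, if_pos c4] at v1; rw [if_pos c4, if_pos c3] at v2
             rw [if_pos c3, if_pos c2] at v3
             exact shape_lin hm hmn (k2 := i2.val+t) (by omega) (by omega) (by omega) v2 v3)
          | -- TTTF : wrap between 3/4
            (rw [if_pos c1, if_neg (by omega)] at v1; rw [if_neg (by omega), if_pos c3] at v2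
             rw [if_pos c3, if_pos c2] at v3
             exact shape_w34 hm hmn (k4 := i4.val+t-n) (by omega) (by omega) (by omega) (by omega) v1 v3)
          | -- TTFF : wrap between 2/3
            (rw [if_pos c1, if_neg (by omega)] at v1
             rw [if_neg (by omega), if_neg (by omega)] at v2
             rw [if_neg (by omega), if_pos c2] at v3
             exact shape_w23 hm hmn (k3 := i3.val+t-n) (by omega) (by omega) (by omega) v1 v2)
          | -- TFFF : wrap between 1/2, linear triple
            (rw [if_pos c1, if_neg (by omega)] at v1
             rw [if_neg (by omega), if_neg (by omega)] at v2
             rw [if_neg (by omega), if_neg (by omega)] at v3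
             exact shape_lin hm hmn (k2 := i2.val+t-n) (by omega) (by omega) (by omega) v2 v3)
          | -- FFFF : all wrapped, linear
            (rw [if_neg (by omega), if_neg (by omega)] at v1
             rw [if_neg (by omega), if_neg (by omega)] at v2
             rw [if_neg (by omega), if_neg (by omega)] at v3
             exact shape_lin hm hmn (k2 := i2.val+t-n) (by omega) (by omega) (by omega) v2 v3)

/-! ### Converse -/

set_option maxHeartbeats 1000000 in
lemma conv_main {n : ℕ} {π : Equiv.Perm (Fin n)} (hn : 5 ≤ n)
    (hcyc : π.IsCycle) (hsupp : π.support = Finset.univ)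
    (hA : PAvoids (fun i => π i) (delta 3))
    (hB : ∀ x : Fin n, PAvoids (fun i : Fin n => (π ^ (i : ℕ)) x) patt1432)
    (h0 : (π ⟨0, by omega⟩).val = 2) :
    ∃ m, 1 ≤ m ∧ 2*m+1 ≤ n ∧ π = Pm n m := by
  set z0 : Fin n := ⟨0, by omega⟩ with hz0
  set onef : Fin n := ⟨1, by omega⟩ with honef
  set L : Fin n := ⟨n-1, by omega⟩ with hLdef
  have hz0v : z0.val = 0 := rfl
  have honev : onef.val = 1 := rfl
  have hLv : L.val = n - 1 := rfl
  have moved : ∀ y : Fin n, π y ≠ y := by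
    intro y
    rw [← Equiv.Perm.mem_support, hsupp]
    exact Finset.mem_univ y
  have ord : orderOf π = n := by
    rw [hcyc.orderOf, hsupp, Finset.card_univ, Fintype.card_fin]
  have pown : π ^ n = 1 := by
    have := pow_orderOf_eq_one π
    rwa [ord] at this
  have surj : ∀ y : Fin n, ∃ k, k < n ∧ (π ^ k) z0 = y := by
    intro y
    obtain ⟨i, hi, hiy⟩ := (hcyc.sameCycle (moved z0) (moved y)).exists_pow_eq'
    exact ⟨i, by rwa [ord] at hi, hiy⟩
  have powinj : ∀ i j : ℕ, i < j → j < n → (π ^ i) z0 ≠ (π ^ j) z0 := by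
    intro i j hij hj h
    have hfix0 : (π ^ (j - i)) z0 = z0 := by
      have hc : (π ^ (j-i)) ((π ^ i) z0) = (π ^ i) ((π ^ (j-i)) z0) := by
        rw [← Equiv.Perm.mul_apply, ← Equiv.Perm.mul_apply, ← pow_add, ← pow_add,
          Nat.add_comm]
      have he : (π ^ (j-i)) ((π ^ i) z0) = (π ^ i) z0 := by
        rw [← Equiv.Perm.mul_apply, ← pow_add, show j - i + i = j by omega, ← h]
      rw [hc] at he
      exact (π ^ i).injective he
    have hone : π ^ (j - i) = 1 := by
      ext y
      obtain ⟨k, hk, rfl⟩ := surj y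
      have hcomm : (π ^ (j-i)) ((π ^ k) z0) = (π ^ k) ((π ^ (j-i)) z0) := by
        rw [← Equiv.Perm.mul_apply, ← Equiv.Perm.mul_apply, ← pow_add, ← pow_add,
          Nat.add_comm]
      rw [Equiv.Perm.one_apply, hcomm, hfix0]
    have := orderOf_le_of_pow_eq_one (show 0 < j - i by omega) hone
    omega
  -- the 1432 tool
  have tool : ∀ (x : Fin n) (e1 e2 e3 e4 : ℕ), e1 < e2 → e2 < e3 → e3 < e4 → e4 < n →
      ((π^e1) x).val < ((π^e4) x).val → ((π^e4) x).val < ((π^e3) x).val →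
      ((π^e3) x).val < ((π^e2) x).val → False := by
    intro x e1 e2 e3 e4 h12 h23 h34 h4 v1 v2 v3
    refine hB x (mk1432 _ ⟨e1, by omega⟩ ⟨e2, by omega⟩ ⟨e3, by omega⟩ ⟨e4, by omega⟩
      ?_ ?_ ?_ ?_ ?_ ?_) <;> rw [Fin.lt_def] <;> assumption
  -- Master Lemma: no descent onto a value ≥ 3
  have ML : ∀ x : Fin n, (π x).val < x.val → (π x).val ≤ 2 := by
    intro x hlt
    by_contra hy3
    push_neg at hy3
    obtain ⟨a, han, hax⟩ := surj x
    have hyv : 3 ≤ (π x).val := hy3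
    have ha0 : a ≠ 0 := by
      intro h
      rw [h, pow_zero, Equiv.Perm.one_apply] at hax
      have := congrArg Fin.val hax
      omega
    have hstep : (π ^ (a+1)) z0 = π x := by
      rw [pow_succ', Equiv.Perm.mul_apply, hax]
    have ha1 : a + 1 < n := by
      rcases eq_or_ne (a+1) n with h | h
      · rw [h, pown, Equiv.Perm.one_apply] at hstep
        have := congrArg Fin.val hstep
        omega
      · omega
    obtain ⟨b, hbn, hbx⟩ := surj onef
    have hb0 : b ≠ 0 := by
      intro h
      rw [h, pow_zero, Equiv.Perm.one_apply] at hbx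
      have := congrArg Fin.val hbx
      omega
    have hb1 : b ≠ 1 := by
      intro h
      rw [h, pow_one] at hbx
      have := congrArg Fin.val hbx
      omega
    have hba : b ≠ a := by
      intro h
      rw [h, hax] at hbx
      have := congrArg Fin.val hbx
      omega
    have hba1 : b ≠ a + 1 := by
      intro h
      rw [h, hstep] at hbx
      have := congrArg Fin.val hbx
      omega
    rcases lt_or_gt_of_ne hba with hlt' | hgt'
    · -- b < a : use word starting at 1
      have w2 : (π ^ (a - b)) onef = x := by
        rw [← hbx, ← Equiv.Perm.mul_apply, ← pow_add, show a - b + b = a by omega, hax]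
      have w3 : (π ^ (a + 1 - b)) onef = π x := by
        rw [← hbx, ← Equiv.Perm.mul_apply, ← pow_add, show a + 1 - b + b = a + 1 by omega,
          hstep]
      have w4 : (π ^ (n + 1 - b)) onef = π z0 := by
        rw [← hbx, ← Equiv.Perm.mul_apply, ← pow_add, show n + 1 - b + b = n + 1 by omega,
          pow_succ', Equiv.Perm.mul_apply, pown, Equiv.Perm.one_apply]
      refine tool onef 0 (a - b) (a + 1 - b) (n + 1 - b) (by omega) (by omega) (by omega)
        (by omega) ?_ ?_ ?_
      · rw [pow_zero, Equiv.Perm.one_apply, w4]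
        omega
      · rw [w4, w3]
        omega
      · rw [w3, w2]
        omega
    · -- b > a + 1 : use word starting at 0
      refine tool z0 0 a (a+1) b (by omega) (by omega) (by omega) (by omega) ?_ ?_ ?_
      · rw [pow_zero, Equiv.Perm.one_apply, hbx]
        omega
      · rw [hbx, hstep]
        omega
      · rw [hstep, hax]
        omega
  -- no descent except onto 0 or 1
  have noD : ∀ x : Fin n, (π x).val < x.val → (π x).val ≤ 1 := by
    intro x hlt
    have h2 := ML x hlt
    rcases eq_or_ne ((π x).val) 2 with h | h
    · exfalso
      have hx0 : π x = π z0 := Fin.ext (by rw [h, h0])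
      have := congrArg Fin.val (π.injective hx0)
      omega
    · omega
  have hL : π L = onef := by
    have h1 : (π L).val < L.val := by
      have := (π L).isLt
      have hne : (π L).val ≠ L.val := fun h => moved L (Fin.ext h)
      omega
    have h2 := noD L h1
    rcases Nat.lt_or_ge ((π L).val) 1 with h | h
    · -- π L = 0 : 321 via (0, q', L)
      exfalso
      have hq'v : π (π.symm onef) = onef := π.apply_symm_apply onef
      have hq'0 : (π.symm onef).val ≠ 0 := by
        intro hz
        have hq : π.symm onef = z0 := Fin.ext hz
        rw [hq] at hq'v
        have := congrArg Fin.val hq'v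
        omega
      have hq'Lv : (π.symm onef).val < n - 1 := by
        have := (π.symm onef).isLt
        have : (π.symm onef).val ≠ n-1 := by
          intro hh
          have hq : π.symm onef = L := Fin.ext hh
          rw [hq] at hq'v
          have := congrArg Fin.val hq'v
          omega
        omega
      refine hA (mk321 (fun i => π i) z0 (π.symm onef) L ?_ ?_ ?_ ?_)
      · rw [Fin.lt_def]; omega
      · rw [Fin.lt_def]; omega
      · show π (π.symm onef) < π z0
        rw [Fin.lt_def, hq'v]
        omega
      · show π L < π (π.symm onef)
        rw [Fin.lt_def, hq'v]
        omega
    · exact Fin.ext (by omega)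
  have hLval : (π L).val = 1 := by rw [hL]
  have hp : π (π.symm z0) = z0 := π.apply_symm_apply z0
  set p : Fin n := π.symm z0 with hpdef
  have hpval : (π p).val = 0 := by rw [hp]
  have hp0 : p.val ≠ 0 := by
    intro h
    have h' : p = z0 := Fin.ext h
    rw [h'] at hpval
    omega
  have hpLv : p.val < n - 1 := by
    have := p.isLt
    have : p.val ≠ n - 1 := by
      intro hh
      have h' : p = L := Fin.ext hh
      rw [h'] at hpval
      omega
    omega
  have exceed : ∀ x : Fin n, x ≠ p → x ≠ L → x.val < (π x).val := by
    intro x hxp hxL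
    rcases Nat.lt_trichotomy ((π x).val) x.val with h | h | h
    · exfalso
      have h1 := noD x h
      rcases Nat.lt_or_ge ((π x).val) 1 with hh | hh
      · exact hxp (π.injective (Fin.ext (by omega)))
      · exact hxL (π.injective (Fin.ext (by omega)))
    · exact absurd (Fin.ext h) (moved x)
    · exact h
  have inc : ∀ i j : Fin n, i.val < j.val → j.val < n-1 → i ≠ p → j ≠ p →
      (π i).val < (π j).val := by
    intro i j hij hjL hip hjp
    rcases Nat.lt_trichotomy ((π i).val) ((π j).val) with h | h | h
    · exact h
    · exact absurd (π.injective (Fin.ext h)) (fun hh => by rw [hh] at hij; omega)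
    · exfalso
      have hj2 : 2 ≤ (π j).val := by
        have v0 : (π j).val ≠ 0 := by
          intro hh
          exact hjp (π.injective (Fin.ext (by omega)))
        have v1 : (π j).val ≠ 1 := by
          intro hh
          have := congrArg Fin.val (π.injective (Fin.ext (show (π j).val = (π L).val by omega)))
          omega
        omega
      refine hA (mk321 (fun i => π i) i j L ?_ ?_ ?_ ?_)
      · rwa [Fin.lt_def]
      · rw [Fin.lt_def]; omega
      · show π j < π i
        rwa [Fin.lt_def]
      · show π L < π j
        rw [Fin.lt_def]
        omega
  have mkv : ∀ (v : ℕ) (h : v < n), ((⟨v, h⟩ : Fin n)).val = v := fun _ _ => rfl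
  have mid : ∀ x : Fin n, p.val < x.val → x.val + 1 < n → (π x).val = x.val + 1 := by
    have key : ∀ d : ℕ, ∀ x : Fin n, p.val < x.val → x.val + d + 2 = n →
        (π x).val = x.val + 1 := by
      intro d
      induction d with
      | zero =>
        intro x hpx hxn
        have h1 := exceed x (fun hh => by rw [hh] at hxn; omega)
          (fun hh => by rw [hh] at hxn; omega)
        have := (π x).isLt
        omega
      | succ d ih =>
        intro x hpx hxn
        have hx1 : x.val + 1 < n := by omega
        obtain ⟨x', hx'v⟩ : ∃ x' : Fin n, x'.val = x.val + 1 := ⟨⟨x.val + 1, hx1⟩, rfl⟩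
        have hIH := ih x' (by omega) (by omega)
        have h1 := exceed x (fun hh => by rw [hh] at hxn; omega)
          (fun hh => by have := congrArg Fin.val hh; omega)
        have h2 := inc x x' (by omega) (by omega)
          (fun hh => by rw [hh] at hxn; omega)
          (fun hh => by have := congrArg Fin.val hh; rw [hx'v] at this; omega)
        omega
    intro x hpx hxn
    exact key (n - x.val - 2) x hpx (by omega)
  have pre : ∀ x : Fin n, x.val < p.val → (π x).val = x.val + 2 := by
    have lb : ∀ v : ℕ, ∀ x : Fin n, x.val = v → x.val < p.val → x.val + 2 ≤ (π x).val := by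
      intro v
      induction v with
      | zero =>
        intro x hv hxp
        have hxz : x = z0 := Fin.ext (by omega)
        rw [hxz]
        omega
      | succ v ih =>
        intro x hv hxp
        have hplt := p.isLt
        have hvn : v < n := by omega
        obtain ⟨xv, hxvv⟩ : ∃ xv : Fin n, xv.val = v := ⟨⟨v, hvn⟩, rfl⟩
        have hIH := ih xv hxvv (by omega)
        have h2 := inc xv x (by omega) (by omega)
          (fun hh => by have := congrArg Fin.val hh; rw [hxvv] at this; omega)
          (fun hh => by rw [hh] at hxp; omega)
        omega
    have ub : ∀ d : ℕ, ∀ x : Fin n, x.val + d + 1 = p.val → (π x).val ≤ x.val + 2 := by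
      intro d
      induction d with
      | zero =>
        intro x hxp
        by_contra hc
        push_neg at hc
        have hplt := p.isLt
        have hc' : p.val + 2 ≤ (π x).val := by omega
        have hvn := (π x).isLt
        have hun : (π x).val - 1 < n := by omega
        obtain ⟨u, huv⟩ : ∃ u : Fin n, u.val = (π x).val - 1 := ⟨⟨(π x).val - 1, hun⟩, rfl⟩
        have hmid := mid u (by omega) (by omega)
        have hux : π u = π x := Fin.ext (by omega)
        have := congrArg Fin.val (π.injective hux)
        rw [huv] at this
        omega
      | succ d ih =>
        intro x hxp
        have hplt := p.isLt
        have hx1 : x.val + 1 < n := by omega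
        obtain ⟨x', hx'v⟩ : ∃ x' : Fin n, x'.val = x.val + 1 := ⟨⟨x.val + 1, hx1⟩, rfl⟩
        have hIH := ih x' (by omega)
        have h2 := inc x x' (by omega) (by omega)
          (fun hh => by have := congrArg Fin.val hh; omega)
          (fun hh => by have := congrArg Fin.val hh; rw [hx'v] at this; omega)
        omega
    intro x hxp
    have := lb x.val x rfl hxp
    have := ub (p.val - x.val - 1) x (by omega)
    omega
  -- p is odd
  have podd : p.val % 2 = 1 := by
    by_contra hc
    have hpe : p.val % 2 = 0 := by omega
    have hplt := p.isLt
    have orb : ∀ k : ℕ, 2*k ≤ p.val → ((π ^ k) z0).val = 2*k := by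
      intro k
      induction k with
      | zero => intro _; rw [pow_zero, Equiv.Perm.one_apply]
      | succ k ih =>
        intro hk
        have hIH := ih (by omega)
        rw [pow_succ', Equiv.Perm.mul_apply]
        have h2kn : 2*k < n := by omega
        have hc : (π ^ k) z0 = ⟨2*k, h2kn⟩ := Fin.ext (by simp only [mkv]; exact hIH)
        rw [hc]
        have hpre := pre ⟨2*k, h2kn⟩ (by simp only [mkv]; omega)
        simp only [mkv] at hpre
        omega
    have h1 := orb (p.val / 2) (by omega)
    have h2 : (π ^ (p.val/2 + 1)) z0 = z0 := by
      rw [pow_succ', Equiv.Perm.mul_apply]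
      have hc : (π ^ (p.val/2)) z0 = p := Fin.ext (by omega)
      rw [hc, hp]
    refine powinj 0 (p.val/2 + 1) (by omega) (by omega) ?_
    rw [pow_zero, Equiv.Perm.one_apply, h2]
  -- conclude
  refine ⟨(p.val + 1)/2, by omega, by omega, ?_⟩
  have hm2 : 2 * ((p.val + 1)/2) = p.val + 1 := by omega
  ext x
  rw [Pm_apply (by omega) (by omega), pfun_val (by omega) (by omega), hm2]
  have hxlt := x.isLt
  split_ifs with c1 c2 c3
  · exact pre x (by omega)
  · have hxp : x = p := Fin.ext (by omega)
    rw [hxp]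
    omega
  · exact mid x (by omega) (by omega)
  · have hxL : x = L := Fin.ext (by omega)
    rw [hxL, hL]


lemma Pm_mem {n m : ℕ} (hn : 5 ≤ n) (hm : 1 ≤ m) (hmn : 2*m+1 ≤ n) :
    Pm n m ∈ AcircJ n 3 3 := by
  refine ⟨⟨⟨(Pm_isNCycle hn hm hmn).1, (Pm_isNCycle hn hm hmn).2⟩,
    Pm_oneline_avoids hn hm hmn, Pm_cycleforms_avoid hn hm hmn⟩, ?_⟩
  intro h
  rw [Pm_apply hm hmn, pfun_val hm hmn]
  have hv : ((⟨0, h⟩ : Fin n)).val = 0 := rfl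
  rw [hv, if_pos (by omega)]

/-- Lemma 2.6: for `n ≥ 5`, `a_{n,3}^∘(δ_3;1432) = ⌊(n-1)/2⌋`. -/
theorem stmt8 (n : ℕ) (hn : 5 ≤ n) :
    acircJ n 3 3 = (n - 1) / 2 := by
  have hset : AcircJ n 3 3 = (fun m => Pm n m) '' (Set.Icc 1 ((n-1)/2)) := by
    ext π
    constructor
    · rintro ⟨⟨⟨hc, hs⟩, hA, hB⟩, hj⟩
      have h0 : ∀ h : 0 < n, (π ⟨0, h⟩).val = 2 := fun h => by have := hj h; omega
      obtain ⟨m, hm1, hm2, heq⟩ := conv_main hn hc hs hA hB (h0 (by omega))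
      exact ⟨m, Set.mem_Icc.mpr ⟨hm1, by omega⟩, heq.symm⟩
    · rintro ⟨m, hm, rfl⟩
      rw [Set.mem_Icc] at hm
      exact Pm_mem hn hm.1 (by omega)
  have hinj : Set.InjOn (fun m => Pm n m) (Set.Icc 1 ((n-1)/2)) := by
    intro m1 h1 m2 h2 heq
    rw [Set.mem_Icc] at h1 h2
    have hm1n : 2*m1 - 1 < n := by omega
    have e := congrArg (fun (σ : Equiv.Perm (Fin n)) => (σ ⟨2*m1-1, hm1n⟩).val) heq
    simp only at e
    rw [Pm_apply h1.1 (by omega), Pm_apply h2.1 (by omega), pfun_val h1.1 (by omega),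
      pfun_val h2.1 (by omega)] at e
    have hv : ((⟨2*m1-1, hm1n⟩ : Fin n)).val = 2*m1-1 := rfl
    rw [hv] at e
    split_ifs at e <;> omega
  rw [acircJ, hset, Set.ncard_image_of_injOn hinj, ← Finset.coe_Icc, Set.ncard_coe_finset,
    Nat.card_Icc]
  omega
end

section
/- For every integer n ≥ 5, the sum over j from 4 to n of a_{n,j}^∘(δ_3;1432) equals ⌊(n−3)/2⌋; that is, the number of cyclic permutations π ∈ S_n whose one-line notation avoids δ_3 = 321, all of whose cycle forms avoid 1432, and whose standard cycle form begins (1, j, …) for some j with 4 ≤ j ≤ n, equals ⌊(n−3)/2⌋. -/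
set_option linter.unusedSectionVars false
set_option linter.unusedVariables false


def Cw (n t k : ℕ) : ℕ :=
  if k + 3 ≤ 2*t then (if k % 2 = 0 then k/2 else t + k/2)
  else if k + 2 ≤ n then k+1 else t-1

def Fol (n t i : ℕ) : ℕ :=
  if i + 1 < t then i + t
  else if i + 2 < 2*t then i + 1 - t
  else if i + 1 < n then i + 1 else t - 1

section arith
variable {n t : ℕ} (ht : 3 ≤ t) (htn : 2*t ≤ n+1) (hn : 5 ≤ n)
include ht htn hn

lemma Cw_lt {k : ℕ} (hk : k < n) : Cw n t k < n := by
  unfold Cw; split_ifs <;> omega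

lemma Cw_inj {a b : ℕ} (hab : a < b) (hb : b < n) : Cw n t a ≠ Cw n t b := by
  unfold Cw; split_ifs <;> omega

lemma Cw_surj {v : ℕ} (hv : v < n) : ∃ k, k < n ∧ Cw n t k = v := by
  rcases lt_trichotomy v (t-1) with h | h | h
  · exact ⟨2*v, by unfold Cw; split_ifs <;> omega⟩
  · exact ⟨n-1, by unfold Cw; split_ifs <;> omega⟩
  · rcases le_or_gt v (2*t-2) with h2 | h2
    · exact ⟨2*(v-t)+1, by unfold Cw; split_ifs <;> omega⟩
    · exact ⟨v-1, by unfold Cw; split_ifs <;> omega⟩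

lemma Fol_lt {i : ℕ} (hi : i < n) : Fol n t i < n := by
  unfold Fol; split_ifs <;> omega

lemma Fol_ne {i : ℕ} (hi : i < n) : Fol n t i ≠ i := by
  unfold Fol; split_ifs <;> omega

lemma Fol_inj {a b : ℕ} (hab : a < b) (hb : b < n) : Fol n t a ≠ Fol n t b := by
  unfold Fol; split_ifs <;> omega

lemma Fol_Cw {k : ℕ} (hk : k + 1 < n) : Fol n t (Cw n t k) = Cw n t (k+1) := by
  unfold Fol Cw; split_ifs <;> omega

lemma Fol_Cw_last : Fol n t (Cw n t (n-1)) = 0 := by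
  unfold Fol Cw; split_ifs <;> omega

lemma Fol_no321 {i j k : ℕ} (h1 : i < j) (h2 : j < k) (h3 : k < n)
    (h4 : Fol n t j < Fol n t i) (h5 : Fol n t k < Fol n t j) : False := by
  unfold Fol at h4 h5; split_ifs at h4 h5 <;> omega

lemma Cw_cases (k : ℕ) (hk : k < n) :
    (k + 3 ≤ 2*t ∧ k % 2 = 0 ∧ Cw n t k = k/2) ∨
    (k + 3 ≤ 2*t ∧ k % 2 = 1 ∧ Cw n t k = t + k/2) ∨
    (2*t ≤ k + 2 ∧ k + 2 ≤ n ∧ Cw n t k = k+1) ∨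
    (k = n-1 ∧ 2*t ≤ k+2 ∧ Cw n t k = t-1) := by
  unfold Cw; split_ifs <;> omega

set_option maxHeartbeats 2000000 in
lemma Cw_no1432 {k0 k1 k2 k3 : ℕ} (h0 : k0 < n) (h1 : k1 < n) (h2 : k2 < n) (h3 : k3 < n)
    (hcyc : (k0 < k1 ∧ k1 < k2 ∧ k2 < k3) ∨ (k3 < k0 ∧ k0 < k1 ∧ k1 < k2) ∨
            (k2 < k3 ∧ k3 < k0 ∧ k0 < k1) ∨ (k1 < k2 ∧ k2 < k3 ∧ k3 < k0))
    (ha : Cw n t k0 < Cw n t k3) (hb : Cw n t k3 < Cw n t k2) (hc : Cw n t k2 < Cw n t k1) :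
    False := by
  have A0 := Cw_cases ht htn hn k0 h0
  have A1 := Cw_cases ht htn hn k1 h1
  have A2 := Cw_cases ht htn hn k2 h2
  have A3 := Cw_cases ht htn hn k3 h3
  rcases hcyc with h|h|h|h <;> omega

end arith

lemma mod_cases (a N : ℕ) (hN : 0 < N) (h : a < 2*N) :
    (a < N ∧ a % N = a) ∨ (N ≤ a ∧ a % N = a - N) := by
  rcases lt_or_ge a N with hl | hl
  · exact Or.inl ⟨hl, Nat.mod_eq_of_lt hl⟩
  · refine Or.inr ⟨hl, ?_⟩
    rw [Nat.mod_eq_sub_mod hl]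
    exact Nat.mod_eq_of_lt (by omega)

/-- The explicit permutation. -/
noncomputable def permE (n t : ℕ) (h : 3 ≤ t ∧ 2*t ≤ n+1 ∧ 5 ≤ n) : Equiv.Perm (Fin n) :=
  Equiv.ofBijective (fun i => ⟨Fol n t i.val, Fol_lt h.1 h.2.1 h.2.2 i.isLt⟩)
    (Finite.injective_iff_bijective.mp (by
      intro a b hab
      by_contra hne
      rcases lt_or_gt_of_ne (fun e => hne e) with hl | hl
      · exact Fol_inj h.1 h.2.1 h.2.2 hl b.isLt (congrArg Fin.val hab)
      · exact Fol_inj h.1 h.2.1 h.2.2 hl a.isLt (congrArg Fin.val hab).symm))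

section forward
variable {n t : ℕ} (h : 3 ≤ t ∧ 2*t ≤ n+1 ∧ 5 ≤ n)
include h

lemma permE_apply (i : Fin n) : (permE n t h) i = ⟨Fol n t i.val, Fol_lt h.1 h.2.1 h.2.2 i.isLt⟩ :=
  rfl

lemma npos : 0 < n := by omega

lemma permE_pow {k : ℕ} (hk : k < n) :
    ((permE n t h) ^ k) ⟨0, npos h⟩ = ⟨Cw n t k, Cw_lt h.1 h.2.1 h.2.2 hk⟩ := by
  induction k with
  | zero =>
    simp only [pow_zero, Equiv.Perm.one_apply]
    have e : Cw n t 0 = 0 := by unfold Cw; split_ifs <;> omega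
    exact Fin.ext (by simp [e])
  | succ m ih =>
    rw [pow_succ', Equiv.Perm.mul_apply, ih (by omega), permE_apply]
    exact Fin.ext (Fol_Cw h.1 h.2.1 h.2.2 hk)

lemma permE_pow_n : ((permE n t h) ^ n) ⟨0, npos h⟩ = ⟨0, npos h⟩ := by
  have e : (permE n t h) ^ n = (permE n t h) * (permE n t h) ^ (n-1) := by
    rw [← pow_succ']
    congr 1
    omega
  rw [e, Equiv.Perm.mul_apply, permE_pow h (by omega), permE_apply]
  exact Fin.ext (Fol_Cw_last h.1 h.2.1 h.2.2)

lemma permE_pow_one : (permE n t h) ^ n = 1 := by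
  apply Equiv.ext
  intro x
  obtain ⟨k, hk, hck⟩ := Cw_surj h.1 h.2.1 h.2.2 x.isLt
  have hx : x = ((permE n t h) ^ k) ⟨0, npos h⟩ := by
    rw [permE_pow h hk]; exact Fin.ext hck.symm
  rw [Equiv.Perm.one_apply, hx, ← Equiv.Perm.mul_apply, ← pow_add, Nat.add_comm, pow_add,
    Equiv.Perm.mul_apply, permE_pow_n h]

lemma permE_isNCycle : IsNCycle (permE n t h) := by
  have hmoves : ∀ x : Fin n, (permE n t h) x ≠ x := by
    intro x e
    exact Fol_ne h.1 h.2.1 h.2.2 x.isLt (congrArg Fin.val e)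
  constructor
  · refine ⟨⟨0, npos h⟩, hmoves _, ?_⟩
    intro y _
    obtain ⟨k, hk, hck⟩ := Cw_surj h.1 h.2.1 h.2.2 y.isLt
    refine ⟨(k : ℤ), ?_⟩
    rw [zpow_natCast, permE_pow h hk]
    exact Fin.ext hck
  · exact Finset.eq_univ_iff_forall.mpr fun x => Equiv.Perm.mem_support.mpr (hmoves x)

lemma permE_avoids_delta3 : PAvoids (fun i => (permE n t h) i) (delta 3) := by
  rintro ⟨f, hf, hiff⟩
  have e1 : (permE n t h) (f 1) < (permE n t h) (f 0) :=
    (hiff 1 0).mp (by decide)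
  have e2 : (permE n t h) (f 2) < (permE n t h) (f 1) :=
    (hiff 2 1).mp (by decide)
  have m1 : f 0 < f 1 := hf (by decide)
  have m2 : f 1 < f 2 := hf (by decide)
  rw [permE_apply, permE_apply] at e1 e2
  exact Fol_no321 h.1 h.2.1 h.2.2 m1 m2 (f 2).isLt e1 e2

lemma permE_acf : AllCycleFormsAvoid (permE n t h) patt1432 := by
  intro x
  rintro ⟨f, hf, hiff⟩
  obtain ⟨m, hm, hcm⟩ := Cw_surj h.1 h.2.1 h.2.2 x.isLt
  have hx : x = ((permE n t h) ^ m) ⟨0, npos h⟩ := by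
    rw [permE_pow h hm]; exact Fin.ext hcm.symm
  have hw : ∀ i : Fin 4, ((permE n t h) ^ ((f i : ℕ))) x =
      ⟨Cw n t ((m + (f i : ℕ)) % n), Cw_lt h.1 h.2.1 h.2.2 (Nat.mod_lt _ (npos h))⟩ := by
    intro i
    rw [hx, ← Equiv.Perm.mul_apply, ← pow_add,
      pow_eq_pow_mod ((f i : ℕ) + m) (permE_pow_one h), Nat.add_comm (f i : ℕ) m]
    exact permE_pow h (Nat.mod_lt _ (npos h))
  have e1 : Cw n t ((m + (f 0 : ℕ)) % n) < Cw n t ((m + (f 3 : ℕ)) % n) := by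
    have := (hiff 0 3).mp (by decide)
    simpa [hw 0, hw 3, Fin.lt_def] using this
  have e2 : Cw n t ((m + (f 3 : ℕ)) % n) < Cw n t ((m + (f 2 : ℕ)) % n) := by
    have := (hiff 3 2).mp (by decide)
    simpa [hw 3, hw 2, Fin.lt_def] using this
  have e3 : Cw n t ((m + (f 2 : ℕ)) % n) < Cw n t ((m + (f 1 : ℕ)) % n) := by
    have := (hiff 2 1).mp (by decide)
    simpa [hw 2, hw 1, Fin.lt_def] using this
  have m1 : (f 0 : ℕ) < (f 1 : ℕ) := hf (by decide)
  have m2 : (f 1 : ℕ) < (f 2 : ℕ) := hf (by decide)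
  have m3 : (f 2 : ℕ) < (f 3 : ℕ) := hf (by decide)
  have hlt : (f 3 : ℕ) < n := (f 3).isLt
  have hcyc : ((m + (f 0:ℕ))%n < (m + (f 1:ℕ))%n ∧ (m + (f 1:ℕ))%n < (m + (f 2:ℕ))%n ∧ (m + (f 2:ℕ))%n < (m + (f 3:ℕ))%n) ∨
      ((m + (f 3:ℕ))%n < (m + (f 0:ℕ))%n ∧ (m + (f 0:ℕ))%n < (m + (f 1:ℕ))%n ∧ (m + (f 1:ℕ))%n < (m + (f 2:ℕ))%n) ∨
      ((m + (f 2:ℕ))%n < (m + (f 3:ℕ))%n ∧ (m + (f 3:ℕ))%n < (m + (f 0:ℕ))%n ∧ (m + (f 0:ℕ))%n < (m + (f 1:ℕ))%n) ∨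
      ((m + (f 1:ℕ))%n < (m + (f 2:ℕ))%n ∧ (m + (f 2:ℕ))%n < (m + (f 3:ℕ))%n ∧ (m + (f 3:ℕ))%n < (m + (f 0:ℕ))%n) := by
    have d0 := mod_cases (m + (f 0:ℕ)) n (npos h) (by omega)
    have d1 := mod_cases (m + (f 1:ℕ)) n (npos h) (by omega)
    have d2 := mod_cases (m + (f 2:ℕ)) n (npos h) (by omega)
    have d3 := mod_cases (m + (f 3:ℕ)) n (npos h) (by omega)
    omega
  exact Cw_no1432 h.1 h.2.1 h.2.2 (Nat.mod_lt _ (npos h)) (Nat.mod_lt _ (npos h))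
    (Nat.mod_lt _ (npos h)) (Nat.mod_lt _ (npos h)) hcyc e1 e2 e3

lemma permE_mem : permE n t h ∈ AcircJ n 3 (t+1) := by
  refine ⟨⟨permE_isNCycle h, permE_avoids_delta3 h, permE_acf h⟩, ?_⟩
  intro hp
  rw [permE_apply]
  have : Fol n t 0 = t := by unfold Fol; split_ifs <;> omega
  simp [this]

end forward

section converse
variable {n t : ℕ} {c : ℕ → ℕ}
  (hn : 5 ≤ n) (ht : 3 ≤ t)
  (hlt : ∀ k, c k < n)
  (hc0 : c 0 = 0)
  (hc1 : c 1 = t)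
  (hcn : c n = 0)
  (hinj : ∀ a b, a < n → b < n → c a = c b → a = b)
  (hsurj : ∀ v, v < n → ∃ k, k < n ∧ c k = v)
  (H2 : ∀ a b e, 1 ≤ a → a < b → b < e → e < n → c b < c a → c e < c b → False)
  (F2 : ∀ a b d, a < n → b < n → d < n → a ≠ b → a ≠ d → b ≠ d →
        c a < c b → c b < c d → c (d+1) < c (b+1) → c (b+1) < c (a+1) → False)
include hn ht hlt hc0 hc1 hcn hinj hsurj H2 F2

lemma cne : ∀ {a b : ℕ}, a < n → b < n → a ≠ b → c a ≠ c b := by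
  intro a b ha hb hne e
  exact hne (hinj a b ha hb e)

lemma posge2 : ∀ {v k : ℕ}, k < n → c k = v → v ≠ 0 → v ≠ t → 2 ≤ k := by
  intro v k hk hck h0 ht'
  match k with
  | 0 => rw [hc0] at hck; omega
  | 1 => rw [hc1] at hck; omega
  | (m+2) => omega

lemma L1 : ∀ u v ku kv, 1 ≤ u → u < v → v + 1 ≤ t → ku < n → kv < n →
    c ku = u → c kv = v → ku < kv := by
  intro u v ku kv h1 h2 h3 hku hkv hcu hcv
  have hku2 : 2 ≤ ku := posge2 hn ht hlt hc0 hc1 hcn hinj hsurj H2 F2 hku hcu (by omega) (by omega)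
  have hkv2 : 2 ≤ kv := posge2 hn ht hlt hc0 hc1 hcn hinj hsurj H2 F2 hkv hcv (by omega) (by omega)
  by_contra hcon
  push_neg at hcon
  have hne : kv ≠ ku := by intro e; rw [e, hcu] at hcv; omega
  exact H2 1 kv ku (by omega) (by omega) (by omega) hku
    (by rw [hc1, hcv]; omega) (by rw [hcu, hcv]; omega)

lemma L2 : c (n-1) = t-1 := by
  have hzlt := hlt (n-1)
  have hz0 : c (n-1) ≠ 0 := by
    have := cne hn ht hlt hc0 hc1 hcn hinj hsurj H2 F2 (show n-1 < n by omega) (show 0 < n by omega) (by omega)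
    rw [hc0] at this; exact this
  have hzt : c (n-1) ≠ t := by
    have := cne hn ht hlt hc0 hc1 hcn hinj hsurj H2 F2 (show n-1 < n by omega) (show 1 < n by omega) (by omega)
    rw [hc1] at this; exact this
  have htn' : t < n := by rw [← hc1]; exact hlt 1
  rcases lt_trichotomy (c (n-1)) t with hz | hz | hz
  · -- c(n-1) is small; show it is t-1
    by_contra hne
    obtain ⟨k', hk', hck'⟩ := hsurj (t-1) (by omega)
    have := L1 hn ht hlt hc0 hc1 hcn hinj hsurj H2 F2 (c (n-1)) (t-1) (n-1) k'
      (by omega) (by omega) (by omega) (by omega) hk' rfl hck'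
    omega
  · exact absurd hz hzt
  · -- c(n-1) > t : derive False
    exfalso
    -- P4 : predecessors of small values exceed z = c(n-1)
    have P4 : ∀ v kv, 1 ≤ v → v + 1 ≤ t → kv < n → c kv = v → c (n-1) < c (kv-1) := by
      intro v kv h1 h2 hkv hcv
      have hkv2 : 2 ≤ kv := posge2 hn ht hlt hc0 hc1 hcn hinj hsurj H2 F2 hkv hcv (by omega) (by omega)
      have hkvne : kv ≠ n-1 := by intro e; rw [e] at hcv; omega
      by_contra hle
      push_neg at hle
      have hne : c (kv-1) ≠ c (n-1) := cne hn ht hlt hc0 hc1 hcn hinj hsurj H2 F2 (by omega) (by omega) (by omega)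
      have h0lt : c (kv-1) ≠ 0 := by
        have := cne hn ht hlt hc0 hc1 hcn hinj hsurj H2 F2 (show kv-1 < n by omega) (show 0 < n by omega) (by omega)
        rw [hc0] at this; exact this
      have e1 : kv - 1 + 1 = kv := by omega
      have e2 : n - 1 + 1 = n := by omega
      apply F2 0 (kv-1) (n-1) (by omega) (by omega) (by omega) (by omega) (by omega) (by omega)
      · rw [hc0]; omega
      · omega
      · rw [e2, e1, hcn, hcv]; omega
      · rw [e1, hcv, hc1]; omega
    -- position of 1
    obtain ⟨k1, hk1, hck1⟩ := hsurj 1 (by omega)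
    have hp1 := P4 1 k1 (by omega) (by omega) hk1 hck1
    have hk12 : 2 ≤ k1 := posge2 hn ht hlt hc0 hc1 hcn hinj hsurj H2 F2 hk1 hck1 (by omega) (by omega)
    have hk13 : 3 ≤ k1 := by
      rcases Nat.lt_or_ge k1 3 with h | h
      · have e : k1 = 2 := by omega
        rw [e] at hp1
        simp only [show (2:ℕ)-1 = 1 from rfl, hc1] at hp1
        omega
      · exact h
    have hk1n : k1 ≠ n-1 := by intro e; rw [e] at hck1; omega
    -- s = successor of 1
    have hs0 : c (k1+1) ≠ 0 := by
      have := cne hn ht hlt hc0 hc1 hcn hinj hsurj H2 F2 (show k1+1 < n by omega) (show 0 < n by omega) (by omega)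
      rw [hc0] at this; exact this
    have hst : c (k1+1) ≠ t := by
      have := cne hn ht hlt hc0 hc1 hcn hinj hsurj H2 F2 (show k1+1 < n by omega) (show 1 < n by omega) (by omega)
      rw [hc1] at this; exact this
    have hs1 : c (k1+1) ≠ 1 := by
      have := cne hn ht hlt hc0 hc1 hcn hinj hsurj H2 F2 (show k1+1 < n by omega) hk1 (by omega)
      rw [hck1] at this; exact this
    rcases Nat.lt_or_ge (c (k1+1)) t with hsc | hsc
    · -- s is a small value; its predecessor is 1 : contradicts P4
      have := P4 (c (k1+1)) (k1+1) (by omega) (by omega) (by omega) rfl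
      simp only [Nat.add_sub_cancel] at this
      rw [hck1] at this
      omega
    · -- s is big
      have hsbig : t + 1 ≤ c (k1+1) := by omega
      -- c 2 is big
      have hc2big : t + 1 ≤ c 2 := by
        have h20 : c 2 ≠ 0 := by
          have := cne hn ht hlt hc0 hc1 hcn hinj hsurj H2 F2 (show 2 < n by omega) (show 0 < n by omega) (by omega)
          rw [hc0] at this; exact this
        have h2t : c 2 ≠ t := by
          have := cne hn ht hlt hc0 hc1 hcn hinj hsurj H2 F2 (show 2 < n by omega) (show 1 < n by omega) (by omega)
          rw [hc1] at this; exact this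
        rcases Nat.lt_or_ge (c 2) t with h2s | h2s
        · exfalso
          have h21 : c 2 ≠ 1 := by
            have := cne hn ht hlt hc0 hc1 hcn hinj hsurj H2 F2 (show 2 < n by omega) hk1 (by omega)
            rw [hck1] at this; exact this
          have := L1 hn ht hlt hc0 hc1 hcn hinj hsurj H2 F2 1 (c 2) k1 2
            (by omega) (by omega) (by omega) hk1 (by omega) hck1 rfl
          omega
        · omega
      -- position of t-1
      obtain ⟨kt1, hkt1, hckt1⟩ := hsurj (t-1) (by omega)
      have hkt1n : kt1 ≠ n-1 := by intro e; rw [e] at hckt1; omega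
      have hlt1 : k1 < kt1 := L1 hn ht hlt hc0 hc1 hcn hinj hsurj H2 F2 1 (t-1) k1 kt1
        (by omega) (by omega) (by omega) hk1 hkt1 hck1 hckt1
      have hne1 : k1 + 1 ≠ kt1 := by
        intro e; rw [← e] at hckt1; omega
      -- H2 forbids c 2 > c(k1+1)
      have hcs : c 2 < c (k1+1) := by
        by_contra hcon
        push_neg at hcon
        have hne2 : c (k1+1) ≠ c 2 := cne hn ht hlt hc0 hc1 hcn hinj hsurj H2 F2 (by omega) (by omega) (by omega)
        exact H2 2 (k1+1) kt1 (by omega) (by omega) (by omega) (by omega)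
          (by omega) (by rw [hckt1]; omega)
      -- F2 (k1, 1, n-1) : contradiction
      have e2 : n - 1 + 1 = n := by omega
      apply F2 k1 1 (n-1) hk1 (by omega) (by omega) (by omega) (by omega) (by omega)
      · rw [hck1, hc1]; omega
      · rw [hc1]; omega
      · rw [e2, hcn, show (1:ℕ)+1 = 2 from rfl]; omega
      · rw [show (1:ℕ)+1 = 2 from rfl]; omega


set_option maxHeartbeats 1000000 in
lemma converse_word : 2*t ≤ n+1 ∧ ∀ k, k < n → c k = Cw n t k := by
  have CNE := @cne n t c hn ht hlt hc0 hc1 hcn hinj hsurj H2 F2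
  have PG2 := @posge2 n t c hn ht hlt hc0 hc1 hcn hinj hsurj H2 F2
  have HL1 := L1 hn ht hlt hc0 hc1 hcn hinj hsurj H2 F2
  have HZ : c (n-1) = t-1 := L2 hn ht hlt hc0 hc1 hcn hinj hsurj H2 F2
  have htn' : t < n := by rw [← hc1]; exact hlt 1
  have e2 : n - 1 + 1 = n := by omega
  -- values ≠ 0, t away from positions 0, 1
  have NE0 : ∀ k, 0 < k → k < n → c k ≠ 0 := by
    intro k h1 h2
    have := CNE h2 (show 0 < n by omega) (by omega)
    rw [hc0] at this; exact this
  have NET : ∀ k, k < n → k ≠ 1 → c k ≠ t := by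
    intro k h1 h2
    have := CNE h1 (show 1 < n by omega) h2
    rw [hc1] at this; exact this
  -- L3 : predecessors of small values are ≥ t (and ≥ t+1 away from position 2)
  have L3 : ∀ v kv, 1 ≤ v → v + 2 ≤ t → kv < n → c kv = v →
      t ≤ c (kv-1) ∧ (kv ≠ 2 → t+1 ≤ c (kv-1)) := by
    intro v kv h1 h2 hkv hcv
    have hkv2 : 2 ≤ kv := PG2 hkv hcv (by omega) (by omega)
    have hkvn : kv ≠ n-1 := by intro e; rw [e, HZ] at hcv; omega
    have e1 : kv - 1 + 1 = kv := by omega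
    have hp0 : c (kv-1) ≠ 0 := NE0 (kv-1) (by omega) (by omega)
    have hge : t - 1 ≤ c (kv-1) := by
      by_contra hcon
      push_neg at hcon
      apply F2 0 (kv-1) (n-1) (by omega) (by omega) (by omega) (by omega) (by omega) (by omega)
      · rw [hc0]; omega
      · rw [HZ]; omega
      · rw [e2, e1, hcn, hcv]; omega
      · rw [e1, hcv, hc1]; omega
    have hne1 : c (kv-1) ≠ t-1 := by
      have := CNE (show kv-1 < n by omega) (show n-1 < n by omega) (by omega)
      rw [HZ] at this; exact this
    constructor
    · omega
    · intro hne2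
      have := NET (kv-1) (by omega) (by omega)
      omega
  -- L3' : c (n-2) ≥ t+1
  have L3' : t + 1 ≤ c (n-2) := by
    have e3 : n - 2 + 1 = n - 1 := by omega
    have hp0 : c (n-2) ≠ 0 := NE0 (n-2) (by omega) (by omega)
    have hge : t - 1 ≤ c (n-2) := by
      by_contra hcon
      push_neg at hcon
      apply F2 0 (n-2) (n-1) (by omega) (by omega) (by omega) (by omega) (by omega) (by omega)
      · rw [hc0]; omega
      · rw [HZ]; omega
      · rw [e2, e3, hcn, HZ]; omega
      · rw [e3, HZ, hc1]; omega
    have hne1 : c (n-2) ≠ t-1 := by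
      have := CNE (show n-2 < n by omega) (show n-1 < n by omega) (by omega)
      rw [HZ] at this; exact this
    have hne2 := NET (n-2) (by omega) (by omega)
    omega
  -- L4 : big values increase with position
  have L4 : ∀ a b, 1 ≤ a → a < b → b ≤ n-2 → t ≤ c a → t ≤ c b → c a < c b := by
    intro a b h1 h2 h3 h4 h5
    by_contra hcon
    push_neg at hcon
    have hne : c b ≠ c a := CNE (by omega) (by omega) (by omega)
    apply H2 a b (n-1) h1 h2 (by omega) (by omega) (by omega)
    rw [HZ]; omega
  -- L5 : c 2 = 1
  obtain ⟨k1, hk1, hck1⟩ := hsurj 1 (by omega)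
  have hk12 : 2 ≤ k1 := PG2 hk1 hck1 (by omega) (by omega)
  have hk1n : k1 ≠ n-1 := by intro e; rw [e, HZ] at hck1; omega
  have L5 : c 2 = 1 := by
    rcases Nat.eq_or_lt_of_le hk12 with he | hk13
    · rw [← he] at hck1; exact hck1
    exfalso
    have hpred := (L3 1 k1 (by omega) (by omega) hk1 hck1).2 (by omega)
    have hc2big : t + 1 ≤ c 2 := by
      have h20 : c 2 ≠ 0 := NE0 2 (by omega) (by omega)
      have h2t : c 2 ≠ t := NET 2 (by omega) (by omega)
      have h2t1 : c 2 ≠ t-1 := by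
        have := CNE (show 2 < n by omega) (show n-1 < n by omega) (by omega)
        rw [HZ] at this; exact this
      have h21 : c 2 ≠ 1 := by
        have := CNE (show 2 < n by omega) hk1 (by omega)
        rw [hck1] at this; exact this
      rcases Nat.lt_or_ge (c 2) t with h2s | h2s
      · exfalso
        have := HL1 1 (c 2) k1 2 (by omega) (by omega) (by omega) hk1 (by omega) hck1 rfl
        omega
      · omega
    have hk1n2 : k1 + 1 ≤ n - 2 := by
      rcases Nat.lt_or_ge (k1+1) (n-1) with h | h
      · omega
      · exfalso
        have e : k1 = n-2 := by omega
        rw [e] at hck1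
        omega
    have hsbig : t + 1 ≤ c (k1+1) := by
      have hs0 : c (k1+1) ≠ 0 := NE0 (k1+1) (by omega) (by omega)
      have hst : c (k1+1) ≠ t := NET (k1+1) (by omega) (by omega)
      have hst1 : c (k1+1) ≠ t-1 := by
        have := CNE (show k1+1 < n by omega) (show n-1 < n by omega) (by omega)
        rw [HZ] at this; exact this
      rcases Nat.lt_or_ge (c (k1+1)) t with hsc | hsc
      · exfalso
        have := (L3 (c (k1+1)) (k1+1) (by omega) (by omega) (by omega) rfl).1
        simp only [Nat.add_sub_cancel] at this
        rw [hck1] at this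
        omega
      · omega
    have hcs : c 2 < c (k1+1) := L4 2 (k1+1) (by omega) (by omega) (by omega) (by omega) (by omega)
    have e1 : k1 - 1 + 1 = k1 := by omega
    apply F2 k1 1 (k1-1) hk1 (by omega) (by omega) (by omega) (by omega) (by omega)
    · rw [hck1, hc1]; omega
    · rw [hc1]; omega
    · rw [e1, hck1, show (1:ℕ)+1 = 2 from rfl]; omega
    · rw [show (1:ℕ)+1 = 2 from rfl]; omega
  -- L6A : the successor of a small value v ≤ t-2 is big
  have L6A : ∀ v kv, 1 ≤ v → v + 2 ≤ t → kv < n → c kv = v →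
      t + 1 ≤ c (kv+1) ∧ kv + 1 ≤ n - 2 := by
    intro v kv h1 h2 hkv hcv
    have hkv2 : 2 ≤ kv := PG2 hkv hcv (by omega) (by omega)
    have hkvn : kv ≠ n-1 := by intro e; rw [e, HZ] at hcv; omega
    have hb : kv + 1 ≤ n - 2 := by
      rcases Nat.lt_or_ge (kv+1) (n-1) with h | h
      · omega
      · exfalso
        have e : kv = n-2 := by omega
        rw [e] at hcv
        omega
    have hs0 : c (kv+1) ≠ 0 := NE0 (kv+1) (by omega) (by omega)
    have hst : c (kv+1) ≠ t := NET (kv+1) (by omega) (by omega)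
    have hst1 : c (kv+1) ≠ t-1 := by
      have := CNE (show kv+1 < n by omega) (show n-1 < n by omega) (by omega)
      rw [HZ] at this; exact this
    rcases Nat.lt_or_ge (c (kv+1)) t with hsc | hsc
    · exfalso
      have hkv1 : kv + 1 ≠ 2 := by
        intro e
        have : kv = 1 := by omega
        rw [this, hc1] at hcv
        omega
      have := (L3 (c (kv+1)) (kv+1) (by omega) (by omega) (by omega) rfl).2 hkv1
      simp only [Nat.add_sub_cancel] at this
      rw [hcv] at this
      omega
    · exact ⟨by omega, hb⟩
  -- L6B : consecutive small values are exactly two apart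
  have L6B : ∀ v kv k', 1 ≤ v → v + 3 ≤ t → kv < n → c kv = v → k' < n → c k' = v+1 →
      k' = kv + 2 := by
    intro v kv k' h1 h2 hkv hcv hk' hck'
    have hlt1 : kv < k' := HL1 v (v+1) kv k' (by omega) (by omega) (by omega) hkv hk' hcv hck'
    obtain ⟨hsbig, hkvb⟩ := L6A v kv (by omega) (by omega) hkv hcv
    have hne1 : k' ≠ kv + 1 := by
      intro e; rw [e] at hck'; omega
    by_contra hne2
    have hge3 : kv + 3 ≤ k' := by omega
    have hk'n2 : k' ≤ n - 3 := by
      have : k' ≠ n-1 := by intro e; rw [e, HZ] at hck'; omega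
      have : k' ≠ n-2 := by intro e; rw [e] at hck'; omega
      omega
    obtain ⟨hs'big, hk'b⟩ := L6A (v+1) k' (by omega) (by omega) hk' hck'
    -- B' = c(kv+2) is big
    have hB'big : t + 1 ≤ c (kv+2) := by
      have h0 : c (kv+2) ≠ 0 := NE0 (kv+2) (by omega) (by omega)
      have hT : c (kv+2) ≠ t := NET (kv+2) (by omega) (by omega)
      have hT1 : c (kv+2) ≠ t-1 := by
        have := CNE (show kv+2 < n by omega) (show n-1 < n by omega) (by omega)
        rw [HZ] at this; exact this
      rcases Nat.lt_or_ge (c (kv+2)) t with hsc | hsc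
      · exfalso
        set w := c (kv+2) with hw
        have hwv : w ≠ v := by
          have := CNE (show kv+2 < n by omega) hkv (by omega)
          rw [hcv] at this; exact this
        have hwv1 : w ≠ v+1 := by
          have := CNE (show kv+2 < n by omega) hk' (by omega)
          rw [hck'] at this; exact this
        rcases Nat.lt_or_ge w v with hc1' | hc1'
        · have := HL1 w v (kv+2) kv (by omega) (by omega) (by omega) (by omega) hkv rfl hcv
          omega
        · have := HL1 (v+1) w k' (kv+2) (by omega) (by omega) (by omega) hk' (by omega) hck' rfl
          omega
      · omega
    -- the contradiction via F2 (k', kv+1, n-2)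
    have e3 : n - 2 + 1 = n - 1 := by omega
    apply F2 k' (kv+1) (n-2) hk' (by omega) (by omega) (by omega) (by omega) (by omega)
    · rw [hck']; omega
    · exact L4 (kv+1) (n-2) (by omega) (by omega) (by omega) (by omega) (by omega)
    · rw [e3, HZ, show kv+1+1 = kv+2 from rfl]; omega
    · rw [show kv+1+1 = kv+2 from rfl]
      exact L4 (kv+2) (k'+1) (by omega) (by omega) (by omega) (by omega) (by omega)
  -- positions of small values: c (2v) = v
  have POS : ∀ v, 1 ≤ v → v + 2 ≤ t → c (2*v) = v ∧ 2*v < n := by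
    intro v h1 h2
    induction v with
    | zero => omega
    | succ w ih =>
      rcases Nat.eq_or_lt_of_le h1 with he | hlt1
      · constructor
        · rw [← he] at *
          exact L5
        · omega
      · have hw := ih (by omega) (by omega)
        obtain ⟨k', hk', hck'⟩ := hsurj (w+1) (by omega)
        have := L6B w (2*w) k' (by omega) (by omega) (by omega) hw.1 hk' hck'
        constructor
        · rw [show 2*(w+1) = 2*w+2 by ring, ← this]; exact hck'
        · omega
  -- n ≥ 2t-1
  have hn2t : 2*t ≤ n + 1 := by
    obtain ⟨hpos, hlt2⟩ := POS (t-2) (by omega) (by omega)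
    have h1 : 2*(t-2) ≠ n-1 := by intro e; rw [e, HZ] at hpos; omega
    have h2 : 2*(t-2) ≠ n-2 := by intro e; rw [e] at hpos; omega
    omega
  refine ⟨hn2t, ?_⟩
  -- L7 : positions that are odd or ≥ 2t-3 carry big values
  have L7 : ∀ p, 1 ≤ p → p ≤ n-2 → (p % 2 = 1 ∨ 2*t ≤ p + 3) → t ≤ c p := by
    intro p h1 h2 h3
    have h0 : c p ≠ 0 := NE0 p (by omega) (by omega)
    have hT1 : c p ≠ t-1 := by
      have := CNE (show p < n by omega) (show n-1 < n by omega) (by omega)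
      rw [HZ] at this; exact this
    rcases Nat.lt_or_ge (c p) t with hsc | hsc
    · exfalso
      obtain ⟨hpos, hlt2⟩ := POS (c p) (by omega) (by omega)
      have : p = 2 * c p := hinj p (2 * c p) (by omega) (by omega) hpos.symm
      omega
    · omega
  -- increasing lower bounds on odd positions
  have UPodd : ∀ v, v + 2 ≤ t → t + v ≤ c (2*v+1) := by
    intro v
    induction v with
    | zero => intro _; rw [show 2*0+1 = 1 from rfl, hc1]; omega
    | succ w ih =>
      intro h2
      have hw := ih (by omega)
      have hstep := L4 (2*w+1) (2*(w+1)+1) (by omega) (by omega) (by omega)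
        (by omega) (L7 (2*(w+1)+1) (by omega) (by omega) (by omega))
      omega
  -- the run c p = p + 1 for 2t-3 ≤ p ≤ n-2
  have UPrun : ∀ p, 2*t ≤ p + 3 → p ≤ n-2 → p + 1 ≤ c p := by
    have base : 2*t - 2 ≤ c (2*t-3) := by
      have := UPodd (t-2) (by omega)
      rw [show 2*(t-2)+1 = 2*t-3 by omega] at this
      omega
    intro p hp1 hp2
    induction p with
    | zero => omega
    | succ q ih =>
      rcases Nat.lt_or_ge (q+3) (2*t) with h | h
      · have e : q + 1 = 2*t - 3 := by omega
        rw [e]; omega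
      · have hq := ih (by omega) (by omega)
        have hstep := L4 q (q+1) (by omega) (by omega) (by omega)
          (L7 q (by omega) (by omega) (by omega)) (L7 (q+1) (by omega) (by omega) (by omega))
        omega
  have DOWNaux : ∀ m p, 2*t ≤ p + 3 → p + m = n - 2 → c p + m ≤ n - 1 := by
    intro m
    induction m with
    | zero =>
      intro p h1 h2
      have := hlt p
      omega
    | succ q ih =>
      intro p h1 h2
      have hstep := L4 p (p+1) (by omega) (by omega) (by omega)
        (L7 p (by omega) (by omega) (by omega)) (L7 (p+1) (by omega) (by omega) (by omega))
      have := ih (p+1) (by omega) (by omega)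
      omega
  have RUN : ∀ p, 2*t ≤ p + 3 → p ≤ n-2 → c p = p + 1 := by
    intro p h1 h2
    have hup := UPrun p h1 h2
    have hdn := DOWNaux (n-2-p) p h1 (by omega)
    omega
  -- c (2v+1) = t + v for v ≤ t-2
  have ODDaux : ∀ m v, v + m = t - 2 → c (2*v+1) ≤ t + v := by
    intro m
    induction m with
    | zero =>
      intro v h1
      have := RUN (2*t-3) (by omega) (by omega)
      rw [show 2*v+1 = 2*t-3 by omega]
      omega
    | succ q ih =>
      intro v h1
      have hstep := L4 (2*v+1) (2*v+3) (by omega) (by omega) (by omega)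
        (L7 (2*v+1) (by omega) (by omega) (by omega)) (L7 (2*v+3) (by omega) (by omega) (by omega))
      have := ih (v+1) (by omega)
      rw [show 2*(v+1)+1 = 2*v+3 by omega] at this
      omega
  have ODD : ∀ v, v + 2 ≤ t → c (2*v+1) = t + v := by
    intro v h1
    have h2 := UPodd v h1
    have h3 := ODDaux (t-2-v) v (by omega)
    omega
  -- conclusion
  intro k hk
  have hcw : (k + 3 ≤ 2*t ∧ k % 2 = 0 ∧ Cw n t k = k/2) ∨
      (k + 3 ≤ 2*t ∧ k % 2 = 1 ∧ Cw n t k = t + k/2) ∨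
      (2*t ≤ k + 2 ∧ k + 2 ≤ n ∧ Cw n t k = k+1) ∨
      (k = n-1 ∧ 2*t ≤ k+2 ∧ Cw n t k = t-1) := by
    unfold Cw; split_ifs <;> omega
  rcases hcw with ⟨h1,h2,h3⟩|⟨h1,h2,h3⟩|⟨h1,h2,h3⟩|⟨h1,h2,h3⟩
  · rcases Nat.eq_zero_or_pos k with he | hpos
    · subst he
      have h4 : Cw n t 0 = 0 := by omega
      rw [hc0, h4]
    · have := (POS (k/2) (by omega) (by omega)).1
      rw [show 2*(k/2) = k by omega] at this
      omega
  · have := ODD (k/2) (by omega)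
    rw [show 2*(k/2)+1 = k by omega] at this
    omega
  · have := RUN k (by omega) (by omega)
    omega
  · subst h1
    rw [HZ, h3]

end converse

def pick4 {n : ℕ} (p0 p1 p2 p3 : Fin n) : Fin 4 → Fin n :=
  fun i => if (i:ℕ) = 0 then p0 else if (i:ℕ) = 1 then p1 else if (i:ℕ) = 2 then p2 else p3

def pick3 {n : ℕ} (p0 p1 p2 : Fin n) : Fin 3 → Fin n :=
  fun i => if (i:ℕ) = 0 then p0 else if (i:ℕ) = 1 then p1 else p2

lemma buildContains4 {n : ℕ} (w : Fin n → Fin n) (p0 p1 p2 p3 : Fin n)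
    (h01 : p0 < p1) (h12 : p1 < p2) (h23 : p2 < p3)
    (hv1 : w p0 < w p3) (hv2 : w p3 < w p2) (hv3 : w p2 < w p1) :
    ∃ f : Fin 4 → Fin n, StrictMono f ∧ ∀ a b : Fin 4, patt1432 a < patt1432 b ↔ w (f a) < w (f b) := by
  have hv4 : w p0 < w p2 := lt_trans hv1 hv2
  have hv5 : w p0 < w p1 := lt_trans hv4 hv3
  have hv6 : w p3 < w p1 := lt_trans hv2 hv3
  refine ⟨pick4 p0 p1 p2 p3, ?_, ?_⟩
  · intro i j hij
    fin_cases i <;> fin_cases j <;>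
      first
        | exact absurd hij (by decide)
        | exact h01 | exact h12 | exact h23
        | exact lt_trans h01 h12 | exact lt_trans h12 h23
        | exact lt_trans (lt_trans h01 h12) h23
  · intro a b
    fin_cases a <;> fin_cases b <;>
      first
        | exact iff_of_true (by decide) hv1
        | exact iff_of_true (by decide) hv2
        | exact iff_of_true (by decide) hv3
        | exact iff_of_true (by decide) hv4
        | exact iff_of_true (by decide) hv5
        | exact iff_of_true (by decide) hv6
        | exact iff_of_false (by decide) (lt_asymm hv1)
        | exact iff_of_false (by decide) (lt_asymm hv2)
        | exact iff_of_false (by decide) (lt_asymm hv3)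
        | exact iff_of_false (by decide) (lt_asymm hv4)
        | exact iff_of_false (by decide) (lt_asymm hv5)
        | exact iff_of_false (by decide) (lt_asymm hv6)
        | exact iff_of_false (by decide) (lt_irrefl _)

lemma buildContains3 {n : ℕ} (w : Fin n → Fin n) (q0 q1 q2 : Fin n)
    (h01 : q0 < q1) (h12 : q1 < q2)
    (hv1 : w q1 < w q0) (hv2 : w q2 < w q1) :
    ∃ f : Fin 3 → Fin n, StrictMono f ∧ ∀ a b : Fin 3, delta 3 a < delta 3 b ↔ w (f a) < w (f b) := by
  have hv3 : w q2 < w q0 := lt_trans hv2 hv1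
  refine ⟨pick3 q0 q1 q2, ?_, ?_⟩
  · intro i j hij
    fin_cases i <;> fin_cases j <;>
      first
        | exact absurd hij (by decide)
        | exact h01 | exact h12 | exact lt_trans h01 h12
  · intro a b
    fin_cases a <;> fin_cases b <;>
      first
        | exact iff_of_true (by decide) hv1
        | exact iff_of_true (by decide) hv2
        | exact iff_of_true (by decide) hv3
        | exact iff_of_false (by decide) (lt_asymm hv1)
        | exact iff_of_false (by decide) (lt_asymm hv2)
        | exact iff_of_false (by decide) (lt_asymm hv3)
        | exact iff_of_false (by decide) (lt_irrefl _)


/-- The standard cycle word of a permutation, as a function on `ℕ`. -/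
def cyc {n : ℕ} (π : Equiv.Perm (Fin n)) (hp : 0 < n) (k : ℕ) : ℕ :=
  ((π ^ k) (⟨0, hp⟩ : Fin n) : Fin n).val

lemma acircJ_char {n t : ℕ} (hn : 5 ≤ n) (ht : 3 ≤ t) {π : Equiv.Perm (Fin n)}
    (hmem : π ∈ AcircJ n 3 (t+1)) :
    ∃ hb : 2*t ≤ n+1, π = permE n t ⟨ht, hb, hn⟩ := by
  obtain ⟨⟨hcyc, havoid, hacf⟩, hj0⟩ := hmem
  have hp : 0 < n := by omega
  set c : ℕ → ℕ := cyc π hp with hcdef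
  have hlt : ∀ k, c k < n := fun k => Fin.is_lt _
  have hc0 : c 0 = 0 := by simp [hcdef, cyc]
  have hc1 : c 1 = t := by
    have := hj0 hp
    simp only [hcdef, cyc, pow_one]
    omega
  have hord : orderOf π = n := by
    rw [hcyc.1.orderOf, hcyc.2, Finset.card_univ, Fintype.card_fin]
  have hone : π ^ n = 1 := orderOf_dvd_iff_pow_eq_one.mp (by rw [hord])
  have hcn : c n = 0 := by simp [hcdef, cyc, hone]
  have hsucc : ∀ k, π ⟨c k, hlt k⟩ = ⟨c (k+1), hlt (k+1)⟩ := by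
    intro k
    have h1 : (π ^ (k+1)) (⟨0, hp⟩ : Fin n) = π ((π ^ k) (⟨0, hp⟩ : Fin n)) := by
      rw [pow_succ']; rfl
    exact h1.symm
  have hinj : ∀ a b, a < n → b < n → c a = c b → a = b := by
    have key : ∀ a b, a < b → b < n → c a ≠ c b := by
      intro a b hab hb he
      have heq : (π ^ a) (⟨0, hp⟩ : Fin n) = (π ^ b) (⟨0, hp⟩ : Fin n) := Fin.ext he
      have hsplit : π ^ b = π ^ (b-a) * π ^ a := by
        rw [← pow_add]; congr 1; omega
      have hfix : (π ^ (b-a)) ((π ^ a) (⟨0, hp⟩ : Fin n)) = (π ^ a) (⟨0, hp⟩ : Fin n) := by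
        rw [← Equiv.Perm.mul_apply, ← hsplit, ← heq]
      have hne : π ((π ^ a) (⟨0, hp⟩ : Fin n)) ≠ (π ^ a) (⟨0, hp⟩ : Fin n) := by
        intro e
        have hm : (π ^ a) (⟨0, hp⟩ : Fin n) ∈ π.support := by
          rw [hcyc.2]; exact Finset.mem_univ _
        exact (Equiv.Perm.mem_support.mp hm) e
      have hpow1 : π ^ (b-a) = 1 := hcyc.1.pow_eq_one_iff.mpr ⟨_, hne, hfix⟩
      have hdvd : orderOf π ∣ (b-a) := orderOf_dvd_of_pow_eq_one hpow1
      rw [hord] at hdvd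
      have := Nat.le_of_dvd (by omega) hdvd
      omega
    intro a b ha hb he
    rcases lt_trichotomy a b with h|h|h
    · exact absurd he (key a b h hb)
    · exact h
    · exact absurd he.symm (key b a h ha)
  have hsurj : ∀ v, v < n → ∃ k, k < n ∧ c k = v := by
    intro v hv
    have hgsurj : Function.Surjective (fun k : Fin n => (π ^ (k:ℕ)) (⟨0, hp⟩ : Fin n)) := by
      apply Finite.injective_iff_surjective.mp
      intro a b he
      exact Fin.ext (hinj a b a.isLt b.isLt (congrArg Fin.val he))
    obtain ⟨k, hk⟩ := hgsurj ⟨v, hv⟩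
    exact ⟨k, k.isLt, congrArg Fin.val hk⟩
  have H2 : ∀ a b e, 1 ≤ a → a < b → b < e → e < n → c b < c a → c e < c b → False := by
    intro a b e h1 h2 h3 h4 h5 h6
    apply hacf ⟨0, hp⟩
    have h7 : c e ≠ 0 := by
      intro e0
      have := hinj e 0 h4 (by omega) (by rw [e0, hc0])
      omega
    exact buildContains4 (fun i : Fin n => (π ^ (i : ℕ)) (⟨0, hp⟩ : Fin n)) ⟨0,hp⟩ ⟨a, by omega⟩ ⟨b, by omega⟩ ⟨e, h4⟩
      (Fin.mk_lt_mk.mpr (by omega)) (Fin.mk_lt_mk.mpr h2) (Fin.mk_lt_mk.mpr h3)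
      (Fin.lt_def.mpr (show c 0 < c e by omega))
      (Fin.lt_def.mpr (show c e < c b from h6))
      (Fin.lt_def.mpr (show c b < c a from h5))
  have F2 : ∀ a b d, a < n → b < n → d < n → a ≠ b → a ≠ d → b ≠ d →
      c a < c b → c b < c d → c (d+1) < c (b+1) → c (b+1) < c (a+1) → False := by
    intro a b d ha hb hd hab had hbd h1 h2 h3 h4
    apply havoid
    refine buildContains3 (fun i : Fin n => π i) ⟨c a, hlt a⟩ ⟨c b, hlt b⟩ ⟨c d, hlt d⟩
      (Fin.mk_lt_mk.mpr h1) (Fin.mk_lt_mk.mpr h2) ?_ ?_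
    · show π ⟨c b, hlt b⟩ < π ⟨c a, hlt a⟩
      rw [hsucc a, hsucc b]
      exact Fin.mk_lt_mk.mpr h4
    · show π ⟨c d, hlt d⟩ < π ⟨c b, hlt b⟩
      rw [hsucc d, hsucc b]
      exact Fin.mk_lt_mk.mpr h3
  obtain ⟨hb, hword⟩ := converse_word hn ht hlt hc0 hc1 hcn hinj hsurj H2 F2
  refine ⟨hb, ?_⟩
  apply Equiv.ext
  intro x
  obtain ⟨k, hk, hck⟩ := hsurj x.val x.isLt
  have hx : x = ⟨c k, hlt k⟩ := Fin.ext hck.symm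
  rw [hx, hsucc k, permE_apply]
  apply Fin.ext
  show c (k+1) = Fol n t (c k)
  rcases Nat.lt_or_ge (k+1) n with hk1 | hk1
  · rw [hword k hk, hword (k+1) hk1, Fol_Cw ht hb hn hk1]
  · have e : k = n-1 := by omega
    subst e
    rw [hword (n-1) hk, Fol_Cw_last ht hb hn, show n-1+1 = n by omega, hcn]

/-- Lemma 2.7: for `n ≥ 5`, `∑_{j=4}^n a_{n,j}^∘(δ_3;1432) = ⌊(n-3)/2⌋`. -/
theorem stmt9 (n : ℕ) (hn : 5 ≤ n) :
    ∑ j ∈ Finset.Icc 4 n, acircJ n 3 j = (n - 3) / 2 := by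
  have hval : ∀ j ∈ Finset.Icc 4 n, acircJ n 3 j = if 2*j ≤ n+3 then 1 else 0 := by
    intro j hj
    rw [Finset.mem_Icc] at hj
    by_cases hb : 2*j ≤ n+3
    · have hE : 3 ≤ j-1 ∧ 2*(j-1) ≤ n+1 ∧ 5 ≤ n := ⟨by omega, by omega, hn⟩
      have hset : AcircJ n 3 j = {permE n (j-1) hE} := by
        ext π
        simp only [Set.mem_singleton_iff]
        constructor
        · intro hmem
          have hmem' : π ∈ AcircJ n 3 ((j-1)+1) := by
            rw [show j-1+1 = j by omega]; exact hmem
          obtain ⟨hb', he⟩ := acircJ_char hn (by omega) hmem'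
          exact he
        · rintro rfl
          have := permE_mem hE
          rw [show j-1+1 = j by omega] at this
          exact this
      rw [if_pos hb, acircJ, hset, Set.ncard_singleton]
    · have hset : AcircJ n 3 j = ∅ := by
        rw [Set.eq_empty_iff_forall_notMem]
        intro π hmem
        have hmem' : π ∈ AcircJ n 3 ((j-1)+1) := by
          rw [show j-1+1 = j by omega]; exact hmem
        obtain ⟨hb', _⟩ := acircJ_char hn (by omega) hmem'
        omega
      rw [if_neg hb, acircJ, hset, Set.ncard_empty]
  rw [Finset.sum_congr rfl hval]
  rw [← Finset.card_filter]
  have hfe : (Finset.Icc 4 n).filter (fun j => 2*j ≤ n+3) = Finset.Icc 4 ((n+3)/2) := by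
    ext a
    simp only [Finset.mem_filter, Finset.mem_Icc]
    omega
  rw [hfe, Nat.card_Icc]
  omega
end

section
/- Let n ≥ 5 and 4 ≤ j ≤ n. If π ∈ S_n is a cyclic permutation whose one-line notation avoids δ_3 = 321, all of whose cycle forms avoid 1432, and whose standard cycle form begins (1, j, …), then necessarily 2j − 3 ≤ n and C(π) = (1, j, 2, j+1, 3, j+2, …, j−2, 2j−3, 2j−2, 2j−1, …, n, j−1); conversely, for every j with 4 ≤ j ≤ n and 2j − 3 ≤ n, this cycle form defines such a permutation. -/
/-- The word (in 1-indexed letter values, 0-indexed positions)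
`1, j, 2, j+1, 3, j+2, …, j-2, 2j-3, 2j-2, 2j-1, …, n, j-1`. -/
def word10 (n j : ℕ) (i : ℕ) : ℕ :=
  if i = n - 1 then j - 1
  else if i < 2 * j - 4 then (if i % 2 = 0 then i / 2 + 1 else j + i / 2)
  else i + 2

set_option linter.unusedSectionVars false
set_option linter.unreachableTactic false
set_option linter.unusedTactic false
set_option linter.unnecessarySeqFocus false
set_option maxHeartbeats 1000000

def tbl (j p : ℕ) : ℕ :=
  if p % 2 = 0 ∧ p ≤ 2*j-6 then p/2 else if p ≤ 2*j-5 then j-1+p/2 else p+1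




namespace Stmt10Aux


/-- the target cycle word, 0-indexed values. -/
def Wd (n j p : ℕ) : ℕ :=
  if p = n-1 then j-2 else if p < 2*j-4 then (if p % 2 = 0 then p/2 else j-1+p/2) else p+1

/-- inverse of `Wd`. -/
def Vd (n j v : ℕ) : ℕ :=
  if v ≤ j-3 then 2*v else if v = j-2 then n-1 else if v ≤ 2*j-4 then 2*v+3-2*j else v-1

/-- one-line notation of the target permutation, 0-indexed. -/
def OLd (n j x : ℕ) : ℕ :=
  if x ≤ j-3 then j-1+x else if x = j-2 then 0 else if x ≤ 2*j-5 then x+2-j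
  else if x = n-1 then j-2 else x+1

section NatLemmas
variable {n j : ℕ} (hn : 5 ≤ n) (hj : 4 ≤ j) (h2j : 2*j-3 ≤ n)
include hn hj h2j

lemma Wd_lt : ∀ p, p < n → Wd n j p < n := by
  intro p hp; unfold Wd; split_ifs <;> first | omega | (exfalso; tauto)

lemma VWd : ∀ p, p < n → Vd n j (Wd n j p) = p := by
  intro p hp; unfold Wd Vd; split_ifs <;> first | omega | (exfalso; tauto)

lemma WVd : ∀ v, v < n → Vd n j v < n ∧ Wd n j (Vd n j v) = v := by
  intro v hv; unfold Wd Vd; split_ifs <;> first | omega | (exfalso; tauto)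

lemma Wd0 : Wd n j 0 = 0 := by unfold Wd; split_ifs <;> first | omega | (exfalso; tauto)

lemma Wd1 : Wd n j 1 = j-1 := by unfold Wd; split_ifs <;> first | omega | (exfalso; tauto)

lemma K1 : ∀ p q, p < q → q < n → Wd n j p ≤ j-2 → Wd n j q ≤ j-2 → Wd n j p < Wd n j q := by
  intro p q h1 h2 h3 h4; unfold Wd at *; split_ifs at * <;> first | omega | (exfalso; tauto)

lemma K2 : ∀ p q, p < q → q < n → j-1 ≤ Wd n j p → j-1 ≤ Wd n j q → Wd n j p < Wd n j q := by
  intro p q h1 h2 h3 h4; unfold Wd at *; split_ifs at * <;> first | omega | (exfalso; tauto)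

lemma OLd_lt : ∀ x, x < n → OLd n j x < n := by
  intro x hx; unfold OLd; split_ifs <;> first | omega | (exfalso; tauto)

lemma OLd_ne : ∀ x, x < n → OLd n j x ≠ x := by
  intro x hx; unfold OLd; split_ifs <;> first | omega | (exfalso; tauto)

lemma OLd_inj : ∀ x, x < n → ∀ y, y < n → OLd n j x = OLd n j y → x = y := by
  intro x hx y hy h; unfold OLd at h; split_ifs at h <;> first | omega | (exfalso; tauto)

lemma OK1 : ∀ x y, x < y → y < n → OLd n j x ≤ j-2 → OLd n j y ≤ j-2 →
    OLd n j x < OLd n j y := by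
  intro x y h1 h2 h3 h4; unfold OLd at *; split_ifs at * <;> first | omega | (exfalso; tauto)

lemma OK2 : ∀ x y, x < y → y < n → j-1 ≤ OLd n j x → j-1 ≤ OLd n j y →
    OLd n j x < OLd n j y := by
  intro x y h1 h2 h3 h4; unfold OLd at *; split_ifs at * <;> first | omega | (exfalso; tauto)

lemma Wstep : ∀ p, p+1 < n → OLd n j (Wd n j p) = Wd n j (p+1) := by
  intro p hp; unfold Wd OLd; split_ifs <;> first | omega | (exfalso; tauto)

lemma Wwrap : OLd n j (Wd n j (n-1)) = 0 := by
  unfold Wd OLd; split_ifs <;> first | omega | (exfalso; tauto)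

lemma Wd_word10 : ∀ p, p < n → Wd n j p + 1 = word10 n j p := by
  intro p hp; unfold Wd word10; split_ifs <;> first | omega | (exfalso; tauto)

lemma tbl_word10 : ∀ p, p < n →
    (if p = n-1 then j-2 else tbl j p) + 1 = word10 n j p := by
  intro p hp; unfold tbl word10; split_ifs <;> first | omega | (exfalso; tauto)

end NatLemmas
end Stmt10Aux



namespace Fwd

variable {n j : ℕ} {c g : ℕ → ℕ}
variable (hn : 5 ≤ n) (hj : 4 ≤ j) (hjn : j ≤ n)
  (hcn : ∀ k, k < n → c k < n)
  (hper : ∀ k, c (k + n) = c k)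
  (hinj : ∀ a, a < n → ∀ b, b < n → c a = c b → a = b)
  (hsurj : ∀ v, v < n → ∃ k, k < n ∧ c k = v)
  (hc0 : c 0 = 0) (hc1 : c 1 = j - 1)
  (hgc : ∀ k, g (c k) = c (k + 1))
  (hgn : ∀ x, x < n → g x < n)
  (hginj : ∀ a, a < n → ∀ b, b < n → g a = g b → a = b)
  (hgfix : ∀ x, x < n → g x ≠ x)
  (h321 : ∀ x y u, x < y → y < u → u < n → g u < g y → g y < g x → False)
  (h1432 : ∀ p1 p2 p3 p4, p1 < p2 → p2 < p3 → p3 < p4 → p4 < n →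
      c p1 < c p4 → c p4 < c p3 → c p3 < c p2 → False)
  (h2143 : ∀ p1 p2 p3 p4, p1 < p2 → p2 < p3 → p3 < p4 → p4 < n →
      c p2 < c p1 → c p1 < c p4 → c p4 < c p3 → False)

include hn hj hjn hcn hper hinj hsurj hc0 hc1 hgc hgn hginj hgfix h321 h1432 h2143

/-- small values appear in increasing order along the cycle word. -/
lemma smallsinc : ∀ p q, p < q → q < n → c p ≤ j-2 → c q ≤ j-2 → c p < c q := by
  intro p q hpq hq hp2 hq2
  have hqz : c q ≠ 0 := by
    intro h; have := hinj q hq 0 (by omega) (by rw [h, hc0]); omega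
  rcases Nat.eq_zero_or_pos p with rfl|hp0
  · rw [hc0]; omega
  · have hp1 : p ≠ 1 := by intro h; rw [h, hc1] at hp2; omega
    by_contra hcon
    have hne : c p ≠ c q := by
      intro h; have := hinj p (by omega) q hq h; omega
    exact h1432 0 1 p q (by omega) (by omega) hpq hq (by rw [hc0]; omega)
      (by omega) (by rw [hc1]; omega)

/-- positions (in one-line notation) of small values increase with the value. -/
lemma Binc : ∀ x y, x < y → y < n → g x ≤ j-2 → g y ≤ j-2 → g x < g y := by
  intro x y hxy hy hx2 hy2
  have hg0 : g 0 = j - 1 := by have := hgc 0; rw [hc0, hc1] at this; exact this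
  have hx0 : x ≠ 0 := by intro h; rw [h, hg0] at hx2; omega
  by_contra hcon
  have hne : g x ≠ g y := by
    intro h; have := hginj x (by omega) y hy h; omega
  exact h321 0 x y (by omega) hxy hy (by omega) (by rw [hg0]; omega)

/-- the last letter of the cycle word is small. -/
lemma lastsmall : c (n-1) ≤ j-2 := by
  by_contra hbig
  push_neg at hbig
  -- z := c (n-1) ≥ j-1, in fact ≥ j
  have hzn1 : c (n-1) ≠ j - 1 := by
    intro h; have := hinj (n-1) (by omega) 1 (by omega) (by rw [h, hc1]); omega
  have hzj : j ≤ c (n-1) := by omega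
  -- Step: c (n-1) = n-1
  have hznn : c (n-1) = n - 1 := by
    by_contra hne
    have hzlt : c (n-1) ≤ n - 2 := by have := hcn (n-1) (by omega); omega
    -- position of value 1
    obtain ⟨p1, hp1n, hp1⟩ := hsurj 1 (by omega)
    have hp10 : p1 ≠ 0 := by intro h; rw [h, hc0] at hp1; omega
    have hp11 : p1 ≠ 1 := by intro h; rw [h, hc1] at hp1; omega
    have hp1last : p1 ≠ n-1 := by intro h; rw [h] at hp1; omega
    -- position of value n-1
    obtain ⟨e, hen, he⟩ := hsurj (n-1) (by omega)
    have he0 : e ≠ 0 := by intro h; rw [h, hc0] at he; omega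
    have helast : e ≠ n-1 := by intro h; rw [h] at he; omega
    have hep1 : e ≠ p1 := by intro h; rw [h, hp1] at he; omega
    -- e < p1
    have heplt : e < p1 := by
      by_contra hcon
      have : p1 < e := by omega
      exact h2143 1 p1 e (n-1) (by omega) this (by omega) (by omega)
        (by rw [hp1, hc1]; omega) (by rw [hc1]; omega) (by rw [he]; omega)
    -- e = p1 - 1
    have hee : e = p1 - 1 := by
      by_contra hcon
      have h1 : e + 1 < p1 := by omega
      have hv0 : c (e+1) ≠ 0 := by
        intro h; have := hinj (e+1) (by omega) 0 (by omega) (by rw [h, hc0]); omega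
      have hv1 : c (e+1) ≠ 1 := by
        intro h; have := hinj (e+1) (by omega) p1 hp1n (by rw [h, hp1]); omega
      have hvne : c (e+1) ≠ c e := by
        intro h; have := hinj (e+1) (by omega) e (by omega) h; omega
      have hvlt : c (e+1) < n := hcn (e+1) (by omega)
      exact h1432 0 e (e+1) p1 (by omega) (by omega) h1 hp1n
        (by rw [hc0, hp1]; omega) (by rw [hp1]; omega) (by rw [he]; omega)
    -- g (n-1) = 1
    have hgn1 : g (n-1) = 1 := by
      have := hgc e
      rw [he] at this
      rw [this]
      have : e + 1 = p1 := by omega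
      rw [this, hp1]
    -- position of value 2
    obtain ⟨r, hrn, hr⟩ := hsurj 2 (by omega)
    have hr0 : r ≠ 0 := by intro h; rw [h, hc0] at hr; omega
    have hgy : g (c (r-1)) = 2 := by
      have := hgc (r-1)
      have hr1 : r - 1 + 1 = r := by omega
      rw [hr1, hr] at this; exact this
    have hyn : c (r-1) < n := hcn (r-1) (by omega)
    have hyne : c (r-1) ≠ n-1 := by
      intro h; rw [h, hgn1] at hgy; omega
    exact absurd (Binc hn hj hjn hcn hper hinj hsurj hc0 hc1 hgc hgn hginj hgfix
      h321 h1432 h2143 (c (r-1)) (n-1) (by omega) (by omega) (by rw [hgy]; omega)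
      (by rw [hgn1]; omega)) (by rw [hgy, hgn1]; omega)
  -- downward induction: c k = k for all 1 ≤ k ≤ n-1
  have main : ∀ d, d ≤ n-2 → ∀ k, n-1-d ≤ k → k < n → c k = k := by
    intro d
    induction d with
    | zero => intro _ k hk1 hk2; have : k = n-1 := by omega
              rw [this, hznn]
    | succ d ih =>
      intro hd k hk1 hk2
      rcases Nat.lt_or_ge k (n-1-d) with hlt|hge
      · -- k = n-2-d =: m'
        have hkm : k = n-2-d := by omega
        have hk1n : k + 1 < n := by omega
        -- u := c k ≤ k
        have hu_le : c k ≤ k := by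
          by_contra hcon
          have hukn : c k < n := hcn k (by omega)
          have : c (c k) = c k := ih (by omega) (c k) (by omega) (by omega)
          have := hinj k (by omega) (c k) (by omega) this.symm
          omega
        rcases Nat.eq_or_lt_of_le hu_le with heq|hlt2
        · exact heq
        · exfalso
          -- g (c k) = k+1
          have hgu : g (c k) = k + 1 := by
            have := hgc k
            rw [this]
            exact ih (by omega) (k+1) (by omega) (by omega)
          -- g (n-1) = 0
          have hgl : g (n-1) = 0 := by
            have := hgc (n-1)
            rw [hznn] at this
            have h2 : n - 1 + 1 = 0 + n := by omega
            rw [h2, hper, hc0] at this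
            exact this
          -- g k bounds
          have hgk0 : g k ≠ 0 := by
            intro h
            have := hginj k (by omega) (n-1) (by omega) (by rw [h, hgl])
            omega
          have hgkk : g k ≤ k := by
            by_contra hcon2
            have hwn : g k < n := hgn k (by omega)
            -- w := g k ≥ k+1
            rcases Nat.eq_or_lt_of_le (by omega : k + 1 ≤ g k) with heq2|hlt3
            · -- w = k+1 : g k = k+1 = g (c k), so k = c k, contra
              have := hginj k (by omega) (c k) (by omega) (by rw [hgu, ← heq2])
              omega
            · -- w ≥ k+2 : c (w-1) = w-1, g(w-1) = c w = w
              have hw1 : c (g k - 1) = g k - 1 := ih (by omega) (g k - 1) (by omega) (by omega)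
              have hw2 : c (g k) = g k := ih (by omega) (g k) (by omega) (by omega)
              have : g (g k - 1) = g k := by
                have := hgc (g k - 1)
                rw [hw1] at this
                have h3 : g k - 1 + 1 = g k := by omega
                rw [h3, hw2] at this
                exact this
              have := hginj k (by omega) (g k - 1) (by omega) (by rw [this])
              omega
          exact h321 (c k) k (n-1) hlt2 (by omega) (by omega)
            (by rw [hgl]; omega) (by rw [hgu]; omega)
      · exact ih (by omega) k hge hk2
  have := main (n-2) (le_refl _) 1 (by omega) (by omega)
  rw [hc1] at this
  omega

/-- the last letter of the cycle word is j-2. -/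
lemma lastval : c (n-1) = j-2 := by
  have hs := lastsmall hn hj hjn hcn hper hinj hsurj hc0 hc1 hgc hgn hginj hgfix h321 h1432 h2143
  obtain ⟨q, hqn, hq⟩ := hsurj (j-2) (by omega)
  rcases Nat.lt_or_ge q (n-1) with hlt|hge
  · exfalso
    have := smallsinc hn hj hjn hcn hper hinj hsurj hc0 hc1 hgc hgn hginj hgfix h321 h1432 h2143
      q (n-1) hlt (by omega) (by omega) hs
    omega
  · have : q = n-1 := by omega
    rw [← this, hq]

/-- big values appear in increasing order along the cycle word. -/
lemma bigsinc : ∀ p q, p < q → q < n → j-1 ≤ c p → j-1 ≤ c q → c p < c q := by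
  intro p q hpq hq hp2 hq2
  have hlast := lastval hn hj hjn hcn hper hinj hsurj hc0 hc1 hgc hgn hginj hgfix h321 h1432 h2143
  have hq1 : q ≠ n-1 := by intro h; rw [h, hlast] at hq2; omega
  have hp0 : p ≠ 0 := by intro h; rw [h, hc0] at hp2; omega
  by_contra hcon
  have hne : c p ≠ c q := by
    intro h; have := hinj p (by omega) q hq h; omega
  exact h1432 0 p q (n-1) (by omega) hpq (by omega) (by omega)
    (by rw [hc0]; omega) (by rw [hlast]; omega) (by omega)

/-- one-line values on [0, j-3] satisfy g v ≥ j-1+v. -/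
lemma olinc : ∀ v, v ≤ j-3 → j-1+v ≤ g v := by
  have hlast := lastval hn hj hjn hcn hper hinj hsurj hc0 hc1 hgc hgn hginj hgfix h321 h1432 h2143
  have hg0 : g 0 = j - 1 := by have := hgc 0; rw [hc0, hc1] at this; exact this
  have hgj2 : g (j-2) = 0 := by
    have := hgc (n-1)
    rw [hlast] at this
    have h2 : n - 1 + 1 = 0 + n := by omega
    rw [h2, hper, hc0] at this
    exact this
  intro v
  induction v with
  | zero => intro _; omega
  | succ v ih =>
    intro hv
    have hiv := ih (by omega)
    by_contra hcon
    push_neg at hcon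
    have h1 : g (v+1) ≠ g v := by
      intro h; have := hginj (v+1) (by omega) v (by omega) h; omega
    have h2 : g (v+1) < g v := by omega
    have h3 : g (v+1) ≠ 0 := by
      intro h
      have := hginj (v+1) (by omega) (j-2) (by omega) (by rw [h, hgj2])
      omega
    exact h321 v (v+1) (j-2) (by omega) (by omega) (by omega) (by rw [hgj2]; omega) h2


/-- the cycle word agrees with the table below position n-1. -/
lemma table : ∀ p, p < n-1 → c p = tbl j p := by
  have S := smallsinc hn hj hjn hcn hper hinj hsurj hc0 hc1 hgc hgn hginj hgfix h321 h1432 h2143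
  have B := bigsinc hn hj hjn hcn hper hinj hsurj hc0 hc1 hgc hgn hginj hgfix h321 h1432 h2143
  have BI := Binc hn hj hjn hcn hper hinj hsurj hc0 hc1 hgc hgn hginj hgfix h321 h1432 h2143
  have OL := olinc hn hj hjn hcn hper hinj hsurj hc0 hc1 hgc hgn hginj hgfix h321 h1432 h2143
  have hlast := lastval hn hj hjn hcn hper hinj hsurj hc0 hc1 hgc hgn hginj hgfix h321 h1432 h2143
  intro p
  induction p using Nat.strong_induction_on with
  | _ p IH =>
  intro hp
  have hpn : p < n := by omega
  have hcpn : c p < n := hcn p hpn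
  -- helper: small value v sits at position 2v
  have htblsmall : ∀ v, v ≤ j-3 → 2*v < p → c (2*v) = v := by
    intro v h1 h2
    have := IH (2*v) h2 (by omega)
    rw [this]; unfold tbl; split_ifs <;> first | omega | (exfalso; tauto)
  have htblbig : ∀ t, t ≤ j-3 → 2*t+1 < p → c (2*t+1) = j-1+t := by
    intro t h1 h2
    have := IH (2*t+1) h2 (by omega)
    rw [this]; unfold tbl; split_ifs <;> first | omega | (exfalso; tauto)
  have htbltail : ∀ q, 2*j-4 ≤ q → q < p → c q = q+1 := by
    intro q h1 h2
    have := IH q h2 (by omega)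
    rw [this]; unfold tbl; split_ifs <;> first | omega | (exfalso; tauto)
  rcases Nat.eq_zero_or_pos p with rfl|hp0
  · rw [hc0]; unfold tbl; split_ifs <;> first | omega | (exfalso; tauto)
  rcases Nat.lt_or_ge p 2 with hp1|hp2
  · have : p = 1 := by omega
    subst this
    rw [hc1]; unfold tbl; split_ifs <;> first | omega | (exfalso; tauto)
  rcases Nat.lt_or_ge p (2*j-4) with hcaseAB|hcaseC
  · rcases Nat.even_or_odd p with ⟨v, hv⟩|⟨v, hv⟩
    · -- CASE A : p = 2v even, 2 ≤ p ≤ 2j-6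
      have hv : p = 2*v := by omega
      have hv1 : 1 ≤ v := by omega
      have hvj : v ≤ j-3 := by omega
      rcases Nat.lt_or_ge (c p) (j-1) with hsmall|hbig
      · -- small value: must be v
        have hge : v ≤ c p := by
          by_contra hcon
          push_neg at hcon
          have h1 : c (2*(c p)) = c p := htblsmall (c p) (by omega) (by omega)
          have := hinj (2*(c p)) (by omega) p hpn h1
          omega
        have hle : c p ≤ v := by
          by_contra hcon
          push_neg at hcon
          obtain ⟨q, hqn, hq⟩ := hsurj v (by omega)
          have hqp : q ≠ p := by intro h; rw [h] at hq; omega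
          rcases Nat.lt_or_ge q p with hlt|hgt
          · have h2 : tbl j q = v := by rw [← IH q hlt (by omega)]; exact hq
            unfold tbl at h2; split_ifs at h2 <;> first | omega | (exfalso; tauto)
          · have := S p q (by omega) hqn (by omega) (by omega)
            omega
        have : c p = v := by omega
        rw [this]; unfold tbl; split_ifs <;> first | omega | (exfalso; tauto)
      · -- big value: leads to contradiction
        exfalso
        have h1 : j+v-1 ≤ c p := by
          by_contra hcon
          push_neg at hcon
          have heq : c (2*(c p - (j-1))+1) = c p := by
            rw [htblbig (c p - (j-1)) (by omega) (by omega)]; omega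
          have := hinj (2*(c p - (j-1))+1) (by omega) p hpn heq
          omega
        have h2 : c p ≤ j+v-1 := by
          by_contra hcon
          push_neg at hcon
          obtain ⟨q, hqn, hq⟩ := hsurj (j+v-1) (by omega)
          have hqp : q ≠ p := by intro h; rw [h] at hq; omega
          have hqlast : q ≠ n-1 := by intro h; rw [h, hlast] at hq; omega
          rcases Nat.lt_or_ge q p with hlt|hgt
          · have h2 : tbl j q = j+v-1 := by rw [← IH q hlt (by omega)]; exact hq
            unfold tbl at h2; split_ifs at h2 <;> first | omega | (exfalso; tauto)
          · have := B p q (by omega) hqn (by omega) (by omega)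
            omega
        have hcp : c p = j+v-1 := by omega
        have hprev : c (p-1) = j+v-2 := by
          have h3 : 2*(v-1)+1 = p-1 := by omega
          have := htblbig (v-1) (by omega) (by omega)
          rw [h3] at this; rw [this]; omega
        have hgprev : g (j+v-2) = j+v-1 := by
          have := hgc (p-1)
          rw [hprev, (by omega : p-1+1 = p), hcp] at this
          exact this
        obtain ⟨qv, hqvn, hqv⟩ := hsurj v (by omega)
        have hqvp : p < qv := by
          rcases Nat.lt_or_ge qv p with hlt|hgt
          · exfalso
            have h4 : tbl j qv = v := by rw [← IH qv hlt (by omega)]; exact hqv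
            unfold tbl at h4; split_ifs at h4 <;> omega
          · have : qv ≠ p := by intro h; rw [h, hcp] at hqv; omega
            omega
        have hY : j+v-1 ≤ c (qv - 1) := by
          rcases Nat.eq_or_lt_of_le (by omega : p ≤ qv - 1) with heq|hgt
          · rw [← heq, hcp]
          · have hbigY : j-1 ≤ c (qv-1) := by
              by_contra hcon
              push_neg at hcon
              have h5 : c (qv-1) < v := by
                have := S (qv-1) qv (by omega) hqvn (by omega) (by omega)
                omega
              have h6 : c (2*(c (qv-1))) = c (qv-1) := htblsmall (c (qv-1)) (by omega) (by omega)
              have := hinj (2*(c (qv-1))) (by omega) (qv-1) (by omega) h6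
              omega
            by_contra hcon
            push_neg at hcon
            have heq2 : c (2*(c (qv-1) - (j-1))+1) = c (qv-1) := by
              rw [htblbig (c (qv-1) - (j-1)) (by omega) (by omega)]; omega
            have := hinj (2*(c (qv-1) - (j-1))+1) (by omega) (qv-1) (by omega) heq2
            omega
        have hgY : g (c (qv-1)) = v := by
          have := hgc (qv-1)
          rw [(by omega : qv-1+1 = qv), hqv] at this
          exact this
        obtain ⟨qr, hqrn, hqr⟩ := hsurj (v+1) (by omega)
        have hqr0 : qr ≠ 0 := by intro h; rw [h, hc0] at hqr; omega
        have hgY' : g (c (qr-1)) = v+1 := by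
          have := hgc (qr-1)
          rw [(by omega : qr-1+1 = qr), hqr] at this
          exact this
        have hYn : c (qv-1) < n := hcn (qv-1) (by omega)
        have hY'n : c (qr-1) < n := hcn (qr-1) (by omega)
        have hYY' : c (qv-1) < c (qr-1) := by
          rcases lt_trichotomy (c (qr-1)) (c (qv-1)) with hlt|heq|hgt
          · exfalso
            have := BI (c (qr-1)) (c (qv-1)) hlt hYn (by omega) (by omega)
            omega
          · exfalso; rw [heq, hgY] at hgY'; omega
          · exact hgt
        have hgv : j+v ≤ g v := by
          have h7 := OL v (by omega)
          have h8 : g v ≠ j+v-1 := by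
            intro h
            have := hginj v (by omega) (j+v-2) (by omega) (by rw [h, hgprev])
            omega
          omega
        exact h321 v (j+v-2) (c (qr-1)) (by omega) (by omega) hY'n
          (by rw [hgY', hgprev]; omega) (by rw [hgprev]; omega)
    · -- CASE B : p = 2t+1 odd, 3 ≤ p ≤ 2j-5
      have ht : p = 2*v+1 := by omega
      have htj : v ≤ j-3 := by omega
      have ht1 : 1 ≤ v := by omega
      rcases Nat.lt_or_ge (c p) (j-1) with hsmall|hbig
      · exfalso
        have hprev : c (p-1) = v := by
          have h3 : 2*v = p-1 := by omega
          have := htblsmall v (by omega) (by omega)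
          rw [h3] at this; exact this
        have hgt : g v = c p := by
          have := hgc (p-1)
          rw [hprev, (by omega : p-1+1 = p)] at this
          exact this
        have := OL v (by omega)
        omega
      · have h1 : j+v-1 ≤ c p := by
          by_contra hcon
          push_neg at hcon
          have heq : c (2*(c p - (j-1))+1) = c p := by
            rw [htblbig (c p - (j-1)) (by omega) (by omega)]; omega
          have := hinj (2*(c p - (j-1))+1) (by omega) p hpn heq
          omega
        have h2 : c p ≤ j+v-1 := by
          by_contra hcon
          push_neg at hcon
          obtain ⟨q, hqn, hq⟩ := hsurj (j+v-1) (by omega)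
          have hqp : q ≠ p := by intro h; rw [h] at hq; omega
          have hqlast : q ≠ n-1 := by intro h; rw [h, hlast] at hq; omega
          rcases Nat.lt_or_ge q p with hlt|hgt
          · have h2 : tbl j q = j+v-1 := by rw [← IH q hlt (by omega)]; exact hq
            unfold tbl at h2; split_ifs at h2 <;> first | omega | (exfalso; tauto)
          · have := B p q (by omega) hqn (by omega) (by omega)
            omega
        have : c p = j+v-1 := by omega
        rw [this]; unfold tbl; split_ifs <;> first | omega | (exfalso; tauto)
  · -- CASE C : p ≥ 2j-4, p < n-1, tail
    rcases Nat.lt_or_ge (c p) (j-1) with hsmall|hbig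
    · exfalso
      rcases Nat.lt_or_ge (c p) (j-2) with hlt|hge
      · have h6 : c (2*(c p)) = c p := htblsmall (c p) (by omega) (by omega)
        have := hinj (2*(c p)) (by omega) p hpn h6
        omega
      · have h7 : c p = j-2 := by omega
        have := hinj p hpn (n-1) (by omega) (by rw [h7, hlast])
        omega
    · have h1 : p+1 ≤ c p := by
        by_contra hcon
        push_neg at hcon
        rcases Nat.lt_or_ge (c p) (2*j-3) with hlt|hge
        · have heq : c (2*(c p - (j-1))+1) = c p := by
            rw [htblbig (c p - (j-1)) (by omega) (by omega)]; omega
          have := hinj (2*(c p - (j-1))+1) (by omega) p hpn heq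
          omega
        · have heq : c (c p - 1) = c p := by
            rw [htbltail (c p - 1) (by omega) (by omega)]; omega
          have := hinj (c p - 1) (by omega) p hpn heq
          omega
      have h2 : c p ≤ p+1 := by
        by_contra hcon
        push_neg at hcon
        obtain ⟨q, hqn, hq⟩ := hsurj (p+1) (by omega)
        have hqp : q ≠ p := by intro h; rw [h] at hq; omega
        have hqlast : q ≠ n-1 := by intro h; rw [h, hlast] at hq; omega
        rcases Nat.lt_or_ge q p with hlt|hgt
        · have h2 : tbl j q = p+1 := by rw [← IH q hlt (by omega)]; exact hq
          unfold tbl at h2; split_ifs at h2 <;> first | omega | (exfalso; tauto)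
        · have := B p q (by omega) hqn (by omega) (by omega)
          omega
      have : c p = p+1 := by omega
      rw [this]; unfold tbl; split_ifs <;> first | omega | (exfalso; tauto)

/-- main forward result in ℕ-land. -/
lemma mainfwd : 2*j-3 ≤ n ∧ ∀ p, p < n → c p = if p = n-1 then j-2 else tbl j p := by
  have T := table hn hj hjn hcn hper hinj hsurj hc0 hc1 hgc hgn hginj hgfix h321 h1432 h2143
  have OL := olinc hn hj hjn hcn hper hinj hsurj hc0 hc1 hgc hgn hginj hgfix h321 h1432 h2143
  have hlast := lastval hn hj hjn hcn hper hinj hsurj hc0 hc1 hgc hgn hginj hgfix h321 h1432 h2143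
  have h2j : 2*j-3 ≤ n := by
    by_contra hcon
    push_neg at hcon
    obtain ⟨q, hqn, hq⟩ := hsurj (j-3) (by omega)
    have hqlast : q ≠ n-1 := by intro h; rw [h, hlast] at hq; omega
    have h2 : tbl j q = j-3 := by rw [← T q (by omega)]; exact hq
    have hq26 : q = 2*j-6 := by
      unfold tbl at h2; split_ifs at h2 <;> first | omega | (exfalso; tauto)
    -- so n-2 ≥ 2j-6 and n ≤ 2j-4 forces n = 2j-4, q = n-2
    have hqn2 : q = n-2 := by omega
    have hgj3 : g (j-3) = j-2 := by
      have := hgc (n-2)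
      rw [(by omega : n-2+1 = n-1), hlast] at this
      rw [← this]
      congr 1
      rw [← hq, hqn2]
    have := OL (j-3) (by omega)
    omega
  refine ⟨h2j, ?_⟩
  intro p hpn
  rcases Nat.eq_or_lt_of_le (by omega : p ≤ n-1) with heq|hlt
  · rw [heq, hlast]; simp
  · rw [T p (by omega)]
    have : p ≠ n-1 := by omega
    simp [this]

end Fwd







namespace Plumb

lemma contains_delta3 {n : ℕ} (w : Fin n → Fin n) (a b c : Fin n)
    (hab : (a:ℕ) < b) (hbc : (b:ℕ) < c) (v1 : (w c : ℕ) < w b) (v2 : (w b : ℕ) < w a) :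
    PContains w (delta 3) := by
  refine ⟨fun s => if (s:ℕ) = 0 then a else if (s:ℕ) = 1 then b else c, ?_, ?_⟩
  · intro s t hst
    rw [Fin.lt_def] at hst ⊢
    have hs := s.isLt; have ht := t.isLt
    dsimp only
    split_ifs <;> omega
  · intro s t
    have hrev : ∀ u : Fin 3, ((delta 3 u) : ℕ) = 3 - ((u:ℕ)+1) := fun _ => rfl
    rw [Fin.lt_def, Fin.lt_def, hrev, hrev]
    have hs := s.isLt; have ht := t.isLt
    dsimp only
    split_ifs <;> omega

lemma contains_1432 {n : ℕ} (w : Fin n → Fin n) (a b c d : Fin n)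
    (hab : (a:ℕ) < b) (hbc : (b:ℕ) < c) (hcd : (c:ℕ) < d)
    (v1 : (w a : ℕ) < w d) (v2 : (w d : ℕ) < w c) (v3 : (w c : ℕ) < w b) :
    PContains w patt1432 := by
  refine ⟨fun s => if (s:ℕ) = 0 then a else if (s:ℕ) = 1 then b else
      if (s:ℕ) = 2 then c else d, ?_, ?_⟩
  · intro s t hst
    rw [Fin.lt_def] at hst ⊢
    have hs := s.isLt; have ht := t.isLt
    dsimp only
    split_ifs <;> omega
  · intro s t
    have hp : ∀ u : Fin 4, (patt1432 u : ℕ) =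
        if (u:ℕ) = 0 then 0 else if (u:ℕ) = 1 then 3 else if (u:ℕ) = 2 then 2 else 1 := by
      decide
    rw [Fin.lt_def, Fin.lt_def, hp, hp]
    have hs := s.isLt; have ht := t.isLt
    dsimp only
    split_ifs <;> omega

lemma extract_delta3 {n : ℕ} {w : Fin n → Fin n} (hav : PAvoids w (delta 3)) :
    ∀ a b c : Fin n, (a:ℕ) < b → (b:ℕ) < c → (w c : ℕ) < w b → (w b : ℕ) < w a → False :=
  fun a b c hab hbc v1 v2 => hav (contains_delta3 w a b c hab hbc v1 v2)

end Plumb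

namespace Wrap

theorem forward (n j : ℕ) (hn : 5 ≤ n) (hj : 4 ≤ j) (hjn : j ≤ n)
    (π : Equiv.Perm (Fin n)) (hπ : π ∈ AcircJ n 3 j) :
    2 * j - 3 ≤ n ∧ ∀ i : Fin n, (cycleForm π i : ℕ) + 1 = word10 n j i := by
  obtain ⟨⟨⟨hcycle, hsupp⟩, hav, hall⟩, hj0⟩ := hπ
  have hn0 : 0 < n := by omega
  set z0 : Fin n := ⟨0, hn0⟩ with hz0
  -- basic facts
  have hfix : ∀ x : Fin n, π x ≠ x := fun x =>
    Equiv.Perm.mem_support.mp (by rw [hsupp]; exact Finset.mem_univ x)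
  have horder : orderOf π = n := by
    rw [hcycle.orderOf, hsupp, Finset.card_univ, Fintype.card_fin]
  have hpown : π ^ n = 1 := by have := pow_orderOf_eq_one π; rwa [horder] at this
  -- the cycle word
  set cF : ℕ → Fin n := fun k => (π ^ k) z0 with hcF
  set c : ℕ → ℕ := fun k => ((cF k : Fin n) : ℕ) with hc
  set g : ℕ → ℕ := fun x => if h : x < n then ((π ⟨x, h⟩ : Fin n) : ℕ) else 0 with hg
  have hcFsucc : ∀ k, π (cF k) = cF (k + 1) := by
    intro k
    show π ((π ^ k) z0) = (π ^ (k+1)) z0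
    rw [pow_succ']
    rfl
  have hcFper : ∀ k, cF (k + n) = cF k := by
    intro k
    show (π ^ (k + n)) z0 = (π ^ k) z0
    rw [pow_add, hpown, mul_one]
  have hcn : ∀ k, k < n → c k < n := fun k _ => (cF k).isLt
  have hper : ∀ k, c (k + n) = c k := fun k => by
    show ((cF (k+n) : Fin n) : ℕ) = _
    rw [hcFper]
  have hcFinj : ∀ a, a < n → ∀ b, b < n → cF a = cF b → a = b := by
    have aux : ∀ a b, a ≤ b → b < n → cF a = cF b → a = b := by
      intro a b hab hbn heq
      have h1 : (π ^ (b - a)) (cF a) = cF a := by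
        show (π ^ (b-a)) ((π ^ a) z0) = (π ^ a) z0
        rw [← Equiv.Perm.mul_apply, ← pow_add, (by omega : b - a + a = b)]
        exact heq.symm
      have h2 : π ^ (b - a) = 1 :=
        (hcycle.pow_eq_one_iff' (hfix (cF a))).mpr h1
      have h3 := orderOf_dvd_of_pow_eq_one h2
      rw [horder] at h3
      have := Nat.eq_zero_of_dvd_of_lt h3
      omega
    intro a ha b hb heq
    rcases le_total a b with h|h
    · exact aux a b h hb heq
    · exact (aux b a h ha heq.symm).symm
  have hinj : ∀ a, a < n → ∀ b, b < n → c a = c b → a = b := by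
    intro a ha b hb heq
    exact hcFinj a ha b hb (Fin.ext heq)
  have hsurj : ∀ v, v < n → ∃ k, k < n ∧ c k = v := by
    intro v hv
    have hsc := hcycle.sameCycle (hfix z0) (hfix ⟨v, hv⟩)
    obtain ⟨i, hi, hieq⟩ := hsc.exists_pow_eq'
    rw [horder] at hi
    exact ⟨i, hi, by rw [hc]; simp only; rw [hcF]; simp only; rw [hieq]⟩
  have hc0 : c 0 = 0 := by
    show (((π ^ 0) z0 : Fin n) : ℕ) = 0
    rw [pow_zero]
    rfl
  have hc1 : c 1 = j - 1 := by
    have h5 := hj0 hn0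
    show (((π ^ 1) z0 : Fin n) : ℕ) = j - 1
    rw [pow_one]
    have h6 : π z0 = π ⟨0, hn0⟩ := rfl
    rw [h6]
    omega
  have hgc : ∀ k, g (c k) = c (k + 1) := by
    intro k
    show (if h : c k < n then ((π ⟨c k, h⟩ : Fin n) : ℕ) else 0) = c (k+1)
    rw [dif_pos ((cF k).isLt)]
    have : (⟨c k, (cF k).isLt⟩ : Fin n) = cF k := Fin.ext rfl
    rw [this, hcFsucc]
  have hgn : ∀ x, x < n → g x < n := by
    intro x hx
    show (if h : x < n then _ else 0) < n
    rw [dif_pos hx]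
    exact (π ⟨x, hx⟩).isLt
  have hginj : ∀ a, a < n → ∀ b, b < n → g a = g b → a = b := by
    intro a ha b hb heq
    simp only [hg, dif_pos ha, dif_pos hb] at heq
    have := π.injective (Fin.ext heq : π ⟨a, ha⟩ = π ⟨b, hb⟩)
    exact congrArg Fin.val this
  have hgfix : ∀ x, x < n → g x ≠ x := by
    intro x hx heq
    simp only [hg, dif_pos hx] at heq
    exact hfix ⟨x, hx⟩ (Fin.ext heq)
  have h321 : ∀ x y u, x < y → y < u → u < n → g u < g y → g y < g x → False := by
    intro x y u h1 h2 h3 h4 h5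
    simp only [hg, dif_pos (by omega : x < n), dif_pos (by omega : y < n), dif_pos h3] at h4 h5
    exact Plumb.extract_delta3 hav ⟨x, by omega⟩ ⟨y, by omega⟩ ⟨u, h3⟩ h1 h2 h4 h5
  have hwordeq : ∀ (m k : ℕ), (π ^ k) (cF m) = cF (k + m) := by
    intro m k
    show (π ^ k) ((π ^ m) z0) = (π ^ (k + m)) z0
    rw [← Equiv.Perm.mul_apply, ← pow_add]
  have h1432 : ∀ p1 p2 p3 p4, p1 < p2 → p2 < p3 → p3 < p4 → p4 < n →
      c p1 < c p4 → c p4 < c p3 → c p3 < c p2 → False := by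
    intro p1 p2 p3 p4 h12 h23 h34 h4n v1 v2 v3
    apply hall (cF p1)
    have e1 : (π ^ (0:ℕ)) (cF p1) = cF p1 := by
      rw [hwordeq]; congr 1; omega
    have e2 : (π ^ (p2 - p1)) (cF p1) = cF p2 := by
      rw [hwordeq]; congr 1; omega
    have e3 : (π ^ (p3 - p1)) (cF p1) = cF p3 := by
      rw [hwordeq]; congr 1; omega
    have e4 : (π ^ (p4 - p1)) (cF p1) = cF p4 := by
      rw [hwordeq]; congr 1; omega
    refine Plumb.contains_1432 _ ⟨0, by omega⟩ ⟨p2 - p1, by omega⟩ ⟨p3 - p1, by omega⟩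
      ⟨p4 - p1, by omega⟩ (by show (0:ℕ) < p2 - p1; omega)
      (by show p2 - p1 < p3 - p1; omega) (by show p3 - p1 < p4 - p1; omega) ?_ ?_ ?_
    · show ((π ^ (0:ℕ)) (cF p1) : ℕ) < ((π ^ (p4 - p1)) (cF p1) : ℕ)
      rw [e1, e4]; exact v1
    · show ((π ^ (p4 - p1)) (cF p1) : ℕ) < ((π ^ (p3 - p1)) (cF p1) : ℕ)
      rw [e4, e3]; exact v2
    · show ((π ^ (p3 - p1)) (cF p1) : ℕ) < ((π ^ (p2 - p1)) (cF p1) : ℕ)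
      rw [e3, e2]; exact v3
  have h2143 : ∀ p1 p2 p3 p4, p1 < p2 → p2 < p3 → p3 < p4 → p4 < n →
      c p2 < c p1 → c p1 < c p4 → c p4 < c p3 → False := by
    intro p1 p2 p3 p4 h12 h23 h34 h4n v1 v2 v3
    apply hall (cF p2)
    have e1 : (π ^ (0:ℕ)) (cF p2) = cF p2 := by
      rw [hwordeq]; congr 1; omega
    have e2 : (π ^ (p3 - p2)) (cF p2) = cF p3 := by
      rw [hwordeq]; congr 1; omega
    have e3 : (π ^ (p4 - p2)) (cF p2) = cF p4 := by
      rw [hwordeq]; congr 1; omega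
    have e4 : (π ^ (n - p2 + p1)) (cF p2) = cF p1 := by
      rw [hwordeq]
      have h9 : n - p2 + p1 + p2 = p1 + n := by omega
      rw [h9, hcFper]
    refine Plumb.contains_1432 _ ⟨0, by omega⟩ ⟨p3 - p2, by omega⟩ ⟨p4 - p2, by omega⟩
      ⟨n - p2 + p1, by omega⟩ (by show (0:ℕ) < p3 - p2; omega)
      (by show p3 - p2 < p4 - p2; omega) (by show p4 - p2 < n - p2 + p1; omega) ?_ ?_ ?_
    · show ((π ^ (0:ℕ)) (cF p2) : ℕ) < ((π ^ (n - p2 + p1)) (cF p2) : ℕ)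
      rw [e1, e4]; exact v1
    · show ((π ^ (n - p2 + p1)) (cF p2) : ℕ) < ((π ^ (p4 - p2)) (cF p2) : ℕ)
      rw [e4, e3]; exact v2
    · show ((π ^ (p4 - p2)) (cF p2) : ℕ) < ((π ^ (p3 - p2)) (cF p2) : ℕ)
      rw [e3, e2]; exact v3
  have main := Fwd.mainfwd hn hj hjn hcn hper hinj hsurj hc0 hc1 hgc hgn hginj hgfix
    h321 h1432 h2143
  refine ⟨main.1, ?_⟩
  intro i
  have hcf : cycleForm π i = cF (i : ℕ) := rfl
  have h2 := main.2 (i : ℕ) i.isLt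
  have h3 := Stmt10Aux.tbl_word10 hn hj main.1 (i : ℕ) i.isLt
  rw [hcf]
  show c (i : ℕ) + 1 = word10 n j (i : ℕ)
  rw [h2, ← h3]

end Wrap


namespace Conv
open Stmt10Aux

theorem converse (n j : ℕ) (hn : 5 ≤ n) (hj : 4 ≤ j) (hjn : j ≤ n) (h2j : 2*j-3 ≤ n) :
    ∃ π : Equiv.Perm (Fin n), π ∈ AcircJ n 3 j ∧
      ∀ i : Fin n, (cycleForm π i : ℕ) + 1 = word10 n j i := by
  have hn0 : 0 < n := by omega
  set z0 : Fin n := ⟨0, hn0⟩ with hz0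
  set F : Fin n → Fin n := fun x => ⟨OLd n j (x : ℕ), OLd_lt hn hj h2j (x:ℕ) x.isLt⟩ with hF
  have Finj : Function.Injective F := by
    intro a b h
    have h2 : OLd n j (a:ℕ) = OLd n j (b:ℕ) := congrArg Fin.val h
    exact Fin.ext (OLd_inj hn hj h2j (a:ℕ) a.isLt (b:ℕ) b.isLt h2)
  set π : Equiv.Perm (Fin n) := Equiv.ofBijective F (Finite.injective_iff_bijective.mp Finj)
    with hπdef
  have hπval : ∀ x : Fin n, (π x : ℕ) = OLd n j (x : ℕ) := fun x => rfl
  -- powers applied to z0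
  have hpow : ∀ k, k < n → (((π ^ k) z0 : Fin n) : ℕ) = Wd n j k := by
    intro k
    induction k with
    | zero =>
      intro _
      rw [Wd0 hn hj h2j, pow_zero]
      rfl
    | succ k ih =>
      intro hk
      have h1 : (π ^ (k+1)) z0 = π ((π ^ k) z0) := by rw [pow_succ']; rfl
      rw [h1, hπval, ih (by omega), Wstep hn hj h2j k hk]
  have hpownz : (π ^ n) z0 = z0 := by
    have h0 : π ^ n = π * π ^ (n-1) := by
      rw [← pow_succ']; congr 1; omega
    have h1 : (π ^ n) z0 = π ((π ^ (n-1)) z0) := by rw [h0]; rfl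
    apply Fin.ext
    rw [h1, hπval, hpow (n-1) (by omega), Wwrap hn hj h2j]
  have hpowfull : ∀ k, (((π ^ k) z0 : Fin n) : ℕ) = Wd n j (k % n) := by
    intro k
    induction k using Nat.strong_induction_on with
    | _ k ih =>
    rcases Nat.lt_or_ge k n with h|h
    · rw [Nat.mod_eq_of_lt h]; exact hpow k h
    · have h1 : (π ^ k) z0 = (π ^ (k - n)) z0 := by
        have : π ^ k = π ^ (k - n) * π ^ n := by
          rw [← pow_add]; congr 1; omega
        rw [this, Equiv.Perm.mul_apply, hpownz]
      rw [h1, ih (k-n) (by omega), Nat.mod_eq_sub_mod h]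
  -- cyclicity
  have hcyc : IsNCycle π := by
    constructor
    · refine ⟨z0, ?_, ?_⟩
      · intro h
        have h2 := congrArg Fin.val h
        rw [hπval] at h2
        have h3 : OLd n j 0 = j - 1 := by
          have := Wstep hn hj h2j 0 (by omega)
          rwa [Wd0 hn hj h2j, Wd1 hn hj h2j] at this
        have h4 : ((z0 : Fin n) : ℕ) = 0 := rfl
        rw [h4, h3] at h2
        omega
      · intro y hy
        refine ⟨(Vd n j (y:ℕ) : ℤ), ?_⟩
        rw [zpow_natCast]
        apply Fin.ext
        rw [hpow (Vd n j (y:ℕ)) (WVd hn hj h2j (y:ℕ) y.isLt).1]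
        exact (WVd hn hj h2j (y:ℕ) y.isLt).2
    · apply Finset.eq_univ_iff_forall.mpr
      intro x
      rw [Equiv.Perm.mem_support]
      intro h
      have h2 := congrArg Fin.val h
      rw [hπval] at h2
      exact OLd_ne hn hj h2j (x:ℕ) x.isLt h2
  -- one-line notation avoids 321
  have hOL : PAvoids (fun i => π i) (delta 3) := by
    rintro ⟨f, hf, hiff⟩
    have m01 : ((f 0 : Fin n) : ℕ) < ((f 1 : Fin n) : ℕ) := hf (by decide : (0:Fin 3) < 1)
    have m12 : ((f 1 : Fin n) : ℕ) < ((f 2 : Fin n) : ℕ) := hf (by decide : (1:Fin 3) < 2)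
    have w10 : OLd n j ((f 1 : Fin n) : ℕ) < OLd n j ((f 0 : Fin n) : ℕ) := by
      have := (hiff 1 0).mp (by decide)
      dsimp only at this
      rwa [Fin.lt_def, hπval, hπval] at this
    have w21 : OLd n j ((f 2 : Fin n) : ℕ) < OLd n j ((f 1 : Fin n) : ℕ) := by
      have := (hiff 2 1).mp (by decide)
      dsimp only at this
      rwa [Fin.lt_def, hπval, hπval] at this
    rcases le_or_gt (OLd n j ((f 0 : Fin n) : ℕ)) (j-2) with s0|s0
    · have := OK1 hn hj h2j ((f 0 : Fin n) : ℕ) ((f 1 : Fin n) : ℕ) m01 (f 1).isLt s0 (by omega)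
      omega
    · rcases le_or_gt (OLd n j ((f 1 : Fin n) : ℕ)) (j-2) with s1|s1
      · rcases le_or_gt (OLd n j ((f 2 : Fin n) : ℕ)) (j-2) with s2|s2
        · have := OK1 hn hj h2j ((f 1 : Fin n) : ℕ) ((f 2 : Fin n) : ℕ) m12 (f 2).isLt s1 s2
          omega
        · omega
      · have := OK2 hn hj h2j ((f 0 : Fin n) : ℕ) ((f 1 : Fin n) : ℕ) m01 (f 1).isLt
          (by omega) (by omega)
        omega
  -- all cycle forms avoid 1432
  have hall : AllCycleFormsAvoid π patt1432 := by
    intro x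
    rintro ⟨f, hf, hiff⟩
    obtain ⟨hmlt, hmeq⟩ := WVd hn hj h2j (x:ℕ) x.isLt
    set m : ℕ := Vd n j (x:ℕ) with hm
    have hx : (π ^ m) z0 = x := Fin.ext (by rw [hpow m hmlt]; exact hmeq)
    have hword : ∀ i : Fin n, (((π ^ (i:ℕ)) x : Fin n) : ℕ) = Wd n j (((i:ℕ) + m) % n) := by
      intro i
      rw [← hx, ← Equiv.Perm.mul_apply, ← pow_add, hpowfull]
    have m01 : ((f 0 : Fin n) : ℕ) < ((f 1 : Fin n) : ℕ) := hf (by decide : (0:Fin 4) < 1)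
    have m12 : ((f 1 : Fin n) : ℕ) < ((f 2 : Fin n) : ℕ) := hf (by decide : (1:Fin 4) < 2)
    have m23 : ((f 2 : Fin n) : ℕ) < ((f 3 : Fin n) : ℕ) := hf (by decide : (2:Fin 4) < 3)
    have v03 : Wd n j ((((f 0 : Fin n):ℕ) + m) % n) < Wd n j ((((f 3 : Fin n):ℕ) + m) % n) := by
      have := (hiff 0 3).mp (by decide)
      dsimp only at this
      rwa [Fin.lt_def, hword, hword] at this
    have v32 : Wd n j ((((f 3 : Fin n):ℕ) + m) % n) < Wd n j ((((f 2 : Fin n):ℕ) + m) % n) := by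
      have := (hiff 3 2).mp (by decide)
      dsimp only at this
      rwa [Fin.lt_def, hword, hword] at this
    have v21 : Wd n j ((((f 2 : Fin n):ℕ) + m) % n) < Wd n j ((((f 1 : Fin n):ℕ) + m) % n) := by
      have := (hiff 2 1).mp (by decide)
      dsimp only at this
      rwa [Fin.lt_def, hword, hword] at this
    have hb0 := (f 0).isLt; have hb1 := (f 1).isLt
    have hb2 := (f 2).isLt; have hb3 := (f 3).isLt
    have tri : ∀ a b c', a < b → b < c' → c' < n → Wd n j c' < Wd n j b →
        Wd n j b < Wd n j a → False := by
      intro a b c' h1 h2 h3 u1 u2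
      rcases le_or_gt (Wd n j a) (j-2) with t0|t0
      · have := K1 hn hj h2j a b h1 (by omega) t0 (by omega); omega
      · rcases le_or_gt (Wd n j b) (j-2) with t1|t1
        · rcases le_or_gt (Wd n j c') (j-2) with t2|t2
          · have := K1 hn hj h2j b c' h2 h3 t1 t2; omega
          · omega
        · have := K2 hn hj h2j a b h1 (by omega) (by omega) (by omega); omega
    have desc : ∀ a b, a < b → b < n → Wd n j b < Wd n j a →
        j-1 ≤ Wd n j a ∧ Wd n j b ≤ j-2 := by
      intro a b h1 h2 u1
      rcases le_or_gt (Wd n j a) (j-2) with t0|t0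
      · rcases le_or_gt (Wd n j b) (j-2) with t1|t1
        · have := K1 hn hj h2j a b h1 h2 t0 t1; omega
        · omega
      · rcases le_or_gt (Wd n j b) (j-2) with t1|t1
        · omega
        · have := K2 hn hj h2j a b h1 h2 (by omega) (by omega); omega
    -- mod reductions
    have hmod : ∀ y : ℕ, y < n → (y + m) % n = if y + m < n then y + m else y + m - n := by
      intro y hy
      rcases Nat.lt_or_ge (y + m) n with h|h
      · rw [if_pos h, Nat.mod_eq_of_lt h]
      · rw [if_neg (by omega), Nat.mod_eq_sub_mod h, Nat.mod_eq_of_lt (by omega)]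
    by_cases hP0 : ((f 0 : Fin n):ℕ) + m < n <;>
    by_cases hP1 : ((f 1 : Fin n):ℕ) + m < n <;>
    by_cases hP2 : ((f 2 : Fin n):ℕ) + m < n <;>
    by_cases hP3 : ((f 3 : Fin n):ℕ) + m < n
    -- 1111 (no wraps)
    · rw [hmod _ hb1, if_pos hP1, hmod _ hb2, if_pos hP2] at v21
      rw [hmod _ hb2, if_pos hP2, hmod _ hb3, if_pos hP3] at v32
      exact tri _ _ _ (by omega) (by omega) (by omega) v32 v21
    -- 1110 (f3 wraps)
    · rw [hmod _ hb1, if_pos hP1, hmod _ hb2, if_pos hP2] at v21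
      rw [hmod _ hb3, if_neg hP3, hmod _ hb2, if_pos hP2] at v32
      rw [hmod _ hb0, if_pos hP0, hmod _ hb3, if_neg hP3] at v03
      have d1 := desc _ _ (by omega : ((f 3 : Fin n):ℕ) + m - n < ((f 0 : Fin n):ℕ) + m)
        (by omega) v03
      have d2 := desc _ _ (by omega : ((f 1 : Fin n):ℕ) + m < ((f 2 : Fin n):ℕ) + m)
        (by omega) v21
      omega
    -- 1101 impossible (f2 wraps, f3 doesn't)
    · omega
    -- 1100 (f2, f3 wrap)
    · rw [hmod _ hb2, if_neg hP2, hmod _ hb3, if_neg hP3] at v32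
      rw [hmod _ hb0, if_pos hP0, hmod _ hb3, if_neg hP3] at v03
      have d1 := desc _ _ (by omega : ((f 2 : Fin n):ℕ) + m - n < ((f 3 : Fin n):ℕ) + m - n)
        (by omega) v32
      have d2 := desc _ _ (by omega : ((f 3 : Fin n):ℕ) + m - n < ((f 0 : Fin n):ℕ) + m)
        (by omega) v03
      omega
    · omega
    · omega
    · omega
    -- 1000 (f1, f2, f3 wrap)
    · rw [hmod _ hb1, if_neg hP1, hmod _ hb2, if_neg hP2] at v21
      rw [hmod _ hb2, if_neg hP2, hmod _ hb3, if_neg hP3] at v32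
      exact tri _ _ _ (by omega : ((f 1 : Fin n):ℕ) + m - n < ((f 2 : Fin n):ℕ) + m - n)
        (by omega) (by omega) v32 v21
    · omega
    · omega
    · omega
    · omega
    · omega
    · omega
    · omega
    -- 0000 (all wrap)
    · rw [hmod _ hb1, if_neg hP1, hmod _ hb2, if_neg hP2] at v21
      rw [hmod _ hb2, if_neg hP2, hmod _ hb3, if_neg hP3] at v32
      exact tri _ _ _ (by omega : ((f 1 : Fin n):ℕ) + m - n < ((f 2 : Fin n):ℕ) + m - n)
        (by omega) (by omega) v32 v21
  refine ⟨π, ⟨⟨hcyc, hOL, hall⟩, ?_⟩, ?_⟩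
  · intro h
    have h3 : OLd n j 0 = j - 1 := by
      have := Wstep hn hj h2j 0 (by omega)
      rwa [Wd0 hn hj h2j, Wd1 hn hj h2j] at this
    have h4 : (π ⟨0, h⟩ : ℕ) = OLd n j 0 := hπval ⟨0, h⟩
    rw [h4, h3]
    omega
  · intro i
    have h1 : (cycleForm π i : ℕ) = (((π ^ (i:ℕ)) z0 : Fin n) : ℕ) := rfl
    rw [h1, hpow (i:ℕ) i.isLt]
    exact Wd_word10 hn hj h2j (i:ℕ) i.isLt

end Conv

/-- From the proof of Lemma 2.7: for `n ≥ 5` and `4 ≤ j ≤ n`, every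
`π ∈ A_{n,j}^∘(δ_3;1432)` satisfies `2j - 3 ≤ n` and has
`C(π) = (1, j, 2, j+1, 3, j+2, …, j-2, 2j-3, 2j-2, …, n, j-1)`; conversely,
whenever `2j - 3 ≤ n` this cycle form defines such a permutation. -/
theorem stmt10 (n j : ℕ) (hn : 5 ≤ n) (hj : 4 ≤ j) (hjn : j ≤ n) :
    (∀ π : Equiv.Perm (Fin n), π ∈ AcircJ n 3 j →
      2 * j - 3 ≤ n ∧ ∀ i : Fin n, (cycleForm π i : ℕ) + 1 = word10 n j i) ∧
    (2 * j - 3 ≤ n → ∃ π : Equiv.Perm (Fin n), π ∈ AcircJ n 3 j ∧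
      ∀ i : Fin n, (cycleForm π i : ℕ) + 1 = word10 n j i) := by
  constructor
  · intro π hπ
    exact Wrap.forward n j hn hj hjn π hπ
  · intro h2j
    exact Conv.converse n j hn hj hjn h2j
end
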